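/- arXiv:1205.0676 — 3 statements merged into one kernel-verified Lean document; each statement's English description precedes it below -/
import Mathlib

section
/- Let Γ = Γ₁ ∪ Γ₂ be a union of full subgraphs sharing no edges with V(Γ₁) ∩ V(Γ₂) = {a}, a a source or sink. Let f₁, f₂ be nonzero weight functions on Γ₁, Γ₂ and f their common extension to Γ. Then the representation R_f of HK_Γ is effective if and only if both R_{f₁} of HK_{Γ₁} and R_{f₂} of HK_{Γ₂} are effective. -/
/-- One-step Hecke-Kiselman edge relations for a directed graph with edge relation `E`. -/
def HKRel {V : Type*} (E : V → V → Prop) : FreeMonoid V → FreeMonoid V → Prop := fun a b =>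
  (∃ x : V, a = FreeMonoid.of x * FreeMonoid.of x ∧ b = FreeMonoid.of x) ∨
  (∃ x y : V, x ≠ y ∧ ¬ E x y ∧ ¬ E y x ∧
    a = FreeMonoid.of x * FreeMonoid.of y ∧ b = FreeMonoid.of y * FreeMonoid.of x) ∨
  (∃ x y : V, E x y ∧ ¬ E y x ∧
    a = FreeMonoid.of x * FreeMonoid.of y * FreeMonoid.of x ∧
    b = FreeMonoid.of y * FreeMonoid.of x * FreeMonoid.of y) ∨
  (∃ x y : V, E x y ∧ ¬ E y x ∧
    a = FreeMonoid.of x * FreeMonoid.of y * FreeMonoid.of x ∧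
    b = FreeMonoid.of x * FreeMonoid.of y) ∨
  (∃ x y : V, E x y ∧ E y x ∧
    a = FreeMonoid.of x * FreeMonoid.of y * FreeMonoid.of x ∧
    b = FreeMonoid.of y * FreeMonoid.of x * FreeMonoid.of y)

/-- The congruence on the free monoid generated by the Hecke-Kiselman relations. -/
def HKCon {V : Type*} (E : V → V → Prop) : Con (FreeMonoid V) := conGen (HKRel E)

/-- The Hecke-Kiselman monoid of the directed graph `(V, E)`. -/
def HK {V : Type*} (E : V → V → Prop) := (HKCon E).Quotient

instance {V : Type*} (E : V → V → Prop) : Monoid (HK E) :=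
  inferInstanceAs (Monoid (HKCon E).Quotient)

/-- The canonical quotient map. -/
def HKmk {V : Type*} (E : V → V → Prop) : FreeMonoid V →* HK E := (HKCon E).mk'

/-- The content of an element: vertices occurring in some representing word. -/
def elemContent {V : Type*} (E : V → V → Prop) (x : HK E) : Set V :=
  {v | ∃ w : FreeMonoid V, HKmk E w = x ∧ v ∈ FreeMonoid.toList w}

open scoped Classical

/-- The atomic endomorphism `θ_x` of the free module `V →₀ R`:
`θ_x(y) = y` for `y ≠ x`, and `θ_x(x) = Σ_{z → x} f z x • z`. -/
noncomputable def theta {V : Type*} [Fintype V] {R : Type*} [CommRing R]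
    (E : V → V → Prop) (f : V → V → R) (x : V) : Module.End R (V →₀ R) :=
  Finsupp.lsum R fun y =>
    if y = x then ∑ z : V, if E z x then f z x • (Finsupp.lsingle z : R →ₗ[R] V →₀ R) else 0
    else Finsupp.lsingle y

/-- The representation of the free monoid on words, sending a word to the composition of
the atomic endomorphisms of its letters. -/
noncomputable def Rword {V : Type*} [Fintype V] {R : Type*} [CommRing R]
    (E : V → V → Prop) (f : V → V → R) : FreeMonoid V →* Module.End R (V →₀ R) :=
  FreeMonoid.lift (theta E f)

section Basics

open FreeMonoid

variable {V : Type*} [Fintype V] {R : Type*} [CommRing R]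
variable (E : V → V → Prop) (f : V → V → R)

lemma theta_single_ne (x y : V) (h : y ≠ x) (r : R) :
    theta E f x (Finsupp.single y r) = Finsupp.single y r := by
  rw [theta, Finsupp.lsum_single, if_neg h, Finsupp.lsingle_apply]

lemma theta_single_self (x : V) (r : R) :
    theta E f x (Finsupp.single x r) =
      ∑ z : V, if E z x then f z x • Finsupp.single z r else 0 := by
  rw [theta, Finsupp.lsum_single, if_pos rfl, LinearMap.sum_apply]
  refine Finset.sum_congr rfl fun z _ => ?_
  split <;> simp

lemma Rword_of (x : V) : Rword E f (FreeMonoid.of x) = theta E f x :=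
  FreeMonoid.lift_eval_of _ _

lemma Rword_cons (x : V) (w : FreeMonoid V) (v : V →₀ R) :
    Rword E f (FreeMonoid.of x * w) v = theta E f x (Rword E f w v) := by
  rw [map_mul, Rword_of]; rfl

lemma Rword_snoc (x : V) (w : FreeMonoid V) (v : V →₀ R) :
    Rword E f (w * FreeMonoid.of x) v = Rword E f w (theta E f x v) := by
  rw [map_mul, Rword_of]; rfl

lemma sum_subtype_zero_off {M : Type*} [AddCommMonoid M] (S : Set V) (g : V → M)
    (hg : ∀ z, z ∉ S → g z = 0) : ∑ t : ↥S, g ↑t = ∑ z : V, g z := by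
  have h1 : ∑ z ∈ S.toFinset, g z = ∑ t : ↥S, g ↑t :=
    Finset.sum_subtype S.toFinset (fun x => Set.mem_toFinset) g
  have h2 : ∑ z ∈ S.toFinset, g z = ∑ z ∈ Finset.univ, g z :=
    Finset.sum_subset (Finset.subset_univ _) fun x _ hx => hg x (by simpa using hx)
  exact h1.symm.trans h2

end Basics
section Proj

variable {V : Type*} (S : Set V)

/-- Word-level projection deleting the letters outside `S`. -/
noncomputable def projWord : FreeMonoid V →* FreeMonoid ↥S :=
  FreeMonoid.lift fun v => if h : v ∈ S then FreeMonoid.of (⟨v, h⟩ : ↥S) else 1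

variable {S}

lemma projWord_of_mem {v : V} (h : v ∈ S) :
    projWord S (FreeMonoid.of v) = FreeMonoid.of (⟨v, h⟩ : ↥S) := by
  rw [projWord, FreeMonoid.lift_eval_of, dif_pos h]

lemma projWord_of_not {v : V} (h : v ∉ S) : projWord S (FreeMonoid.of v) = 1 := by
  rw [projWord, FreeMonoid.lift_eval_of, dif_neg h]

end Proj

section Maps

open FreeMonoid

variable {V : Type*} [Fintype V] {R : Type*} [CommRing R]
variable (E : V → V → Prop) (f : V → V → R) (S : Set V)

/-- Restriction of coordinates to `S`. -/
noncomputable def qmap : (V →₀ R) →ₗ[R] (↥S →₀ R) :=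
  Finsupp.lsum R fun v =>
    if h : v ∈ S then (Finsupp.lsingle (⟨v, h⟩ : ↥S) : R →ₗ[R] ↥S →₀ R) else 0

/-- Extension of coordinates from `S`. -/
noncomputable def emap : (↥S →₀ R) →ₗ[R] (V →₀ R) :=
  Finsupp.lsum R fun s => Finsupp.lsingle (s : V)

variable {S}

lemma qmap_single_mem {v : V} (h : v ∈ S) (r : R) :
    qmap (R := R) S (Finsupp.single v r) = Finsupp.single (⟨v, h⟩ : ↥S) r := by
  rw [qmap, Finsupp.lsum_single, dif_pos h, Finsupp.lsingle_apply]

lemma qmap_single_not {v : V} (h : v ∉ S) (r : R) :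
    qmap (R := R) S (Finsupp.single v r) = 0 := by
  rw [qmap, Finsupp.lsum_single, dif_neg h, LinearMap.zero_apply]

lemma emap_single (s : ↥S) (r : R) :
    emap (R := R) S (Finsupp.single s r) = Finsupp.single (s : V) r := by
  rw [emap, Finsupp.lsum_single, Finsupp.lsingle_apply]

lemma qmap_emap_single (s : ↥S) (r : R) :
    qmap (R := R) S (emap (R := R) S (Finsupp.single s r)) = Finsupp.single s r := by
  rw [emap_single, qmap_single_mem s.2, Subtype.coe_eta]

lemma qmap_apply (y : V →₀ R) (s : ↥S) : qmap (R := R) S y s = y ↑s := by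
  induction y using Finsupp.induction_linear with
  | zero => simp
  | add u v hu hv => rw [map_add, Finsupp.add_apply, hu, hv, Finsupp.add_apply]
  | single u r =>
    by_cases h : u ∈ S
    · rw [qmap_single_mem h]
      simp [Finsupp.single_apply, Subtype.ext_iff]
    · rw [qmap_single_not h]
      have : u ≠ ↑s := fun he => h (he ▸ s.2)
      simp [Finsupp.single_apply, this]

lemma qmap_theta_mem {x : V} (hx : x ∈ S) :
    (qmap (R := R) S).comp (theta E f x) =
      (theta (fun u v : ↥S => E ↑u ↑v) (fun u v : ↥S => f ↑u ↑v) ⟨x, hx⟩).comp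
        (qmap (R := R) S) := by
  apply Finsupp.lhom_ext
  intro y r
  simp only [LinearMap.comp_apply]
  by_cases hyx : y = x
  · subst hyx
    rw [theta_single_self, qmap_single_mem hx, theta_single_self, map_sum]
    have e1 : ∀ z : V, qmap (R := R) S (if E z y then f z y • Finsupp.single z r else 0) =
        (if h : z ∈ S then (if E z y then f z y • Finsupp.single (⟨z, h⟩ : ↥S) r else 0)
          else 0) := by
      intro z
      by_cases h : z ∈ S
      · rw [dif_pos h]
        split
        · rw [map_smul, qmap_single_mem h]
        · rw [map_zero]
      · rw [dif_neg h]
        split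
        · rw [map_smul, qmap_single_not h, smul_zero]
        · rw [map_zero]
    have e2 : ∀ t : ↥S,
        (if E ↑t ↑(⟨y, hx⟩ : ↥S) then f ↑t ↑(⟨y, hx⟩ : ↥S) • Finsupp.single t r else 0) =
        (if h : (↑t : V) ∈ S then
          (if E ↑t y then f ↑t y • Finsupp.single (⟨↑t, h⟩ : ↥S) r else 0) else 0) := by
      intro t
      rw [dif_pos t.2, Subtype.coe_eta]
    calc ∑ z : V, qmap (R := R) S (if E z y then f z y • Finsupp.single z r else 0)
        = ∑ z : V, (if h : z ∈ S then
            (if E z y then f z y • Finsupp.single (⟨z, h⟩ : ↥S) r else 0) else 0) :=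
          Finset.sum_congr rfl fun z _ => e1 z
      _ = ∑ t : ↥S, (if E ↑t ↑(⟨y, hx⟩ : ↥S) then f ↑t ↑(⟨y, hx⟩ : ↥S) • Finsupp.single t r
            else 0) := by
          rw [← sum_subtype_zero_off S _ (fun z hz => dif_neg hz)]
          exact Finset.sum_congr rfl fun t _ => (e2 t).symm
  · rw [theta_single_ne _ _ _ _ hyx]
    by_cases h : y ∈ S
    · rw [qmap_single_mem h]
      exact (theta_single_ne _ _ _ _ (fun he => hyx (congrArg Subtype.val he)) _).symm
    · rw [qmap_single_not h]
      exact (map_zero _).symm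

lemma qmap_theta_not {x : V} (hx : x ∉ S) (hout : ∀ z, E z x → z ∉ S) :
    (qmap (R := R) S).comp (theta E f x) = qmap (R := R) S := by
  apply Finsupp.lhom_ext
  intro y r
  simp only [LinearMap.comp_apply]
  by_cases hyx : y = x
  · subst hyx
    rw [theta_single_self, map_sum, qmap_single_not hx]
    refine Finset.sum_eq_zero fun z _ => ?_
    split
    · rw [map_smul, qmap_single_not (hout z (by assumption)), smul_zero]
    · rw [map_zero]
  · rw [theta_single_ne _ _ _ _ hyx]

lemma theta_emap_mem {x : V} (hx : x ∈ S) (hin : ∀ z, E z x → z ∈ S) :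
    (theta E f x).comp (emap (R := R) S) =
      (emap (R := R) S).comp
        (theta (fun u v : ↥S => E ↑u ↑v) (fun u v : ↥S => f ↑u ↑v) ⟨x, hx⟩) := by
  apply Finsupp.lhom_ext
  intro s r
  simp only [LinearMap.comp_apply, emap_single]
  by_cases hsx : s = (⟨x, hx⟩ : ↥S)
  · subst hsx
    rw [theta_single_self, theta_single_self, map_sum]
    have e2 : ∀ t : ↥S,
        emap (R := R) S (if E ↑t ↑(⟨x, hx⟩ : ↥S) then
            f ↑t ↑(⟨x, hx⟩ : ↥S) • Finsupp.single t r else 0) =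
        (if E ↑t x then f ↑t x • Finsupp.single (↑t : V) r else 0) := by
      intro t
      show emap (R := R) S (if E ↑t x then f ↑t x • Finsupp.single t r else 0) = _
      split
      · rw [map_smul, emap_single]
      · rw [map_zero]
    rw [Finset.sum_congr rfl fun t _ => e2 t]
    rw [sum_subtype_zero_off S (fun z => if E z x then f z x • Finsupp.single z r else 0)
      (fun z hz => if_neg (fun he => hz (hin z he)))]
  · have : (↑s : V) ≠ x := fun he => hsx (Subtype.ext he)
    rw [theta_single_ne _ _ _ _ this, theta_single_ne _ _ _ _ hsx, emap_single]

lemma theta_emap_not {x : V} (hx : x ∉ S) :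
    (theta E f x).comp (emap (R := R) S) = emap (R := R) S := by
  apply Finsupp.lhom_ext
  intro s r
  simp only [LinearMap.comp_apply, emap_single]
  exact theta_single_ne E f x ↑s (fun he => hx (he ▸ s.2)) r

lemma qmap_rword (hout : ∀ x, x ∉ S → ∀ z, E z x → z ∉ S) (w : FreeMonoid V) :
    (qmap (R := R) S).comp (Rword E f w) =
      (Rword (fun u v : ↥S => E ↑u ↑v) (fun u v : ↥S => f ↑u ↑v) (projWord S w)).comp
        (qmap (R := R) S) := by
  induction w using FreeMonoid.recOn with
  | one => simp only [map_one, Module.End.one_eq_id, LinearMap.id_comp, LinearMap.comp_id]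
  | of_mul x w ih =>
    rw [map_mul, map_mul, Rword_of, Module.End.mul_eq_comp, ← LinearMap.comp_assoc]
    by_cases hx : x ∈ S
    · rw [qmap_theta_mem E f hx, LinearMap.comp_assoc, ih, projWord_of_mem hx, map_mul,
        Rword_of, Module.End.mul_eq_comp, LinearMap.comp_assoc]
    · rw [qmap_theta_not E f hx (hout x hx), ih, projWord_of_not hx, one_mul]

lemma rword_emap (hin : ∀ x, x ∈ S → ∀ z, E z x → z ∈ S) (w : FreeMonoid V) :
    (Rword E f w).comp (emap (R := R) S) =
      (emap (R := R) S).comp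
        (Rword (fun u v : ↥S => E ↑u ↑v) (fun u v : ↥S => f ↑u ↑v) (projWord S w)) := by
  induction w using FreeMonoid.recOn with
  | one => simp only [map_one, Module.End.one_eq_id, LinearMap.id_comp, LinearMap.comp_id]
  | of_mul x w ih =>
    rw [map_mul, map_mul, Rword_of, Module.End.mul_eq_comp, LinearMap.comp_assoc, ih,
      ← LinearMap.comp_assoc]
    by_cases hx : x ∈ S
    · rw [theta_emap_mem E f hx (hin x hx), projWord_of_mem hx, map_mul, Rword_of,
        Module.End.mul_eq_comp, LinearMap.comp_assoc]
    · rw [theta_emap_not E f hx, projWord_of_not hx, one_mul]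

end Maps
section Detect

open FreeMonoid

variable {V : Type*} [Fintype V] {R : Type*} [CommRing R]
variable (E : V → V → Prop) (f : V → V → R)

lemma lapply_theta (b : V) (hb : ∀ z, ¬ E b z) (x : V) :
    (Finsupp.lapply b).comp (theta E f x : (V →₀ R) →ₗ[R] (V →₀ R)) =
      if x = b then 0 else Finsupp.lapply b := by
  apply Finsupp.lhom_ext
  intro y r
  simp only [LinearMap.comp_apply, Finsupp.lapply_apply]
  by_cases hyx : y = x
  · subst hyx
    rw [theta_single_self]
    have h0 : (∑ z : V, if E z y then f z y • Finsupp.single z r else 0) b = 0 := by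
      rw [Finsupp.finset_sum_apply]
      refine Finset.sum_eq_zero fun z _ => ?_
      split
      · have hzb : z ≠ b := fun he => hb y (he ▸ (by assumption))
        simp [Finsupp.single_apply, hzb]
      · simp
    rw [h0]
    split
    · simp
    · rw [Finsupp.lapply_apply, Finsupp.single_apply, if_neg (by tauto)]
  · rw [theta_single_ne _ _ _ _ hyx]
    split
    · subst (by assumption : x = b)
      simp [Finsupp.single_apply, hyx]
    · simp

lemma detect_sink (b : V) (hb : ∀ z, ¬ E b z) (w : FreeMonoid V) :
    (Finsupp.lapply b).comp (Rword E f w : (V →₀ R) →ₗ[R] (V →₀ R)) =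
      if b ∈ FreeMonoid.toList w then 0 else Finsupp.lapply b := by
  induction w using FreeMonoid.recOn with
  | one => simp [Module.End.one_eq_id]
  | of_mul x w ih =>
    rw [map_mul, Rword_of, Module.End.mul_eq_comp, ← LinearMap.comp_assoc,
      lapply_theta E f b hb x]
    by_cases hxb : x = b
    · subst hxb
      rw [if_pos rfl, LinearMap.zero_comp, if_pos (by simp)]
    · rw [if_neg hxb, ih]
      have : (b ∈ FreeMonoid.toList (FreeMonoid.of x * w)) ↔ b ∈ FreeMonoid.toList w := by
        simp [FreeMonoid.toList_mul]
        tauto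
      by_cases hbw : b ∈ FreeMonoid.toList w
      · rw [if_pos hbw, if_pos (this.mpr hbw)]
      · rw [if_neg hbw, if_neg (fun h => hbw (this.mp h))]

lemma theta_kill_src (b : V) (hb : ∀ z, ¬ E z b) (r : R) :
    theta E f b (Finsupp.single b r) = 0 := by
  rw [theta_single_self]
  exact Finset.sum_eq_zero fun z _ => if_neg (hb z)

lemma detect_src (b : V) (hb : ∀ z, ¬ E z b) (w : FreeMonoid V) :
    Rword E f w (Finsupp.single b (1 : R)) =
      if b ∈ FreeMonoid.toList w then 0 else Finsupp.single b 1 := by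
  have main : ∀ l : List V, Rword E f (FreeMonoid.ofList l) (Finsupp.single b (1 : R)) =
      if b ∈ l then 0 else Finsupp.single b 1 := by
    intro l
    induction l using List.reverseRecOn with
    | nil => simp
    | append_singleton l x ih =>
      rw [FreeMonoid.ofList_append, show FreeMonoid.ofList [x] = FreeMonoid.of x from rfl,
        Rword_snoc]
      by_cases hxb : x = b
      · subst hxb
        rw [theta_kill_src E f x hb, map_zero, if_pos (by simp)]
      · rw [theta_single_ne E f x b (fun h => hxb h.symm), ih]
        have : (b ∈ l ++ [x]) ↔ b ∈ l := by simp; tauto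
        by_cases hbl : b ∈ l
        · rw [if_pos hbl, if_pos (this.mpr hbl)]
        · rw [if_neg hbl, if_neg (fun h => hbl (this.mp h))]
  have hw : w = FreeMonoid.ofList (FreeMonoid.toList w) := rfl
  rw [hw] at *
  exact main _

lemma theta_idem (x : V) (hx : ¬ E x x) :
    (theta E f x).comp (theta E f x) = (theta E f x : (V →₀ R) →ₗ[R] (V →₀ R)) := by
  apply Finsupp.lhom_ext
  intro y r
  simp only [LinearMap.comp_apply]
  by_cases hyx : y = x
  · subst hyx
    rw [theta_single_self, map_sum]
    refine Finset.sum_congr rfl fun z _ => ?_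
    by_cases hz : E z y
    · rw [if_pos hz, map_smul, theta_single_ne E f y z (fun he => hx (he ▸ hz))]
    · rw [if_neg hz, map_zero]
  · rw [theta_single_ne _ _ _ _ hyx, theta_single_ne _ _ _ _ hyx]

lemma rword_const (x : V) (hx : ¬ E x x) (w : FreeMonoid V)
    (hall : ∀ c ∈ FreeMonoid.toList w, c = x) (hne : w ≠ 1) :
    Rword E f w = theta E f x := by
  induction w using FreeMonoid.recOn with
  | one => exact absurd rfl hne
  | of_mul c w ih =>
    have hcx : c = x := hall c (by simp [FreeMonoid.toList_mul])
    subst hcx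
    by_cases hw : w = 1
    · subst hw
      rw [mul_one, Rword_of]
    · rw [map_mul, Rword_of, ih (fun d hd => hall d (by simp [FreeMonoid.toList_mul]; tauto)) hw,
        Module.End.mul_eq_comp, theta_idem E f c hx]

lemma join_q (S₁ S₂ : Set V) (hcover : S₁ ∪ S₂ = Set.univ)
    (g g' : Module.End R (V →₀ R))
    (h1 : (qmap (R := R) S₁).comp (g : (V →₀ R) →ₗ[R] (V →₀ R)) = (qmap (R := R) S₁).comp g')
    (h2 : (qmap (R := R) S₂).comp (g : (V →₀ R) →ₗ[R] (V →₀ R)) = (qmap (R := R) S₂).comp g') :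
    g = g' := by
  apply Finsupp.lhom_ext
  intro y r
  ext v
  have hv : v ∈ S₁ ∪ S₂ := by rw [hcover]; trivial
  rcases hv with hv | hv
  · have h1' := LinearMap.congr_fun h1 (Finsupp.single y r)
    simp only [LinearMap.comp_apply] at h1'
    calc g (Finsupp.single y r) v
        = qmap (R := R) S₁ (g (Finsupp.single y r)) ⟨v, hv⟩ := (qmap_apply (g (Finsupp.single y r)) ⟨v, hv⟩).symm
      _ = qmap (R := R) S₁ (g' (Finsupp.single y r)) ⟨v, hv⟩ := by rw [h1']
      _ = g' (Finsupp.single y r) v := qmap_apply (g' (Finsupp.single y r)) ⟨v, hv⟩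
  · have h2' := LinearMap.congr_fun h2 (Finsupp.single y r)
    simp only [LinearMap.comp_apply] at h2'
    calc g (Finsupp.single y r) v
        = qmap (R := R) S₂ (g (Finsupp.single y r)) ⟨v, hv⟩ := (qmap_apply (g (Finsupp.single y r)) ⟨v, hv⟩).symm
      _ = qmap (R := R) S₂ (g' (Finsupp.single y r)) ⟨v, hv⟩ := by rw [h2']
      _ = g' (Finsupp.single y r) v := qmap_apply (g' (Finsupp.single y r)) ⟨v, hv⟩

lemma join_e (S₁ S₂ : Set V) (hcover : S₁ ∪ S₂ = Set.univ)
    (g g' : Module.End R (V →₀ R))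
    (h1 : (g : (V →₀ R) →ₗ[R] (V →₀ R)).comp (emap (R := R) S₁) = (g' : (V →₀ R) →ₗ[R] (V →₀ R)).comp (emap (R := R) S₁))
    (h2 : (g : (V →₀ R) →ₗ[R] (V →₀ R)).comp (emap (R := R) S₂) = (g' : (V →₀ R) →ₗ[R] (V →₀ R)).comp (emap (R := R) S₂)) :
    g = g' := by
  apply Finsupp.lhom_ext
  intro y r
  have hv : y ∈ S₁ ∪ S₂ := by rw [hcover]; trivial
  rcases hv with hv | hv
  · have h1' := LinearMap.congr_fun h1 (Finsupp.single (⟨y, hv⟩ : ↥S₁) r)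
    simpa only [LinearMap.comp_apply, emap_single] using h1'
  · have h2' := LinearMap.congr_fun h2 (Finsupp.single (⟨y, hv⟩ : ↥S₂) r)
    simpa only [LinearMap.comp_apply, emap_single] using h2'

end Detect
section ConStuff

open FreeMonoid

variable {V : Type*} (E : V → V → Prop)

lemma hk_idem (x : V) : HKCon E (of x * of x) (of x) :=
  ConGen.Rel.of _ _ (Or.inl ⟨x, rfl, rfl⟩)

lemma hk_comm {x y : V} (hxy : x ≠ y) (h1 : ¬ E x y) (h2 : ¬ E y x) :
    HKCon E (of x * of y) (of y * of x) :=
  ConGen.Rel.of _ _ (Or.inr (Or.inl ⟨x, y, hxy, h1, h2, rfl, rfl⟩))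

lemma hk_br {x y : V} (h : E x y) (h' : ¬ E y x) :
    HKCon E (of x * of y * of x) (of y * of x * of y) :=
  ConGen.Rel.of _ _ (Or.inr (Or.inr (Or.inl ⟨x, y, h, h', rfl, rfl⟩)))

lemma hk_abs {x y : V} (h : E x y) (h' : ¬ E y x) :
    HKCon E (of x * of y * of x) (of x * of y) :=
  ConGen.Rel.of _ _ (Or.inr (Or.inr (Or.inr (Or.inl ⟨x, y, h, h', rfl, rfl⟩))))

lemma hkc_mulL {x y : FreeMonoid V} (z : FreeMonoid V) (h : HKCon E x y) :
    HKCon E (z * x) (z * y) := (HKCon E).mul ((HKCon E).refl z) h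

lemma hkc_mulR {x y : FreeMonoid V} (z : FreeMonoid V) (h : HKCon E x y) :
    HKCon E (x * z) (y * z) := (HKCon E).mul h ((HKCon E).refl z)

lemma hk_br' {x y : V} (h : E x y) (h' : ¬ E y x) :
    HKCon E (of x * (of y * of x)) (of y * (of x * of y)) := by
  have := hk_br E h h'
  simp only [mul_assoc] at this
  exact this

lemma hk_abs' {x y : V} (h : E x y) (h' : ¬ E y x) :
    HKCon E (of x * (of y * of x)) (of x * of y) := by
  have := hk_abs E h h'
  simp only [mul_assoc] at this
  exact this

/-- The congruence of having the same set of letters. -/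
def contentCon (W : Type*) : Con (FreeMonoid W) where
  r u v := ∀ x, x ∈ FreeMonoid.toList u ↔ x ∈ FreeMonoid.toList v
  iseqv := ⟨fun _ _ => Iff.rfl, fun h x => (h x).symm, fun h h' x => (h x).trans (h' x)⟩
  mul' := fun h h' x => by
    simp only [FreeMonoid.toList_mul, List.mem_append]
    exact or_congr (h x) (h' x)

lemma hkcon_content {w w' : FreeMonoid V} (h : HKCon E w w') :
    ∀ v, v ∈ FreeMonoid.toList w ↔ v ∈ FreeMonoid.toList w' := by
  have hle : (HKCon E) ≤ contentCon V := Con.conGen_le.mpr ?_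
  exact Con.le_def.mp hle h
  rintro p q (⟨x, rfl, rfl⟩ | ⟨x, y, _, _, _, rfl, rfl⟩ | ⟨x, y, _, _, rfl, rfl⟩ |
    ⟨x, y, _, _, rfl, rfl⟩ | ⟨x, y, _, _, rfl, rfl⟩) <;>
    intro v <;> simp only [FreeMonoid.toList_mul, List.mem_append] <;> tauto

lemma hk_map_rel {W : Type*} (E' : W → W → Prop) (φ : FreeMonoid V →* FreeMonoid W)
    (hφ : ∀ p p', HKRel E p p' → HKCon E' (φ p) (φ p')) {w w' : FreeMonoid V}
    (h : HKCon E w w') : HKCon E' (φ w) (φ w') := by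
  have hle : HKCon E ≤ Con.comap φ (map_mul φ) (HKCon E') :=
    Con.conGen_le.mpr fun p p' hr => (Con.comap_rel _).mpr (hφ p p' hr)
  exact (Con.comap_rel _).mp (Con.le_def.mp hle h)

lemma hk_proj {S : Set V} (hbidir : ∀ x y, ¬ (E x y ∧ E y x))
    {w w' : FreeMonoid V} (h : HKCon E w w') :
    HKCon (fun u v : ↥S => E ↑u ↑v) (projWord S w) (projWord S w') := by
  refine hk_map_rel E _ (projWord S) ?_ h
  rintro p q (⟨x, rfl, rfl⟩ | ⟨x, y, hxy, h1, h2, rfl, rfl⟩ | ⟨x, y, h1, h2, rfl, rfl⟩ |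
    ⟨x, y, h1, h2, rfl, rfl⟩ | ⟨x, y, h1, h2, rfl, rfl⟩) <;>
    simp only [map_mul (projWord S) _ _]
  · by_cases hx : x ∈ S
    · simp only [projWord_of_mem hx]; exact hk_idem _ _
    · simp only [projWord_of_not hx, one_mul]; exact (HKCon _).refl _
  · by_cases hx : x ∈ S <;> by_cases hy : y ∈ S
    · simp only [projWord_of_mem hx, projWord_of_mem hy]
      exact hk_comm _ (fun he => hxy (congrArg Subtype.val he)) h1 h2
    · simp only [projWord_of_mem hx, projWord_of_not hy, one_mul, mul_one]
      exact (HKCon _).refl _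
    · simp only [projWord_of_not hx, projWord_of_mem hy, one_mul, mul_one]
      exact (HKCon _).refl _
    · simp only [projWord_of_not hx, projWord_of_not hy, one_mul]
      exact (HKCon _).refl _
  · by_cases hx : x ∈ S <;> by_cases hy : y ∈ S
    · simp only [projWord_of_mem hx, projWord_of_mem hy]; exact hk_br _ h1 h2
    · simp only [projWord_of_mem hx, projWord_of_not hy, one_mul, mul_one]
      exact hk_idem _ _
    · simp only [projWord_of_not hx, projWord_of_mem hy, one_mul, mul_one]
      exact (HKCon _).symm (hk_idem _ _)
    · simp only [projWord_of_not hx, projWord_of_not hy, one_mul, mul_one]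
      exact (HKCon _).refl _
  · by_cases hx : x ∈ S <;> by_cases hy : y ∈ S
    · simp only [projWord_of_mem hx, projWord_of_mem hy]; exact hk_abs _ h1 h2
    · simp only [projWord_of_mem hx, projWord_of_not hy, one_mul, mul_one]
      exact hk_idem _ _
    · simp only [projWord_of_not hx, projWord_of_mem hy, one_mul, mul_one]
      exact (HKCon _).refl _
    · simp only [projWord_of_not hx, projWord_of_not hy, one_mul, mul_one]
      exact (HKCon _).refl _
  · exact absurd ⟨h1, h2⟩ (hbidir x y)

lemma hk_embed {S : Set V} {u u' : FreeMonoid ↥S}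
    (h : HKCon (fun x y : ↥S => E ↑x ↑y) u u') :
    HKCon E (FreeMonoid.map Subtype.val u) (FreeMonoid.map Subtype.val u') := by
  refine hk_map_rel _ E (FreeMonoid.map Subtype.val) ?_ h
  rintro p q (⟨x, rfl, rfl⟩ | ⟨x, y, hxy, h1, h2, rfl, rfl⟩ | ⟨x, y, h1, h2, rfl, rfl⟩ |
    ⟨x, y, h1, h2, rfl, rfl⟩ | ⟨x, y, h1, h2, rfl, rfl⟩) <;>
    simp only [map_mul (FreeMonoid.map (Subtype.val : ↥S → V)) _ _, FreeMonoid.map_of]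
  · exact hk_idem _ _
  · exact hk_comm _ (fun he => hxy (Subtype.ext he)) h1 h2
  · exact hk_br _ h1 h2
  · exact hk_abs _ h1 h2
  · exact ConGen.Rel.of _ _ (Or.inr (Or.inr (Or.inr (Or.inr ⟨↑x, ↑y, h1, h2, rfl, rfl⟩))))

lemma letter_word_comm {c : V} {v : FreeMonoid V}
    (h : ∀ d ∈ FreeMonoid.toList v, c ≠ d ∧ ¬ E c d ∧ ¬ E d c) :
    HKCon E (of c * v) (v * of c) := by
  induction v using FreeMonoid.recOn with
  | one => rw [one_mul, mul_one]; exact (HKCon E).refl _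
  | of_mul d v ih =>
    have hd := h d (by simp [FreeMonoid.toList_mul])
    have e1 : of c * (of d * v) = (of c * of d) * v := (mul_assoc _ _ _).symm
    have e2 : (of d * v) * of c = of d * (v * of c) := mul_assoc _ _ _
    rw [e1, e2]
    refine (HKCon E).trans (hkc_mulR E v (hk_comm E hd.1 hd.2.1 hd.2.2)) ?_
    rw [mul_assoc]
    exact hkc_mulL E (of d) (ih fun d' hd' => h d' (by simp [FreeMonoid.toList_mul]; tauto))

lemma word_comm {u v : FreeMonoid V}
    (h : ∀ c ∈ FreeMonoid.toList u, ∀ d ∈ FreeMonoid.toList v, c ≠ d ∧ ¬ E c d ∧ ¬ E d c) :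
    HKCon E (u * v) (v * u) := by
  induction u using FreeMonoid.recOn with
  | one => rw [one_mul, mul_one]; exact (HKCon E).refl _
  | of_mul c u ih =>
    have hc := h c (by simp [FreeMonoid.toList_mul])
    rw [mul_assoc]
    refine (HKCon E).trans (hkc_mulL E (of c)
      (ih fun c' hc' => h c' (by simp [FreeMonoid.toList_mul]; tauto))) ?_
    have e1 : of c * (v * u) = (of c * v) * u := (mul_assoc _ _ _).symm
    have e2 : v * (of c * u) = (v * of c) * u := (mul_assoc _ _ _).symm
    rw [e1, e2]
    exact hkc_mulR E u (letter_word_comm E hc)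

end ConStuff
section Collapse

open FreeMonoid

variable {V : Type*} (E : V → V → Prop) (a : V)

lemma acol_letter_sink (hsink : ∀ z, ¬ E a z) {u : V} (hu : u ≠ a) :
    HKCon E (of a * (of u * of a)) (of u * of a) := by
  by_cases he : E u a
  · exact (HKCon E).trans ((HKCon E).symm (hk_br' E he (hsink u))) (hk_abs' E he (hsink u))
  · have h1 : HKCon E (of a * of u) (of u * of a) :=
      hk_comm E (fun hh => hu hh.symm) (hsink u) he
    have h2 := hkc_mulR E (of a) h1
    simp only [mul_assoc] at h2
    refine (HKCon E).trans h2 ?_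
    exact hkc_mulL E (of u) (hk_idem E a)

lemma acol_sink (hsink : ∀ z, ¬ E a z) (u : FreeMonoid V) :
    HKCon E (of a * (u * of a)) (u * of a) := by
  have main : ∀ l : List V, HKCon E (of a * (ofList l * of a)) (ofList l * of a) := by
    intro l
    induction l using List.reverseRecOn with
    | nil =>
      have : ofList ([] : List V) = 1 := rfl
      rw [this, one_mul]
      exact hk_idem E a
    | append_singleton l c ih =>
      rw [FreeMonoid.ofList_append, show ofList [c] = of c from rfl]
      by_cases hc : c = a
      · subst hc
        have h2 := hkc_mulR E (of c) ih
        simp only [mul_assoc] at h2 ⊢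
        exact h2
      · have s1 := hkc_mulL E (of a) (hkc_mulL E (ofList l)
          ((HKCon E).symm (acol_letter_sink E a hsink hc)))
        have s4 := hkc_mulR E (of c * of a) ih
        have s5 := hkc_mulL E (ofList l) (acol_letter_sink E a hsink hc)
        simp only [mul_assoc] at s1 s4 s5 ⊢
        exact (HKCon E).trans s1 ((HKCon E).trans s4 s5)
  have := main (FreeMonoid.toList u)
  exact this

lemma acol_letter_src (hsrc : ∀ z, ¬ E z a) {u : V} (hu : u ≠ a) :
    HKCon E (of a * (of u * of a)) (of a * of u) := by
  by_cases he : E a u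
  · exact hk_abs' E he (hsrc u)
  · have h1 : HKCon E (of u * of a) (of a * of u) := hk_comm E hu (hsrc u) he
    refine (HKCon E).trans (hkc_mulL E (of a) h1) ?_
    have h2 := hkc_mulR E (of u) (hk_idem E a)
    simp only [mul_assoc] at h2
    exact h2

lemma acol_src (hsrc : ∀ z, ¬ E z a) (u : FreeMonoid V) :
    HKCon E (of a * (u * of a)) (of a * u) := by
  induction u using FreeMonoid.recOn with
  | one => rw [one_mul, mul_one]; exact hk_idem E a
  | of_mul c u ih =>
    by_cases hc : c = a
    · subst hc
      simp only [mul_assoc]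
      exact hkc_mulL E (of c) ih
    · have s1 := hkc_mulR E (u * of a) ((HKCon E).symm (acol_letter_src E a hsrc hc))
      have s2 := hkc_mulL E (of a) (hkc_mulL E (of c) ih)
      have s3 := hkc_mulR E u (acol_letter_src E a hsrc hc)
      simp only [mul_assoc] at s1 s2 s3 ⊢
      exact (HKCon E).trans s1 ((HKCon E).trans s2 s3)

/-- Combined collapse step used in the normal form computation. -/
lemma acomb (ha : (∀ z, ¬ E z a) ∨ (∀ z, ¬ E a z)) (u v : FreeMonoid V)
    (hu : a ∉ FreeMonoid.toList u) (hv : a ∉ FreeMonoid.toList v) :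
    ∃ u' v', a ∉ FreeMonoid.toList u' ∧ a ∉ FreeMonoid.toList v' ∧
      HKCon E (of a * (u * (of a * v))) (u' * (of a * v')) := by
  rcases ha with hsrc | hsink
  · refine ⟨1, u * v, by simp, ?_, ?_⟩
    · simp only [FreeMonoid.toList_mul, List.mem_append]
      tauto
    · have := hkc_mulR E v (acol_src E a hsrc u)
      simp only [mul_assoc] at this
      rw [one_mul]
      exact this
  · refine ⟨u, v, hu, hv, ?_⟩
    have := hkc_mulR E v (acol_sink E a hsink u)
    simp only [mul_assoc] at this
    exact this

lemma normal_form (ha : (∀ z, ¬ E z a) ∨ (∀ z, ¬ E a z)) (w : FreeMonoid V) :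
    ∃ u v : FreeMonoid V, a ∉ FreeMonoid.toList u ∧ a ∉ FreeMonoid.toList v ∧
      ((HKCon E w u ∧ a ∉ FreeMonoid.toList w) ∨
        (HKCon E w (u * (of a * v)) ∧ a ∈ FreeMonoid.toList w)) := by
  induction w using FreeMonoid.recOn with
  | one => exact ⟨1, 1, by simp, by simp, Or.inl ⟨(HKCon E).refl 1, by simp⟩⟩
  | of_mul c w ih =>
    obtain ⟨u, v, hu, hv, hcase⟩ := ih
    rcases hcase with ⟨hw, hna⟩ | ⟨hw, hya⟩
    · by_cases hc : c = a
      · subst hc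
        refine ⟨1, u, by simp, hu, Or.inr ⟨?_, by simp [FreeMonoid.toList_mul]⟩⟩
        rw [one_mul]
        exact hkc_mulL E (of c) hw
      · refine ⟨of c * u, v, ?_, hv, Or.inl ⟨hkc_mulL E (of c) hw, ?_⟩⟩
        · simp only [FreeMonoid.toList_mul, List.mem_append]
          rintro (h | h)
          · have hac : a = c := by simpa [FreeMonoid.toList_of] using h
            exact hc hac.symm
          · exact hu h
        · simp only [FreeMonoid.toList_mul, List.mem_append]
          rintro (h | h)
          · have hac : a = c := by simpa [FreeMonoid.toList_of] using h
            exact hc hac.symm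
          · exact hna h
    · by_cases hc : c = a
      · subst hc
        obtain ⟨u', v', hu', hv', hstep⟩ := acomb E c ha u v hu hv
        refine ⟨u', v', hu', hv', Or.inr ⟨?_, by simp [FreeMonoid.toList_mul]⟩⟩
        exact (HKCon E).trans (hkc_mulL E (of c) hw) hstep
      · refine ⟨of c * u, v, ?_, hv, Or.inr ⟨?_, ?_⟩⟩
        · simp only [FreeMonoid.toList_mul, List.mem_append]
          rintro (h | h)
          · have hac : a = c := by simpa [FreeMonoid.toList_of] using h
            exact hc hac.symm
          · exact hu h
        · have := hkc_mulL E (of c) hw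
          simp only [mul_assoc] at this ⊢
          exact this
        · simp only [FreeMonoid.toList_mul, List.mem_append]
          right; exact hya
  
lemma afree_split (S₁ S₂ : Set V) (hcover : S₁ ∪ S₂ = Set.univ) (a : V)
    (hcross : ∀ c d, c ∈ S₂ → c ≠ a → d ∈ S₁ → d ≠ a → c ≠ d ∧ ¬ E c d ∧ ¬ E d c)
    (u : FreeMonoid V) (hu : a ∉ FreeMonoid.toList u) :
    ∃ x y : FreeMonoid V, (∀ c ∈ FreeMonoid.toList x, c ∈ S₁ ∧ c ≠ a) ∧
      (∀ d ∈ FreeMonoid.toList y, d ∈ S₂ ∧ d ≠ a) ∧ HKCon E u (x * y) := by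
  induction u using FreeMonoid.recOn with
  | one =>
    refine ⟨1, 1, by simp, by simp, ?_⟩
    rw [one_mul]; exact (HKCon E).refl 1
  | of_mul c u ih =>
    have hca : c ≠ a := fun h => hu (by simp [FreeMonoid.toList_mul, h])
    have hu' : a ∉ FreeMonoid.toList u := fun h => hu (by simp [FreeMonoid.toList_mul]; tauto)
    obtain ⟨x, y, hx, hy, hxy⟩ := ih hu'
    have hc2 : c ∈ S₁ ∪ S₂ := by rw [hcover]; trivial
    rcases hc2 with hc1 | hc1
    · refine ⟨of c * x, y, ?_, hy, ?_⟩
      · intro d hd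
        rcases (show d = c ∨ d ∈ FreeMonoid.toList x by
            simpa [FreeMonoid.toList_mul] using hd) with rfl | hd'
        · exact ⟨hc1, hca⟩
        · exact hx d hd'
      · have := hkc_mulL E (of c) hxy
        simp only [mul_assoc] at this ⊢
        exact this
    · refine ⟨x, of c * y, hx, ?_, ?_⟩
      · intro d hd
        rcases (show d = c ∨ d ∈ FreeMonoid.toList y by
            simpa [FreeMonoid.toList_mul] using hd) with rfl | hd'
        · exact ⟨hc1, hca⟩
        · exact hy d hd'
      · refine (HKCon E).trans (hkc_mulL E (of c) hxy) ?_
        have hcl : HKCon E (of c * x) (x * of c) := by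
          refine letter_word_comm E fun d hd => ?_
          obtain ⟨hd1, hda⟩ := hx d hd
          exact hcross c d hc1 hca hd1 hda
        have := hkc_mulR E y hcl
        simp only [mul_assoc] at this ⊢
        exact this

lemma projWord_mem {S : Set V} {t : V} (ht : t ∈ S) (w : FreeMonoid V) :
    (⟨t, ht⟩ : ↥S) ∈ FreeMonoid.toList (projWord S w) ↔ t ∈ FreeMonoid.toList w := by
  induction w using FreeMonoid.recOn with
  | one => simp [map_one]
  | of_mul c w ih =>
    rw [map_mul (projWord S) _ _]
    simp only [FreeMonoid.toList_mul, List.mem_append]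
    by_cases hc : c ∈ S
    · rw [projWord_of_mem hc]
      constructor
      · rintro (h | h)
        · left
          have : (⟨t, ht⟩ : ↥S) = ⟨c, hc⟩ := by simpa using h
          simpa using congrArg Subtype.val this
        · right; exact ih.mp h
      · rintro (h | h)
        · left
          have : t = c := by simpa using h
          simp [Subtype.ext_iff, this]
        · right; exact ih.mpr h
    · rw [projWord_of_not hc]
      have htc : t ≠ c := fun he => hc (he ▸ ht)
      constructor
      · rintro (h | h)
        · exact absurd h (by simp)
        · right; exact ih.mp h
      · rintro (h | h)
        · exact absurd (by simpa using h) htc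
        · right; exact ih.mpr h

lemma projWord_eq_one {S : Set V} (w : FreeMonoid V)
    (h : ∀ c ∈ FreeMonoid.toList w, c ∉ S) : projWord S w = 1 := by
  induction w using FreeMonoid.recOn with
  | one => exact map_one _
  | of_mul c w ih =>
    rw [map_mul (projWord S) _ _, projWord_of_not (h c (by simp [FreeMonoid.toList_mul])),
      one_mul]
    exact ih fun d hd => h d (by simp [FreeMonoid.toList_mul]; tauto)

lemma embed_projWord {S : Set V} (w : FreeMonoid V)
    (h : ∀ c ∈ FreeMonoid.toList w, c ∈ S) :
    FreeMonoid.map Subtype.val (projWord S w) = w := by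
  induction w using FreeMonoid.recOn with
  | one => rw [map_one, map_one]
  | of_mul c w ih =>
    rw [map_mul (projWord S) _ _, projWord_of_mem (h c (by simp [FreeMonoid.toList_mul])),
      map_mul, FreeMonoid.map_of, ih fun d hd => h d (by simp [FreeMonoid.toList_mul]; tauto)]

lemma projWord_map_val {S : Set V} (w : FreeMonoid ↥S) :
    projWord S (FreeMonoid.map Subtype.val w) = w := by
  induction w using FreeMonoid.recOn with
  | one => rw [map_one, map_one]
  | of_mul s w ih =>
    rw [map_mul, FreeMonoid.map_of, map_mul (projWord S) _ _, projWord_of_mem s.2, ih,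
      Subtype.coe_eta]

end Collapse
section Glue

open FreeMonoid

lemma comb_glue {V : Type*} (E : V → V → Prop) (hbidir : ∀ x y, ¬ (E x y ∧ E y x))
    (S₁ S₂ : Set V) (a : V) (ha₁ : a ∈ S₁) (ha₂ : a ∈ S₂)
    (hcover : S₁ ∪ S₂ = Set.univ)
    (hcross : ∀ c d, c ∈ S₂ → c ≠ a → d ∈ S₁ → d ≠ a → c ≠ d ∧ ¬ E c d ∧ ¬ E d c)
    (hdisj₁ : ∀ d, d ∈ S₂ → d ≠ a → d ∉ S₁)
    (hdisj₂ : ∀ d, d ∈ S₁ → d ≠ a → d ∉ S₂)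
    (ha : (∀ z, ¬ E z a) ∨ (∀ z, ¬ E a z))
    {w w' : FreeMonoid V}
    (h1 : HKCon (fun u v : ↥S₁ => E ↑u ↑v) (projWord S₁ w) (projWord S₁ w'))
    (h2 : HKCon (fun u v : ↥S₂ => E ↑u ↑v) (projWord S₂ w) (projWord S₂ w')) :
    HKCon E w w' := by
  have comm1 : ∀ p q : FreeMonoid V, (∀ c ∈ FreeMonoid.toList p, c ∈ S₁ ∧ c ≠ a) →
      (∀ d ∈ FreeMonoid.toList q, d ∈ S₂ ∧ d ≠ a) → HKCon E (p * q) (q * p) := by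
    intro p q hp hq
    refine word_comm E fun c hc d hd => ?_
    obtain ⟨h1', h2', h3'⟩ :=
      hcross d c (hq d hd).1 (hq d hd).2 (hp c hc).1 (hp c hc).2
    exact ⟨Ne.symm h1', h3', h2'⟩
  have hmem : a ∈ FreeMonoid.toList w ↔ a ∈ FreeMonoid.toList w' := by
    have := hkcon_content _ h1 ⟨a, ha₁⟩
    rwa [projWord_mem ha₁ w, projWord_mem ha₁ w'] at this
  obtain ⟨u, v, hu, hv, hc⟩ := normal_form E a ha w
  obtain ⟨u', v', hu', hv', hc'⟩ := normal_form E a ha w'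
  rcases hc with ⟨hw, hna⟩ | ⟨hw, hya⟩ <;> rcases hc' with ⟨hw', hna'⟩ | ⟨hw', hya'⟩
  · -- both a-free
    obtain ⟨x, y, hx, hy, hxy⟩ := afree_split E S₁ S₂ hcover a hcross u hu
    obtain ⟨x', y', hx', hy', hxy'⟩ := afree_split E S₁ S₂ hcover a hcross u' hu'
    have hwxy : HKCon E w (x * y) := (HKCon E).trans hw hxy
    have hwxy' : HKCon E w' (x' * y') := (HKCon E).trans hw' hxy'
    have key1 : HKCon (fun u v : ↥S₁ => E ↑u ↑v) (projWord S₁ (x * y))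
        (projWord S₁ (x' * y')) :=
      (HKCon _).trans ((HKCon _).symm (hk_proj E hbidir hwxy))
        ((HKCon _).trans h1 (hk_proj E hbidir hwxy'))
    have key2 : HKCon (fun u v : ↥S₂ => E ↑u ↑v) (projWord S₂ (x * y))
        (projWord S₂ (x' * y')) :=
      (HKCon _).trans ((HKCon _).symm (hk_proj E hbidir hwxy))
        ((HKCon _).trans h2 (hk_proj E hbidir hwxy'))
    have hpy : projWord S₁ y = 1 :=
      projWord_eq_one _ fun d hd => hdisj₁ d (hy d hd).1 (hy d hd).2
    have hpy' : projWord S₁ y' = 1 :=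
      projWord_eq_one _ fun d hd => hdisj₁ d (hy' d hd).1 (hy' d hd).2
    have hpx : projWord S₂ x = 1 :=
      projWord_eq_one _ fun d hd => hdisj₂ d (hx d hd).1 (hx d hd).2
    have hpx' : projWord S₂ x' = 1 :=
      projWord_eq_one _ fun d hd => hdisj₂ d (hx' d hd).1 (hx' d hd).2
    rw [map_mul (projWord S₁) _ _, map_mul (projWord S₁) _ _, hpy, hpy', mul_one, mul_one]
      at key1
    rw [map_mul (projWord S₂) _ _, map_mul (projWord S₂) _ _, hpx, hpx', one_mul, one_mul]
      at key2
    have ex : HKCon E x x' := by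
      have := hk_embed E key1
      rwa [embed_projWord x fun c hc => (hx c hc).1,
        embed_projWord x' fun c hc => (hx' c hc).1] at this
    have ey : HKCon E y y' := by
      have := hk_embed E key2
      rwa [embed_projWord y fun c hc => (hy c hc).1,
        embed_projWord y' fun c hc => (hy' c hc).1] at this
    exact (HKCon E).trans hwxy ((HKCon E).trans ((HKCon E).mul ex ey) ((HKCon E).symm hwxy'))
  · exact absurd (hmem.mpr hya') hna
  · exact absurd (hmem.mp hya) hna'
  · -- both contain a
    obtain ⟨x, y, hx, hy, hxy⟩ := afree_split E S₁ S₂ hcover a hcross u hu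
    obtain ⟨x₂, y₂, hx₂, hy₂, hxy₂⟩ := afree_split E S₁ S₂ hcover a hcross v hv
    obtain ⟨x', y', hx', hy', hxy'⟩ := afree_split E S₁ S₂ hcover a hcross u' hu'
    obtain ⟨x₂', y₂', hx₂', hy₂', hxy₂'⟩ := afree_split E S₁ S₂ hcover a hcross v' hv'
    have hwW : HKCon E w (x * (y * (of a * (x₂ * y₂)))) := by
      refine (HKCon E).trans hw ?_
      have := (HKCon E).mul hxy (hkc_mulL E (of a) hxy₂)
      simp only [mul_assoc] at this ⊢
      exact this
    have hwW' : HKCon E w' (x' * (y' * (of a * (x₂' * y₂')))) := by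
      refine (HKCon E).trans hw' ?_
      have := (HKCon E).mul hxy' (hkc_mulL E (of a) hxy₂')
      simp only [mul_assoc] at this ⊢
      exact this
    have key1 : HKCon (fun u v : ↥S₁ => E ↑u ↑v)
        (projWord S₁ (x * (y * (of a * (x₂ * y₂)))))
        (projWord S₁ (x' * (y' * (of a * (x₂' * y₂'))))) :=
      (HKCon _).trans ((HKCon _).symm (hk_proj E hbidir hwW))
        ((HKCon _).trans h1 (hk_proj E hbidir hwW'))
    have key2 : HKCon (fun u v : ↥S₂ => E ↑u ↑v)
        (projWord S₂ (x * (y * (of a * (x₂ * y₂)))))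
        (projWord S₂ (x' * (y' * (of a * (x₂' * y₂'))))) :=
      (HKCon _).trans ((HKCon _).symm (hk_proj E hbidir hwW))
        ((HKCon _).trans h2 (hk_proj E hbidir hwW'))
    have hpy : projWord S₁ y = 1 :=
      projWord_eq_one _ fun d hd => hdisj₁ d (hy d hd).1 (hy d hd).2
    have hpy₂ : projWord S₁ y₂ = 1 :=
      projWord_eq_one _ fun d hd => hdisj₁ d (hy₂ d hd).1 (hy₂ d hd).2
    have hpy' : projWord S₁ y' = 1 :=
      projWord_eq_one _ fun d hd => hdisj₁ d (hy' d hd).1 (hy' d hd).2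
    have hpy₂' : projWord S₁ y₂' = 1 :=
      projWord_eq_one _ fun d hd => hdisj₁ d (hy₂' d hd).1 (hy₂' d hd).2
    have hpx : projWord S₂ x = 1 :=
      projWord_eq_one _ fun d hd => hdisj₂ d (hx d hd).1 (hx d hd).2
    have hpx₂ : projWord S₂ x₂ = 1 :=
      projWord_eq_one _ fun d hd => hdisj₂ d (hx₂ d hd).1 (hx₂ d hd).2
    have hpx' : projWord S₂ x' = 1 :=
      projWord_eq_one _ fun d hd => hdisj₂ d (hx' d hd).1 (hx' d hd).2
    have hpx₂' : projWord S₂ x₂' = 1 :=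
      projWord_eq_one _ fun d hd => hdisj₂ d (hx₂' d hd).1 (hx₂' d hd).2
    simp only [map_mul (projWord S₁) _ _, map_mul (projWord S₂) _ _, hpy, hpy₂, hpy', hpy₂',
      hpx, hpx₂, hpx', hpx₂', projWord_of_mem ha₁, projWord_of_mem ha₂, one_mul, mul_one]
      at key1 key2
    have D1 : HKCon E (x * (of a * x₂)) (x' * (of a * x₂')) := by
      have h := hk_embed E key1
      simp only [map_mul (FreeMonoid.map (Subtype.val : ↥S₁ → V)) _ _, FreeMonoid.map_of] at h
      rwa [embed_projWord x fun c hc => (hx c hc).1,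
        embed_projWord x₂ fun c hc => (hx₂ c hc).1,
        embed_projWord x' fun c hc => (hx' c hc).1,
        embed_projWord x₂' fun c hc => (hx₂' c hc).1] at h
    have D2 : HKCon E (y * (of a * y₂)) (y' * (of a * y₂')) := by
      have h := hk_embed E key2
      simp only [map_mul (FreeMonoid.map (Subtype.val : ↥S₂ → V)) _ _, FreeMonoid.map_of] at h
      rwa [embed_projWord y fun c hc => (hy c hc).1,
        embed_projWord y₂ fun c hc => (hy₂ c hc).1,
        embed_projWord y' fun c hc => (hy' c hc).1,
        embed_projWord y₂' fun c hc => (hy₂' c hc).1] at h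
    have s1 : HKCon E (x * (y * (of a * (x₂ * y₂)))) (y * (x * (of a * (x₂ * y₂)))) := by
      have := hkc_mulR E (of a * (x₂ * y₂)) (comm1 x y hx hy)
      simp only [mul_assoc] at this ⊢
      exact this
    have s2 : HKCon E (y * (x * (of a * (x₂ * y₂)))) (y * (x' * (of a * (x₂' * y₂)))) := by
      have := hkc_mulL E y (hkc_mulR E y₂ D1)
      simp only [mul_assoc] at this ⊢
      exact this
    have s3 : HKCon E (y * (x' * (of a * (x₂' * y₂)))) (x' * (y * (of a * (x₂' * y₂)))) := by
      have := hkc_mulR E (of a * (x₂' * y₂)) ((HKCon E).symm (comm1 x' y hx' hy))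
      simp only [mul_assoc] at this ⊢
      exact this
    have s4 : HKCon E (x' * (y * (of a * (x₂' * y₂)))) (x' * (y * (of a * (y₂ * x₂')))) :=
      hkc_mulL E x' (hkc_mulL E y (hkc_mulL E (of a) (comm1 x₂' y₂ hx₂' hy₂)))
    have s5 : HKCon E (x' * (y * (of a * (y₂ * x₂')))) (x' * (y' * (of a * (y₂' * x₂')))) := by
      have := hkc_mulL E x' (hkc_mulR E x₂' D2)
      simp only [mul_assoc] at this ⊢
      exact this
    have s6 : HKCon E (x' * (y' * (of a * (y₂' * x₂')))) (x' * (y' * (of a * (x₂' * y₂')))) :=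
      hkc_mulL E x' (hkc_mulL E y' (hkc_mulL E (of a)
        ((HKCon E).symm (comm1 x₂' y₂' hx₂' hy₂'))))
    exact (HKCon E).trans hwW ((HKCon E).trans s1 ((HKCon E).trans s2 ((HKCon E).trans s3
      ((HKCon E).trans s4 ((HKCon E).trans s5 ((HKCon E).trans s6 ((HKCon E).symm hwW')))))))

end Glue
section Restrict

open FreeMonoid

lemma projWord_map_const {V : Type*} {S T : Set V} {a : V} (ha₂ : a ∈ T)
    (hST : ∀ v, v ∈ S → v ∈ T → v = a) (w : FreeMonoid ↥S) :
    ∀ c ∈ FreeMonoid.toList (projWord T (FreeMonoid.map Subtype.val w)),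
      c = (⟨a, ha₂⟩ : ↥T) := by
  induction w using FreeMonoid.recOn with
  | one => simp [map_one]
  | of_mul s w ih =>
    rw [map_mul, FreeMonoid.map_of, map_mul (projWord T) _ _]
    intro c hc
    rw [FreeMonoid.toList_mul, List.mem_append] at hc
    rcases hc with hc | hc
    · by_cases hs : (↑s : V) ∈ T
      · rw [projWord_of_mem hs] at hc
        have hcs : c = ⟨↑s, hs⟩ := by simpa [FreeMonoid.toList_of] using hc
        subst hcs
        exact Subtype.ext (hST ↑s s.2 hs)
      · rw [projWord_of_not hs] at hc
        exact absurd hc (by simp)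
    · exact ih c hc

lemma projWord_map_mem {V : Type*} {S T : Set V} {a : V} (ha₁ : a ∈ S) (ha₂ : a ∈ T)
    (w : FreeMonoid ↥S) :
    ((⟨a, ha₂⟩ : ↥T) ∈ FreeMonoid.toList (projWord T (FreeMonoid.map Subtype.val w))) ↔
      (⟨a, ha₁⟩ : ↥S) ∈ FreeMonoid.toList w := by
  rw [projWord_mem ha₂ (FreeMonoid.map Subtype.val w)]
  constructor
  · intro h
    have h' : a ∈ (FreeMonoid.toList w).map Subtype.val := by
      rwa [← FreeMonoid.toList_map]
    obtain ⟨s, hs, hsa⟩ := List.mem_map.mp h'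
    have hs' : s = ⟨a, ha₁⟩ := Subtype.ext hsa
    exact hs' ▸ hs
  · intro h
    have : a ∈ (FreeMonoid.toList w).map Subtype.val :=
      List.mem_map.mpr ⟨⟨a, ha₁⟩, h, rfl⟩
    rwa [← FreeMonoid.toList_map] at this

lemma word_eq_one_of_empty {V : Type*} {w : FreeMonoid V}
    (h : FreeMonoid.toList w = []) : w = 1 := by
  have := congrArg FreeMonoid.ofList h
  simpa using this

lemma effective_restrict {V : Type*} [Fintype V] {R : Type*} [CommRing R] [IsDomain R]
    (E : V → V → Prop) (hbidir : ∀ x y, ¬ (E x y ∧ E y x)) (hloop : ∀ x, ¬ E x x)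
    (S T : Set V) (a : V) (ha₁ : a ∈ S) (ha₂ : a ∈ T)
    (hcover : S ∪ T = Set.univ) (hST : ∀ v, v ∈ S → v ∈ T → v = a)
    (hedges : ∀ x y, E x y → (x ∈ S ∧ y ∈ S) ∨ (x ∈ T ∧ y ∈ T))
    (ha : (∀ z, ¬ E z a) ∨ (∀ z, ¬ E a z))
    (f : V → V → R)
    (hG : ∀ w w' : FreeMonoid V, Rword E f w = Rword E f w' → HKmk E w = HKmk E w') :
    ∀ w w' : FreeMonoid ↥S,
      Rword (fun x y : ↥S => E ↑x ↑y) (fun x y : ↥S => f ↑x ↑y) w =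
        Rword (fun x y : ↥S => E ↑x ↑y) (fun x y : ↥S => f ↑x ↑y) w' →
      HKmk (fun x y : ↥S => E ↑x ↑y) w = HKmk (fun x y : ↥S => E ↑x ↑y) w' := by
  intro w w' hR
  set ι := (FreeMonoid.map (Subtype.val : ↥S → V)) with hι
  have hmemM : ((⟨a, ha₁⟩ : ↥S) ∈ FreeMonoid.toList w) ↔
      ((⟨a, ha₁⟩ : ↥S) ∈ FreeMonoid.toList w') := by
    rcases ha with hsrc | hsink
    · have d1 := detect_src (fun x y : ↥S => E ↑x ↑y) (fun x y : ↥S => f ↑x ↑y)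
        (R := R) (⟨a, ha₁⟩ : ↥S) (fun z => hsrc ↑z) w
      have d2 := detect_src (fun x y : ↥S => E ↑x ↑y) (fun x y : ↥S => f ↑x ↑y)
        (R := R) (⟨a, ha₁⟩ : ↥S) (fun z => hsrc ↑z) w'
      rw [hR, d2] at d1
      by_cases hm : (⟨a, ha₁⟩ : ↥S) ∈ FreeMonoid.toList w <;>
        by_cases hm' : (⟨a, ha₁⟩ : ↥S) ∈ FreeMonoid.toList w'
      · tauto
      · rw [if_pos hm, if_neg hm'] at d1
        exact absurd (Finsupp.single_eq_zero.mp d1) (one_ne_zero (α := R))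
      · rw [if_neg hm, if_pos hm'] at d1
        exact absurd (Finsupp.single_eq_zero.mp d1.symm) (one_ne_zero (α := R))
      · tauto
    · have d1 := detect_sink (fun x y : ↥S => E ↑x ↑y) (fun x y : ↥S => f ↑x ↑y)
        (R := R) (⟨a, ha₁⟩ : ↥S) (fun z => hsink ↑z) w
      have d2 := detect_sink (fun x y : ↥S => E ↑x ↑y) (fun x y : ↥S => f ↑x ↑y)
        (R := R) (⟨a, ha₁⟩ : ↥S) (fun z => hsink ↑z) w'
      rw [hR, d2] at d1
      by_cases hm : (⟨a, ha₁⟩ : ↥S) ∈ FreeMonoid.toList w <;>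
        by_cases hm' : (⟨a, ha₁⟩ : ↥S) ∈ FreeMonoid.toList w'
      · tauto
      · rw [if_pos hm, if_neg hm'] at d1
        have := LinearMap.congr_fun d1.symm (Finsupp.single (⟨a, ha₁⟩ : ↥S) (1 : R))
        simp only [Finsupp.lapply_apply, Finsupp.single_eq_same, LinearMap.zero_apply] at this
        exact absurd this.symm one_ne_zero
      · rw [if_neg hm, if_pos hm'] at d1
        have := LinearMap.congr_fun d1 (Finsupp.single (⟨a, ha₁⟩ : ↥S) (1 : R))
        simp only [Finsupp.lapply_apply, Finsupp.single_eq_same, LinearMap.zero_apply] at this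
        exact absurd this.symm one_ne_zero
      · tauto
  have hTword : Rword (fun x y : ↥T => E ↑x ↑y) (fun x y : ↥T => f ↑x ↑y) (R := R)
        (projWord T (ι w)) =
      Rword (fun x y : ↥T => E ↑x ↑y) (fun x y : ↥T => f ↑x ↑y) (projWord T (ι w')) := by
    by_cases hm : (⟨a, ha₁⟩ : ↥S) ∈ FreeMonoid.toList w
    · have hm' := hmemM.mp hm
      have hne : projWord T (ι w) ≠ 1 := by
        intro h
        have hmm : (⟨a, ha₂⟩ : ↥T) ∈ FreeMonoid.toList (projWord T (ι w)) :=
          (projWord_map_mem ha₁ ha₂ w).mpr hm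
        rw [h, FreeMonoid.toList_one] at hmm
        exact absurd hmm (by simp)
      have hne' : projWord T (ι w') ≠ 1 := by
        intro h
        have hmm : (⟨a, ha₂⟩ : ↥T) ∈ FreeMonoid.toList (projWord T (ι w')) :=
          (projWord_map_mem ha₁ ha₂ w').mpr hm'
        rw [h, FreeMonoid.toList_one] at hmm
        exact absurd hmm (by simp)
      rw [rword_const _ _ (⟨a, ha₂⟩ : ↥T) (hloop a) _ (projWord_map_const ha₂ hST w) hne,
        rword_const _ _ (⟨a, ha₂⟩ : ↥T) (hloop a) _ (projWord_map_const ha₂ hST w') hne']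
    · have hm' := fun h => hm (hmemM.mpr h)
      have he : projWord T (ι w) = 1 := by
        apply word_eq_one_of_empty
        rw [List.eq_nil_iff_forall_not_mem]
        intro c hc
        have hca := projWord_map_const ha₂ hST w c hc
        subst hca
        exact hm ((projWord_map_mem ha₁ ha₂ w).mp hc)
      have he' : projWord T (ι w') = 1 := by
        apply word_eq_one_of_empty
        rw [List.eq_nil_iff_forall_not_mem]
        intro c hc
        have hca := projWord_map_const ha₂ hST w' c hc
        subst hca
        exact hm' ((projWord_map_mem ha₁ ha₂ w').mp hc)
      rw [he, he']
  have hMword : Rword E f (ι w) = Rword E f (ι w') := by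
    rcases ha with hsrc | hsink
    · have hinS : ∀ x, x ∈ S → ∀ z, E z x → z ∈ S := by
        intro x hx z hz
        rcases hedges z x hz with ⟨h1, _⟩ | ⟨_, h2⟩
        · exact h1
        · exact absurd hz (by rw [hST x hx h2]; exact hsrc z)
      have hinT : ∀ x, x ∈ T → ∀ z, E z x → z ∈ T := by
        intro x hx z hz
        rcases hedges z x hz with ⟨_, h2⟩ | ⟨h1, _⟩
        · exact absurd hz (by rw [hST x h2 hx]; exact hsrc z)
        · exact h1
      refine join_e S T hcover _ _ ?_ ?_
      · rw [rword_emap E f hinS (ι w), rword_emap E f hinS (ι w'), projWord_map_val w,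
          projWord_map_val w', hR]
      · rw [rword_emap E f hinT (ι w), rword_emap E f hinT (ι w'), hTword]
    · have houtS : ∀ x, x ∉ S → ∀ z, E z x → z ∉ S := by
        intro x hx z hz hzS
        rcases hedges z x hz with ⟨_, h2⟩ | ⟨h1, _⟩
        · exact hx h2
        · exact hsink x (hST z hzS h1 ▸ hz)
      have houtT : ∀ x, x ∉ T → ∀ z, E z x → z ∉ T := by
        intro x hx z hz hzT
        rcases hedges z x hz with ⟨h1, _⟩ | ⟨_, h2⟩
        · exact hsink x (hST z h1 hzT ▸ hz)
        · exact hx h2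
      refine join_q S T hcover _ _ ?_ ?_
      · rw [qmap_rword E f houtS (ι w), qmap_rword E f houtS (ι w'), projWord_map_val w,
          projWord_map_val w', hR]
      · rw [qmap_rword E f houtT (ι w), qmap_rword E f houtT (ι w'), hTword]
  have hg := hG (ι w) (ι w') hMword
  have hcon : HKCon E (ι w) (ι w') := (Con.eq _).mp hg
  have hfin := hk_proj (S := S) E hbidir hcon
  rw [projWord_map_val w, projWord_map_val w'] at hfin
  exact (Con.eq _).mpr hfin

end Restrict
section Final

open FreeMonoid

variable {V : Type*} [Fintype V] {R : Type*} [CommRing R]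

lemma qmap_emap_apply (S : Set V) (y : ↥S →₀ R) :
    qmap (R := R) S (emap (R := R) S y) = y := by
  induction y using Finsupp.induction_linear with
  | zero => simp
  | add u v hu hv => rw [map_add, map_add, hu, hv]
  | single s r => exact qmap_emap_single s r

lemma emap_cancel {S : Set V} {A B : Module.End R (↥S →₀ R)}
    (h : (emap (R := R) S).comp (A : (↥S →₀ R) →ₗ[R] (↥S →₀ R)) =
      (emap (R := R) S).comp (B : (↥S →₀ R) →ₗ[R] (↥S →₀ R))) : A = B := by
  apply Finsupp.lhom_ext
  intro s r
  have h' := LinearMap.congr_fun h (Finsupp.single s r)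
  simp only [LinearMap.comp_apply] at h'
  have := congrArg (qmap (R := R) S) h'
  rwa [qmap_emap_apply, qmap_emap_apply] at this

lemma qmap_cancel {S : Set V} {A B : Module.End R (↥S →₀ R)}
    (h : (A : (↥S →₀ R) →ₗ[R] (↥S →₀ R)).comp (qmap (R := R) S) =
      (B : (↥S →₀ R) →ₗ[R] (↥S →₀ R)).comp (qmap (R := R) S)) : A = B := by
  apply Finsupp.lhom_ext
  intro s r
  have h' := LinearMap.congr_fun h (Finsupp.single (↑s : V) r)
  simp only [LinearMap.comp_apply, qmap_single_mem s.2, Subtype.coe_eta] at h'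
  exact h'

end Final

theorem hk_gluing_effective_iff' {V : Type*} [Fintype V]
    {R : Type*} [CommRing R] [IsDomain R]
    (E : V → V → Prop) (hbidir : ∀ x y, ¬ (E x y ∧ E y x)) (hloop : ∀ x, ¬ E x x)
    (S₁ S₂ : Set V) (a : V)
    (hcover : S₁ ∪ S₂ = Set.univ) (hinter : S₁ ∩ S₂ = {a})
    (hedges : ∀ x y, E x y → (x ∈ S₁ ∧ y ∈ S₁) ∨ (x ∈ S₂ ∧ y ∈ S₂))
    (hnoshared : ∀ x y, E x y → ¬ ((x ∈ S₁ ∧ y ∈ S₁) ∧ (x ∈ S₂ ∧ y ∈ S₂)))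
    (ha : (∀ z, ¬ E z a) ∨ (∀ z, ¬ E a z))
    (f : V → V → R) (hf : ∀ x y, E x y → f x y ≠ 0) :
    ((∀ w w' : FreeMonoid V, Rword E f w = Rword E f w' → HKmk E w = HKmk E w') ↔
      ((∀ w w' : FreeMonoid S₁,
          Rword (fun x y : S₁ => E x y) (fun x y : S₁ => f x y) w =
            Rword (fun x y : S₁ => E x y) (fun x y : S₁ => f x y) w' →
          HKmk (fun x y : S₁ => E x y) w = HKmk (fun x y : S₁ => E x y) w') ∧
        (∀ w w' : FreeMonoid S₂,
          Rword (fun x y : S₂ => E x y) (fun x y : S₂ => f x y) w =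
            Rword (fun x y : S₂ => E x y) (fun x y : S₂ => f x y) w' →
          HKmk (fun x y : S₂ => E x y) w = HKmk (fun x y : S₂ => E x y) w'))) := by
  classical
  have haa : a ∈ S₁ ∩ S₂ := by rw [hinter]; exact rfl
  have ha₁ : a ∈ S₁ := haa.1
  have ha₂ : a ∈ S₂ := haa.2
  have hST : ∀ v, v ∈ S₁ → v ∈ S₂ → v = a := by
    intro v h1 h2
    have : v ∈ S₁ ∩ S₂ := ⟨h1, h2⟩
    rwa [hinter] at this
  constructor
  · intro hG
    constructor
    · exact effective_restrict E hbidir hloop S₁ S₂ a ha₁ ha₂ hcover hST hedges ha f hG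
    · refine effective_restrict E hbidir hloop S₂ S₁ a ha₂ ha₁ ?_ ?_ ?_ ha f hG
      · rw [Set.union_comm]; exact hcover
      · exact fun v h1 h2 => hST v h2 h1
      · exact fun x y h => (hedges x y h).symm
  · rintro ⟨h1, h2⟩ w w' hR
    have hcross : ∀ c d, c ∈ S₂ → c ≠ a → d ∈ S₁ → d ≠ a → c ≠ d ∧ ¬ E c d ∧ ¬ E d c := by
      intro c d hc hca hd hda
      refine ⟨fun he => hca (hST c (he ▸ hd) hc), fun he => ?_, fun he => ?_⟩
      · rcases hedges c d he with ⟨hc1, _⟩ | ⟨_, hd2⟩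
        · exact hca (hST c hc1 hc)
        · exact hda (hST d hd hd2)
      · rcases hedges d c he with ⟨_, hc1⟩ | ⟨hd2, _⟩
        · exact hca (hST c hc1 hc)
        · exact hda (hST d hd hd2)
    have hdisj₁ : ∀ d, d ∈ S₂ → d ≠ a → d ∉ S₁ := fun d h2' hda h1' => hda (hST d h1' h2')
    have hdisj₂ : ∀ d, d ∈ S₁ → d ≠ a → d ∉ S₂ := fun d h1' hda h2' => hda (hST d h1' h2')
    have hA1 : Rword (fun x y : ↥S₁ => E ↑x ↑y) (fun x y : ↥S₁ => f ↑x ↑y) (projWord S₁ w) =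
        Rword (fun x y : ↥S₁ => E ↑x ↑y) (fun x y : ↥S₁ => f ↑x ↑y) (projWord S₁ w') := by
      rcases ha with hsrc | hsink
      · have hinS : ∀ x, x ∈ S₁ → ∀ z, E z x → z ∈ S₁ := by
          intro x hx z hz
          rcases hedges z x hz with ⟨hz1, _⟩ | ⟨_, hx2⟩
          · exact hz1
          · exact absurd hz (by rw [hST x hx hx2]; exact hsrc z)
        have e1 := rword_emap E f hinS w
        have e2 := rword_emap E f hinS w'
        rw [hR, e2] at e1
        exact emap_cancel e1.symm
      · have houtS : ∀ x, x ∉ S₁ → ∀ z, E z x → z ∉ S₁ := by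
          intro x hx z hz hzS
          rcases hedges z x hz with ⟨_, hx2⟩ | ⟨hz2, _⟩
          · exact hx hx2
          · exact hsink x (hST z hzS hz2 ▸ hz)
        have e1 := qmap_rword E f houtS w
        have e2 := qmap_rword E f houtS w'
        rw [hR, e2] at e1
        exact qmap_cancel e1.symm
    have hA2 : Rword (fun x y : ↥S₂ => E ↑x ↑y) (fun x y : ↥S₂ => f ↑x ↑y) (projWord S₂ w) =
        Rword (fun x y : ↥S₂ => E ↑x ↑y) (fun x y : ↥S₂ => f ↑x ↑y) (projWord S₂ w') := by
      rcases ha with hsrc | hsink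
      · have hinT : ∀ x, x ∈ S₂ → ∀ z, E z x → z ∈ S₂ := by
          intro x hx z hz
          rcases hedges z x hz with ⟨_, hx2⟩ | ⟨hz1, _⟩
          · exact absurd hz (by rw [hST x hx2 hx]; exact hsrc z)
          · exact hz1
        have e1 := rword_emap E f hinT w
        have e2 := rword_emap E f hinT w'
        rw [hR, e2] at e1
        exact emap_cancel e1.symm
      · have houtT : ∀ x, x ∉ S₂ → ∀ z, E z x → z ∉ S₂ := by
          intro x hx z hz hzT
          rcases hedges z x hz with ⟨hz1, _⟩ | ⟨_, hx2⟩
          · exact hsink x (hST z hz1 hzT ▸ hz)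
          · exact hx hx2
        have e1 := qmap_rword E f houtT w
        have e2 := qmap_rword E f houtT w'
        rw [hR, e2] at e1
        exact qmap_cancel e1.symm
    have hk1 : HKCon (fun u v : ↥S₁ => E ↑u ↑v) (projWord S₁ w) (projWord S₁ w') :=
      (Con.eq _).mp (h1 (projWord S₁ w) (projWord S₁ w') hA1)
    have hk2 : HKCon (fun u v : ↥S₂ => E ↑u ↑v) (projWord S₂ w) (projWord S₂ w') :=
      (Con.eq _).mp (h2 (projWord S₂ w) (projWord S₂ w') hA2)
    exact (Con.eq _).mpr (comb_glue E hbidir S₁ S₂ a ha₁ ha₂ hcover hcross hdisj₁ hdisj₂ ha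
      hk1 hk2)

/-- Gluing theorem for effectiveness: if `Γ` is the union of two full subgraphs with no
common edges, meeting in a single vertex `a` which is a source or a sink, and `f` extends
the weight functions `f₁, f₂` of the pieces, then `R_f` is effective on `HK_Γ` if and only
if `R_{f₁}` and `R_{f₂}` are effective on `HK_{Γ₁}` and `HK_{Γ₂}`. -/
theorem hk_gluing_effective_iff {V : Type*} [Fintype V]
    {R : Type*} [CommRing R] [IsDomain R]
    (E : V → V → Prop) (hbidir : ∀ x y, ¬ (E x y ∧ E y x)) (hloop : ∀ x, ¬ E x x)
    (S₁ S₂ : Set V) (a : V)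
    (hcover : S₁ ∪ S₂ = Set.univ) (hinter : S₁ ∩ S₂ = {a})
    (hedges : ∀ x y, E x y → (x ∈ S₁ ∧ y ∈ S₁) ∨ (x ∈ S₂ ∧ y ∈ S₂))
    (hnoshared : ∀ x y, E x y → ¬ ((x ∈ S₁ ∧ y ∈ S₁) ∧ (x ∈ S₂ ∧ y ∈ S₂)))
    (ha : (∀ z, ¬ E z a) ∨ (∀ z, ¬ E a z))
    (f : V → V → R) (hf : ∀ x y, E x y → f x y ≠ 0) :
    ((∀ w w' : FreeMonoid V, Rword E f w = Rword E f w' → HKmk E w = HKmk E w') ↔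
      ((∀ w w' : FreeMonoid S₁,
          Rword (fun x y : S₁ => E x y) (fun x y : S₁ => f x y) w =
            Rword (fun x y : S₁ => E x y) (fun x y : S₁ => f x y) w' →
          HKmk (fun x y : S₁ => E x y) w = HKmk (fun x y : S₁ => E x y) w') ∧
        (∀ w w' : FreeMonoid S₂,
          Rword (fun x y : S₂ => E x y) (fun x y : S₂ => f x y) w =
            Rword (fun x y : S₂ => E x y) (fun x y : S₂ => f x y) w' →
          HKmk (fun x y : S₂ => E x y) w = HKmk (fun x y : S₂ => E x y) w'))) :=
  hk_gluing_effective_iff' E hbidir hloop S₁ S₂ a hcover hinter hedges hnoshared ha f hf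
end

section
/- Suppose Γ is a union of full subgraphs Γ₁,…,Γ_k satisfying the gluing condition: the subgraphs pairwise share no edges and for each j ≥ 2, V(Γ_j) ∩ (V(Γ₁) ∪ ⋯ ∪ V(Γ_{j−1})) is a single vertex that is a source or sink of Γ. Let m(Δ) denote the set of elements of HK_Δ with maximal content (content equal to all of V(Δ)). Then |m(Γ)| = ∏_{i=1}^k |m(Γ_i)|. -/
namespace HKP
open FreeMonoid

variable {V : Type*}

def LK (E : V → V → Prop) (l m : List V) : Prop := HKCon E (FreeMonoid.ofList l) (FreeMonoid.ofList m)

variable {E : V → V → Prop}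

lemma LK.refl (l : List V) : LK E l l := (HKCon E).refl _
lemma LK.symm {l m} (h : LK E l m) : LK E m l := (HKCon E).symm h
lemma LK.trans {l m n} (h : LK E l m) (h' : LK E m n) : LK E l n := (HKCon E).trans h h'
lemma LK.append {l₁ l₂ m₁ m₂} (h1 : LK E l₁ m₁) (h2 : LK E l₂ m₂) : LK E (l₁ ++ l₂) (m₁ ++ m₂) := by
  unfold LK at *; rw [ofList_append, ofList_append]; exact Con.mul _ h1 h2
lemma LK.appL (p : List V) {l m} (h : LK E l m) : LK E (p ++ l) (p ++ m) := (LK.refl p).append h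
lemma LK.appR {l m} (h : LK E l m) (q : List V) : LK E (l ++ q) (m ++ q) := h.append (LK.refl q)
lemma LK.idem (x : V) : LK E [x, x] [x] := ConGen.Rel.of _ _ (Or.inl ⟨x, rfl, rfl⟩)
lemma LK.comm {x y : V} (hne : x ≠ y) (h1 : ¬ E x y) (h2 : ¬ E y x) : LK E [x, y] [y, x] :=
  ConGen.Rel.of _ _ (Or.inr (Or.inl ⟨x, y, hne, h1, h2, rfl, rfl⟩))
lemma LK.braid {x y : V} (h1 : E x y) (h2 : ¬ E y x) : LK E [x, y, x] [y, x, y] :=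
  ConGen.Rel.of _ _ (Or.inr (Or.inr (Or.inl ⟨x, y, h1, h2, rfl, rfl⟩)))
lemma LK.absorb {x y : V} (h1 : E x y) (h2 : ¬ E y x) : LK E [x, y, x] [x, y] :=
  ConGen.Rel.of _ _ (Or.inr (Or.inr (Or.inr (Or.inl ⟨x, y, h1, h2, rfl, rfl⟩))))
lemma LK.aza {z a : V} (h1 : E z a) (h2 : ¬ E a z) : LK E [a, z, a] [z, a] :=
  ((LK.braid h1 h2).symm.trans (LK.absorb h1 h2) : LK E [a,z,a] [z,a])

section Sink
variable {a : V} (hsink : ∀ z, ¬ E a z)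
include hsink

lemma sink_aqa : ∀ (q : List V), LK E (a :: (q ++ [a])) (q ++ [a]) := by
  intro q
  induction q using List.reverseRecOn with
  | nil => exact LK.idem a
  | append_singleton q' z ih =>
    by_cases hz : z = a
    · rw [hz]
      have e1 : a :: ((q' ++ [a]) ++ [a]) = (a :: (q' ++ [a])) ++ [a] := by simp
      rw [e1]
      exact ih.appR [a]
    · by_cases hza : E z a
      · have h2 : ¬ E a z := hsink z
        -- a::(q'++[z]++[a]) = (a::q') ++ [z,a] ~ (a::q')++[a,z,a] = (a::(q'++[a]))++[z,a]
        have e1 : a :: ((q' ++ [z]) ++ [a]) = (a :: q') ++ [z, a] := by simp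
        have e2 : (a :: q') ++ [a, z, a] = (a :: (q' ++ [a])) ++ [z, a] := by simp
        have e3 : (q' ++ [a]) ++ [z, a] = q' ++ [a, z, a] := by simp
        have e4 : q' ++ [z, a] = (q' ++ [z]) ++ [a] := by simp
        rw [e1, ← e4]
        have s1 : LK E ((a :: q') ++ [z, a]) ((a :: q') ++ [a, z, a]) :=
          LK.appL _ (LK.aza hza h2).symm
        have s2 : LK E ((a :: (q' ++ [a])) ++ [z, a]) ((q' ++ [a]) ++ [z, a]) := ih.appR [z, a]
        have s3 : LK E (q' ++ [a, z, a]) (q' ++ [z, a]) := LK.appL _ (LK.aza hza h2)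
        exact s1.trans (e2 ▸ (s2.trans (e3 ▸ s3)))
      · -- z ≠ a, no edges either way
        have h2 : ¬ E a z := hsink z
        have e1 : a :: ((q' ++ [z]) ++ [a]) = (a :: q') ++ [z, a] := by simp
        have e2 : (a :: q') ++ [a, z] = (a :: (q' ++ [a])) ++ [z] := by simp
        have e3 : (q' ++ [a]) ++ [z] = q' ++ [a, z] := by simp
        have e4 : q' ++ [z, a] = (q' ++ [z]) ++ [a] := by simp
        rw [e1, ← e4]
        have s1 : LK E ((a :: q') ++ [z, a]) ((a :: q') ++ [a, z]) :=
          LK.appL _ (LK.comm hz hza h2)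
        have s2 : LK E ((a :: (q' ++ [a])) ++ [z]) ((q' ++ [a]) ++ [z]) := ih.appR [z]
        have s3 : LK E (q' ++ [a, z]) (q' ++ [z, a]) :=
          LK.appL _ (LK.comm hz hza h2).symm
        exact s1.trans (e2 ▸ (s2.trans (e3 ▸ s3)))
lemma sink_single : ∀ (w : List V), a ∈ w → ∃ u v : List V, a ∉ u ∧ a ∉ v ∧ LK E w (u ++ a :: v) := by
  intro w
  induction w with
  | nil => simp
  | cons x w' ih =>
    intro hmem
    by_cases hx : x = a
    · by_cases hw : a ∈ w'
      · obtain ⟨u, v, hu, hv, h⟩ := ih hw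
        refine ⟨u, v, hu, hv, ?_⟩
        rw [hx]
        have s1 : LK E (a :: w') (a :: (u ++ a :: v)) := LK.appL [a] h
        have e1 : a :: (u ++ a :: v) = (a :: (u ++ [a])) ++ v := by simp
        have s2 : LK E ((a :: (u ++ [a])) ++ v) ((u ++ [a]) ++ v) := (sink_aqa hsink u).appR v
        have e2 : (u ++ [a]) ++ v = u ++ a :: v := by simp
        exact s1.trans (e1 ▸ (e2 ▸ s2))
      · exact ⟨[], w', by simp, hw, by rw [hx]; exact LK.refl _⟩
    · have hw : a ∈ w' := by
        rcases List.mem_cons.1 hmem with h | h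
        · exact absurd h.symm hx
        · exact h
      obtain ⟨u, v, hu, hv, h⟩ := ih hw
      refine ⟨x :: u, v, ?_, hv, ?_⟩
      · simp only [List.mem_cons, not_or]
        exact ⟨fun hh => hx hh.symm, hu⟩
      · exact (LK.appL [x] h : LK E ([x] ++ w') ([x] ++ (u ++ a :: v)))

end Sink

section Comm

lemma move_right {x : V} : ∀ {u : List V},
    (∀ y ∈ u, y ≠ x ∧ ¬ E x y ∧ ¬ E y x) → LK E (x :: u) (u ++ [x]) := by
  intro u
  induction u with
  | nil => exact fun _ => LK.refl [x]
  | cons y u' ih =>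
    intro h
    obtain ⟨hne, h1, h2⟩ := h y (List.mem_cons_self)
    have s1 : LK E ([x, y] ++ u') ([y, x] ++ u') :=
      (LK.comm (fun hh => hne hh.symm) h1 h2).appR u'
    have s2 : LK E ([y] ++ (x :: u')) ([y] ++ (u' ++ [x])) :=
      LK.appL [y] (ih (fun z hz => h z (List.mem_cons_of_mem y hz)))
    exact (s1.trans s2 : LK E (x :: y :: u') (y :: u' ++ [x]))

lemma blocks_comm : ∀ (v : List V) (u : List V),
    (∀ x ∈ v, ∀ y ∈ u, y ≠ x ∧ ¬ E x y ∧ ¬ E y x) → LK E (u ++ v) (v ++ u) := by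
  intro v
  induction v with
  | nil => intro u _; simp; exact LK.refl u
  | cons x v' ih =>
    intro u h
    have hx := fun y hy => h x (List.mem_cons_self) y hy
    have s1 : LK E ((x :: u) ++ v') ((u ++ [x]) ++ v') := (move_right hx).appR v'
    have e1 : (u ++ [x]) ++ v' = u ++ (x :: v') := by simp
    have s2 : LK E ([x] ++ (u ++ v')) ([x] ++ (v' ++ u)) :=
      LK.appL [x] (ih u (fun z hz y hy => h z (List.mem_cons_of_mem x hz) y hy))
    exact (e1 ▸ s1).symm.trans (s2 : LK E (x :: (u ++ v')) (x :: (v' ++ u)))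

lemma sort {A : Set V} [DecidablePred (· ∈ A)] :
    ∀ (w : List V), (∀ x ∈ w, ∀ y ∈ w, x ∉ A → y ∈ A → y ≠ x ∧ ¬ E x y ∧ ¬ E y x) →
    LK E w (w.filter (fun v => decide (v ∈ A)) ++ w.filter (fun v => decide (v ∉ A))) := by
  intro w
  induction w with
  | nil => exact fun _ => LK.refl []
  | cons x w' ih =>
    intro hcomm
    have ih := ih (fun p hp q hq => hcomm p (List.mem_cons_of_mem x hp) q (List.mem_cons_of_mem x hq))
    by_cases hxA : x ∈ A
    · have e1 : (x :: w').filter (fun v => decide (v ∈ A)) =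
        x :: w'.filter (fun v => decide (v ∈ A)) := by
        simp [List.filter_cons, hxA]
      have e2 : (x :: w').filter (fun v => decide (v ∉ A)) =
        w'.filter (fun v => decide (v ∉ A)) := by
        simp [List.filter_cons, hxA]
      rw [e1, e2]
      exact (LK.appL [x] ih : LK E (x :: w') (x :: _))
    · have e1 : (x :: w').filter (fun v => decide (v ∈ A)) =
        w'.filter (fun v => decide (v ∈ A)) := by
        simp [List.filter_cons, hxA]
      have e2 : (x :: w').filter (fun v => decide (v ∉ A)) =
        x :: w'.filter (fun v => decide (v ∉ A)) := by
        simp [List.filter_cons, hxA]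
      rw [e1, e2]
      have s1 : LK E (x :: w') (x :: (w'.filter (fun v => decide (v ∈ A)) ++
          w'.filter (fun v => decide (v ∉ A)))) := LK.appL [x] ih
      have hmr : ∀ y ∈ w'.filter (fun v => decide (v ∈ A)), y ≠ x ∧ ¬ E x y ∧ ¬ E y x := by
        intro y hy
        have hyA : y ∈ A := by
          have := List.of_mem_filter hy
          simpa using this
        exact hcomm x (List.mem_cons_self) y (List.mem_cons_of_mem x (List.mem_of_mem_filter hy)) hxA hyA
      have s2 : LK E (x :: w'.filter (fun v => decide (v ∈ A)))
          (w'.filter (fun v => decide (v ∈ A)) ++ [x]) := move_right hmr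
      have s3 := s2.appR (w'.filter (fun v => decide (v ∉ A)))
      have e3 : (w'.filter (fun v => decide (v ∈ A)) ++ [x]) ++
          w'.filter (fun v => decide (v ∉ A)) =
          w'.filter (fun v => decide (v ∈ A)) ++ x :: w'.filter (fun v => decide (v ∉ A)) := by
        simp
      have e4 : x :: (w'.filter (fun v => decide (v ∈ A)) ++ w'.filter (fun v => decide (v ∉ A)))
          = (x :: w'.filter (fun v => decide (v ∈ A))) ++ w'.filter (fun v => decide (v ∉ A)) := by
        simp
      exact s1.trans (e4 ▸ e3 ▸ s3)

end Comm

section Content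

def contentCon (V : Type*) : Con (FreeMonoid V) where
  r x y := ∀ v : V, v ∈ FreeMonoid.toList x ↔ v ∈ FreeMonoid.toList y
  iseqv := ⟨fun _ _ => Iff.rfl, fun h v => (h v).symm, fun h h' v => (h v).trans (h' v)⟩
  mul' := fun h h' v => by
    simp only [FreeMonoid.toList_mul, List.mem_append]
    rw [h v, h' v]

lemma content_invariant {w w' : FreeMonoid V} (h : HKCon E w w') :
    ∀ v, v ∈ toList w ↔ v ∈ toList w' := by
  refine (Con.conGen_le (c := contentCon V)).2 ?_ h
  rintro x y (⟨p, rfl, rfl⟩ | ⟨p, q, _, _, _, rfl, rfl⟩ | ⟨p, q, _, _, rfl, rfl⟩ |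
    ⟨p, q, _, _, rfl, rfl⟩ | ⟨p, q, _, _, rfl, rfl⟩) <;>
    · intro v
      show v ∈ FreeMonoid.toList _ ↔ v ∈ FreeMonoid.toList _
      simp only [toList_mul, toList_of, List.mem_append, List.mem_singleton]
      tauto

lemma mk_eq_iff {l m : List V} : HKmk E (ofList l) = HKmk E (ofList m) ↔ LK E l m :=
  Con.eq (HKCon E)

lemma HKmk_eq_of_LK {l m : List V} (h : LK E l m) : HKmk E (ofList l) = HKmk E (ofList m) :=
  mk_eq_iff.2 h

lemma elemContent_mk (l : List V) : elemContent E (HKmk E (ofList l)) = {v | v ∈ l} := by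
  ext v
  constructor
  · rintro ⟨w, hw, hv⟩
    have : HKCon E w (ofList l) := (Con.eq (HKCon E)).1 hw
    exact (content_invariant this v).1 hv
  · intro hv
    exact ⟨ofList l, rfl, hv⟩

end Content

section GenRel

variable (E)

lemma gen_idem (p : V) : HKmk E (of p) * HKmk E (of p) = HKmk E (of p) := by
  rw [← map_mul]
  exact HKmk_eq_of_LK (LK.idem p)

lemma gen_comm {p q : V} (hne : p ≠ q) (h1 : ¬ E p q) (h2 : ¬ E q p) :
    HKmk E (of p) * HKmk E (of q) = HKmk E (of q) * HKmk E (of p) := by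
  simp only [← map_mul]
  exact HKmk_eq_of_LK (LK.comm hne h1 h2)

lemma gen_braid {p q : V} (h1 : E p q) (h2 : ¬ E q p) :
    HKmk E (of p) * HKmk E (of q) * HKmk E (of p) =
      HKmk E (of q) * HKmk E (of p) * HKmk E (of q) := by
  simp only [← map_mul]
  exact HKmk_eq_of_LK (LK.braid h1 h2)

lemma gen_absorb {p q : V} (h1 : E p q) (h2 : ¬ E q p) :
    HKmk E (of p) * HKmk E (of q) * HKmk E (of p) = HKmk E (of p) * HKmk E (of q) := by
  simp only [← map_mul]
  exact HKmk_eq_of_LK (LK.absorb h1 h2)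

lemma gen_braid5 {p q : V} (h1 : E p q) (h2 : E q p) :
    HKmk E (of p) * HKmk E (of q) * HKmk E (of p) =
      HKmk E (of q) * HKmk E (of p) * HKmk E (of q) := by
  simp only [← map_mul]
  exact HKmk_eq_of_LK (ConGen.Rel.of _ _ (Or.inr (Or.inr (Or.inr (Or.inr ⟨p, q, h1, h2, rfl, rfl⟩)))) :
    LK E [p, q, p] [q, p, q])

end GenRel

section Maps

variable (E)

/-- The restriction of the edge relation to a subset. -/
abbrev resE (A : Set V) : A → A → Prop := fun u v : A => E u.1 v.1

variable (A : Set V)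

/-- Generator images for the projection. -/
noncomputable def gA : V → HK (resE E A) := fun v =>
  @dite _ (v ∈ A) (Classical.propDecidable _)
    (fun h => HKmk (resE E A) (of (⟨v, h⟩ : A))) (fun _ => 1)

lemma gA_mem {v : V} (h : v ∈ A) : gA E A v = HKmk (resE E A) (of (⟨v, h⟩ : A)) := by
  unfold gA; rw [dif_pos h]
lemma gA_not_mem {v : V} (h : v ∉ A) : gA E A v = 1 := by
  unfold gA; rw [dif_neg h]

lemma proj_compat (hbidir : ∀ x y, ¬ (E x y ∧ E y x)) :
    HKCon E ≤ Con.ker (FreeMonoid.lift (gA E A)) := by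
  refine Con.conGen_le.2 ?_
  rintro x y (⟨p, rfl, rfl⟩ | ⟨p, q, hne, h1, h2, rfl, rfl⟩ | ⟨p, q, h1, h2, rfl, rfl⟩ |
    ⟨p, q, h1, h2, rfl, rfl⟩ | ⟨p, q, h1, h2, rfl, rfl⟩) <;>
    refine Con.ker_rel _ |>.2 ?_ <;>
    simp only [map_mul, FreeMonoid.lift_eval_of]
  · by_cases hp : p ∈ A
    · rw [gA_mem E A hp]; exact gen_idem _ _
    · rw [gA_not_mem E A hp]; simp
  · by_cases hp : p ∈ A <;> by_cases hq : q ∈ A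
    · rw [gA_mem E A hp, gA_mem E A hq]
      exact gen_comm _ (fun hh => hne (congrArg Subtype.val hh)) h1 h2
    · rw [gA_not_mem E A hq]; simp
    · rw [gA_not_mem E A hp]; simp
    · rw [gA_not_mem E A hp, gA_not_mem E A hq]
  · by_cases hp : p ∈ A <;> by_cases hq : q ∈ A
    · rw [gA_mem E A hp, gA_mem E A hq]; exact gen_braid _ h1 h2
    · rw [gA_mem E A hp, gA_not_mem E A hq]
      simp only [one_mul, mul_one]
      exact gen_idem _ _
    · rw [gA_not_mem E A hp, gA_mem E A hq]
      simp only [one_mul, mul_one]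
      exact (gen_idem _ _).symm
    · rw [gA_not_mem E A hp, gA_not_mem E A hq]
  · by_cases hp : p ∈ A <;> by_cases hq : q ∈ A
    · rw [gA_mem E A hp, gA_mem E A hq]; exact gen_absorb _ h1 h2
    · rw [gA_mem E A hp, gA_not_mem E A hq]
      simp only [one_mul, mul_one]
      exact gen_idem _ _
    · rw [gA_not_mem E A hp, gA_mem E A hq]
      simp only [one_mul, mul_one]
    · rw [gA_not_mem E A hp, gA_not_mem E A hq]
      simp only [one_mul, mul_one]
  · exact absurd ⟨h1, h2⟩ (hbidir p q)

/-- Projection onto the Hecke-Kiselman monoid of an induced subgraph. -/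
noncomputable def projHom (hbidir : ∀ x y, ¬ (E x y ∧ E y x)) : HK E →* HK (resE E A) :=
  Con.lift _ (FreeMonoid.lift (gA E A)) (proj_compat E A hbidir)

lemma projHom_mk (hbidir : ∀ x y, ¬ (E x y ∧ E y x)) (w : FreeMonoid V) :
    projHom E A hbidir (HKmk E w) = FreeMonoid.lift (gA E A) w :=
  Con.lift_mk' _ _

lemma incl_compat : HKCon (resE E A) ≤ Con.ker (FreeMonoid.lift (fun s : A => HKmk E (of s.1))) := by
  refine Con.conGen_le.2 ?_
  rintro x y (⟨p, rfl, rfl⟩ | ⟨p, q, hne, h1, h2, rfl, rfl⟩ | ⟨p, q, h1, h2, rfl, rfl⟩ |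
    ⟨p, q, h1, h2, rfl, rfl⟩ | ⟨p, q, h1, h2, rfl, rfl⟩) <;>
    refine Con.ker_rel _ |>.2 ?_ <;>
    simp only [map_mul, FreeMonoid.lift_eval_of]
  · exact gen_idem _ _
  · exact gen_comm _ (fun hh => hne (Subtype.ext hh)) h1 h2
  · exact gen_braid _ h1 h2
  · exact gen_absorb _ h1 h2
  · exact gen_braid5 _ h1 h2

/-- Inclusion of the Hecke-Kiselman monoid of an induced subgraph. -/
noncomputable def inclHom : HK (resE E A) →* HK E :=
  Con.lift _ (FreeMonoid.lift (fun s : A => HKmk E (of s.1))) (incl_compat E A)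

lemma inclHom_mk (l : List A) :
    inclHom E A (HKmk (resE E A) (ofList l)) = HKmk E (ofList (l.map Subtype.val)) := by
  induction l with
  | nil =>
    show inclHom E A (HKmk _ 1) = HKmk E 1
    simp [map_one]
  | cons s l ih =>
    have e1 : (ofList (s :: l) : FreeMonoid A) = of s * ofList l := rfl
    have e2 : (ofList (s.1 :: l.map Subtype.val) : FreeMonoid V) = of s.1 * ofList (l.map Subtype.val) := rfl
    have hof : inclHom E A (HKmk _ (of s)) = HKmk E (of s.1) := by
      have h2 : inclHom E A (HKmk _ (of s)) = FreeMonoid.lift (fun s : A => HKmk E (of s.1)) (of s) :=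
        Con.lift_mk' _ _
      rw [h2, FreeMonoid.lift_eval_of]
    rw [e1, map_mul, List.map_cons, e2, map_mul, hof, ih]
    exact (map_mul _ _ _).symm

section FA
variable (A : Set V)

/-- Project a word over `V` to a word over the subtype `A`, dropping letters outside `A`. -/
noncomputable def FAw (w : List V) : List A :=
  w.filterMap (fun v => @dite _ (v ∈ A) (Classical.propDecidable _)
    (fun h => some (⟨v, h⟩ : A)) (fun _ => none))

@[simp] lemma FAw_nil : FAw A ([] : List V) = [] := rfl

lemma FAw_cons_mem {v : V} (h : v ∈ A) (w : List V) :
    FAw A (v :: w) = (⟨v, h⟩ : A) :: FAw A w := by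
  unfold FAw
  rw [List.filterMap_cons, dif_pos h]

lemma FAw_cons_not_mem {v : V} (h : v ∉ A) (w : List V) : FAw A (v :: w) = FAw A w := by
  unfold FAw
  rw [List.filterMap_cons, dif_neg h]

lemma FAw_append (w w' : List V) : FAw A (w ++ w') = FAw A w ++ FAw A w' :=
  List.filterMap_append

lemma mem_FAw {s : A} : ∀ {w : List V}, s ∈ FAw A w ↔ s.1 ∈ w := by
  intro w
  induction w with
  | nil => simp
  | cons v w ih =>
    by_cases h : v ∈ A
    · rw [FAw_cons_mem A h]
      simp only [List.mem_cons, ih, Subtype.ext_iff]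
    · rw [FAw_cons_not_mem A h]
      simp only [List.mem_cons, ih]
      constructor
      · exact Or.inr
      · rintro (hh | hh)
        · exact absurd (hh ▸ s.2) h
        · exact hh

lemma FAw_map_val : ∀ (l : List A), FAw A (l.map Subtype.val) = l := by
  intro l
  induction l with
  | nil => rfl
  | cons s l ih =>
    rw [List.map_cons, FAw_cons_mem A s.2, ih, Subtype.coe_eta]

lemma FAw_eq_nil {w : List V} (h : ∀ v ∈ w, v ∉ A) : FAw A w = [] := by
  induction w with
  | nil => rfl
  | cons v w ih =>
    rw [FAw_cons_not_mem A (h v (List.mem_cons_self))]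
    exact ih (fun z hz => h z (List.mem_cons_of_mem v hz))

lemma lift_gA_ofList : ∀ (w : List V),
    FreeMonoid.lift (gA E A) (ofList w) = HKmk (resE E A) (ofList (FAw A w)) := by
  intro w
  induction w with
  | nil => simp [ofList_nil, map_one]
  | cons v w ih =>
    rw [ofList_cons, map_mul, FreeMonoid.lift_eval_of, ih]
    by_cases h : v ∈ A
    · rw [gA_mem E A h, FAw_cons_mem A h, ofList_cons, map_mul]
    · rw [gA_not_mem E A h, FAw_cons_not_mem A h, one_mul]

lemma projHom_mk_list (hbidir : ∀ x y, ¬ (E x y ∧ E y x)) (w : List V) :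
    projHom E A hbidir (HKmk E (ofList w)) = HKmk (resE E A) (ofList (FAw A w)) := by
  rw [projHom_mk, lift_gA_ofList]

end FA

lemma map_val_FAw {A : Set V} : ∀ {w : List V}, (∀ v ∈ w, v ∈ A) → (FAw A w).map Subtype.val = w := by
  intro w
  induction w with
  | nil => intro _; rfl
  | cons v w ih =>
    intro h
    rw [FAw_cons_mem A (h v (List.mem_cons_self)), List.map_cons,
      ih (fun z hz => h z (List.mem_cons_of_mem v hz))]

end Maps

lemma LK.cast {E : V → V → Prop} {l l' m m' : List V} (h : LK E l m) (el : l = l') (em : m = m') :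
    LK E l' m' := el ▸ em ▸ h

section TwoBlock

variable (E : V → V → Prop) (A B : Set V) (a : V)
variable (hbidir : ∀ x y, ¬ (E x y ∧ E y x))
variable (haA : a ∈ A) (haB : a ∈ B)
variable (hcov : ∀ v : V, v ∈ A ∨ v ∈ B)
variable (hAB : A ∩ B = {a})
variable (hedge : ∀ x y, E x y → (x ∈ A ∧ y ∈ A) ∨ (x ∈ B ∧ y ∈ B))
variable (hsink : ∀ z, ¬ E a z)

section core

include hAB hedge in
lemma cross {x y : V} (hx : x ∈ A) (hxa : x ≠ a) (hy : y ∈ B) (hya : y ≠ a) :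
    x ≠ y ∧ ¬ E x y ∧ ¬ E y x := by
  refine ⟨?_, ?_, ?_⟩
  · intro hh
    exact hya (by rw [← hh] at hy; have : x ∈ A ∩ B := ⟨hx, hy⟩; rw [hAB] at this; exact hh ▸ this)
  · intro hE
    rcases hedge _ _ hE with ⟨_, h2⟩ | ⟨h1, _⟩
    · exact hya (by have : y ∈ A ∩ B := ⟨h2, hy⟩; rw [hAB] at this; exact this)
    · exact hxa (by have : x ∈ A ∩ B := ⟨hx, h1⟩; rw [hAB] at this; exact this)
  · intro hE
    rcases hedge _ _ hE with ⟨h1, _⟩ | ⟨_, h2⟩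
    · exact hya (by have : y ∈ A ∩ B := ⟨h1, hy⟩; rw [hAB] at this; exact this)
    · exact hxa (by have : x ∈ A ∩ B := ⟨hx, h2⟩; rw [hAB] at this; exact this)

include haA haB hcov hAB hedge hsink in
lemma normal_form {l : List V} (hl : a ∈ l) :
    ∃ uA uB vA vB : List V,
      (∀ x ∈ uA, x ∈ A ∧ x ≠ a) ∧ (∀ x ∈ uB, x ∈ B ∧ x ∉ A ∧ x ≠ a) ∧
      (∀ x ∈ vA, x ∈ A ∧ x ≠ a) ∧ (∀ x ∈ vB, x ∈ B ∧ x ∉ A ∧ x ≠ a) ∧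
      LK E l (uA ++ (uB ++ (a :: (vA ++ vB)))) := by
  classical
  obtain ⟨u, v, hu, hv, h1⟩ := sink_single hsink l hl
  have hsort : ∀ (w : List V), a ∉ w →
      (∀ x ∈ w, ∀ y ∈ w, x ∉ A → y ∈ A → y ≠ x ∧ ¬ E x y ∧ ¬ E y x) := by
    intro w hw x hx y hy hxA hyA
    have hxB : x ∈ B := (hcov x).resolve_left hxA
    have hxa : x ≠ a := fun hh => hxA (hh ▸ haA)
    have hya : y ≠ a := fun hh => hw (hh ▸ hy)
    obtain ⟨hne, h1', h2'⟩ := cross E A B a hAB hedge hyA hya hxB hxa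
    exact ⟨hne, h2', h1'⟩
  have h2 : LK E u (u.filter (fun z => decide (z ∈ A)) ++ u.filter (fun z => decide (z ∉ A))) :=
    sort u (hsort u hu)
  have h3 : LK E v (v.filter (fun z => decide (z ∈ A)) ++ v.filter (fun z => decide (z ∉ A))) :=
    sort v (hsort v hv)
  refine ⟨u.filter (fun z => decide (z ∈ A)), u.filter (fun z => decide (z ∉ A)),
    v.filter (fun z => decide (z ∈ A)), v.filter (fun z => decide (z ∉ A)), ?_, ?_, ?_, ?_, ?_⟩
  · intro x hx
    have hxw := List.mem_of_mem_filter hx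
    have hxA : x ∈ A := by simpa using List.of_mem_filter hx
    exact ⟨hxA, fun hh => hu (hh ▸ hxw)⟩
  · intro x hx
    have hxw := List.mem_of_mem_filter hx
    have hxA : x ∉ A := by simpa using List.of_mem_filter hx
    exact ⟨(hcov x).resolve_left hxA, hxA, fun hh => hu (hh ▸ hxw)⟩
  · intro x hx
    have hxw := List.mem_of_mem_filter hx
    have hxA : x ∈ A := by simpa using List.of_mem_filter hx
    exact ⟨hxA, fun hh => hv (hh ▸ hxw)⟩
  · intro x hx
    have hxw := List.mem_of_mem_filter hx
    have hxA : x ∉ A := by simpa using List.of_mem_filter hx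
    exact ⟨(hcov x).resolve_left hxA, hxA, fun hh => hv (hh ▸ hxw)⟩
  · have step : LK E (u ++ (a :: v))
        ((u.filter (fun z => decide (z ∈ A)) ++ u.filter (fun z => decide (z ∉ A))) ++
          (a :: (v.filter (fun z => decide (z ∈ A)) ++ v.filter (fun z => decide (z ∉ A))))) :=
      h2.append ((LK.refl [a]).append h3)
    exact (h1.trans step).cast rfl (by simp)

include haA in
lemma proj_normal {S : Set V} (haS : a ∈ S) {p q r t : List V}
    (Hp : ∀ x ∈ p, x ∈ S) (Hq : ∀ x ∈ q, x ∉ S) (Hr : ∀ x ∈ r, x ∈ S) (Ht : ∀ x ∈ t, x ∉ S) :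
    projHom E S hbidir (HKmk E (ofList (p ++ (q ++ (a :: (r ++ t)))))) =
      HKmk (resE E S) (ofList (FAw S p ++ ((⟨a, haS⟩ : S) :: FAw S r))) := by
  rw [projHom_mk_list]
  have e : FAw S (p ++ (q ++ (a :: (r ++ t)))) = FAw S p ++ ((⟨a, haS⟩ : S) :: FAw S r) := by
    rw [show (a :: (r ++ t) : List V) = [a] ++ (r ++ t) from rfl]
    rw [FAw_append, FAw_append, FAw_append, FAw_append, FAw_eq_nil S Hq, FAw_eq_nil S Ht,
      FAw_cons_mem S haS ([] : List V)]
    simp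
  rw [e]

include haA in
lemma proj_normal' {S : Set V} (haS : a ∈ S) {p q r t : List V}
    (Hp : ∀ x ∈ p, x ∉ S) (Hq : ∀ x ∈ q, x ∈ S) (Hr : ∀ x ∈ r, x ∉ S) (Ht : ∀ x ∈ t, x ∈ S) :
    projHom E S hbidir (HKmk E (ofList (p ++ (q ++ (a :: (r ++ t)))))) =
      HKmk (resE E S) (ofList (FAw S q ++ ((⟨a, haS⟩ : S) :: FAw S t))) := by
  rw [projHom_mk_list]
  have e : FAw S (p ++ (q ++ (a :: (r ++ t)))) = FAw S q ++ ((⟨a, haS⟩ : S) :: FAw S t) := by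
    rw [show (a :: (r ++ t) : List V) = [a] ++ (r ++ t) from rfl]
    rw [FAw_append, FAw_append, FAw_append, FAw_append, FAw_eq_nil S Hp, FAw_eq_nil S Hr,
      FAw_cons_mem S haS ([] : List V)]
    simp
  rw [e]

lemma proj_eq_LK {S : Set V} {m m' : List S}
    (h : HKmk (resE E S) (ofList m) = HKmk (resE E S) (ofList m')) :
    LK E (m.map Subtype.val) (m'.map Subtype.val) := by
  have := congrArg (inclHom E S) h
  rw [inclHom_mk, inclHom_mk] at this
  exact mk_eq_iff.1 this

include hAB hedge in
lemma swapAB {P Q : List V} (HP : ∀ x ∈ P, x ∈ A ∧ x ≠ a) (HQ : ∀ x ∈ Q, x ∈ B ∧ x ≠ a) :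
    LK E (P ++ Q) (Q ++ P) := by
  refine blocks_comm Q P ?_
  intro x hx y hy
  obtain ⟨h1, h2, h3⟩ := cross E A B a hAB hedge (HP y hy).1 (HP y hy).2 (HQ x hx).1 (HQ x hx).2
  exact ⟨h1, h3, h2⟩

include hAB hedge in
lemma swapBA {P Q : List V} (HP : ∀ x ∈ P, x ∈ A ∧ x ≠ a) (HQ : ∀ x ∈ Q, x ∈ B ∧ x ≠ a) :
    LK E (Q ++ P) (P ++ Q) := by
  refine blocks_comm P Q ?_
  intro x hx y hy
  obtain ⟨h1, h2, h3⟩ := cross E A B a hAB hedge (HP x hx).1 (HP x hx).2 (HQ y hy).1 (HQ y hy).2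
  exact ⟨h1.symm, h2, h3⟩

include haA haB hcov hAB hedge hsink in
lemma twoblock_inj {x y : HK E}
    (hx : elemContent E x = Set.univ) (hy : elemContent E y = Set.univ)
    (hpA : projHom E A hbidir x = projHom E A hbidir y)
    (hpB : projHom E B hbidir x = projHom E B hbidir y) : x = y := by
  obtain ⟨wx, rfl⟩ := (HKCon E).mk'_surjective x
  obtain ⟨wy, rfl⟩ := (HKCon E).mk'_surjective y
  have hx' : ∀ v : V, v ∈ toList wx := by
    intro v
    have := (elemContent_mk (E := E) (toList wx)).symm.trans hx
    exact (Set.eq_univ_iff_forall.1 this) v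
  have hy' : ∀ v : V, v ∈ toList wy := by
    intro v
    have := (elemContent_mk (E := E) (toList wy)).symm.trans hy
    exact (Set.eq_univ_iff_forall.1 this) v
  obtain ⟨uA, uB, vA, vB, HuA, HuB, HvA, HvB, hnx⟩ :=
    normal_form E A B a haA haB hcov hAB hedge hsink (hx' a)
  obtain ⟨uA', uB', vA', vB', HuA', HuB', HvA', HvB', hny⟩ :=
    normal_form E A B a haA haB hcov hAB hedge hsink (hy' a)
  -- x, y as normal forms
  have ex : ((HKCon E).mk' wx : HK E) = HKmk E (ofList (uA ++ (uB ++ (a :: (vA ++ vB))))) :=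
    HKmk_eq_of_LK hnx
  have ey : ((HKCon E).mk' wy : HK E) = HKmk E (ofList (uA' ++ (uB' ++ (a :: (vA' ++ vB'))))) :=
    HKmk_eq_of_LK hny
  -- A-projections
  have pA : HKmk (resE E A) (ofList (FAw A uA ++ ((⟨a, haA⟩ : A) :: FAw A vA))) =
      HKmk (resE E A) (ofList (FAw A uA' ++ ((⟨a, haA⟩ : A) :: FAw A vA'))) := by
    have h1 := proj_normal E A a hbidir haA haA (fun x hx => (HuA x hx).1)
      (fun x hx => (HuB x hx).2.1) (fun x hx => (HvA x hx).1) (fun x hx => (HvB x hx).2.1)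
    have h2 := proj_normal E A a hbidir haA haA (fun x hx => (HuA' x hx).1)
      (fun x hx => (HuB' x hx).2.1) (fun x hx => (HvA' x hx).1) (fun x hx => (HvB' x hx).2.1)
    rw [← h1, ← h2, ← ex, ← ey]
    exact hpA
  have pB : HKmk (resE E B) (ofList (FAw B uB ++ ((⟨a, haB⟩ : B) :: FAw B vB))) =
      HKmk (resE E B) (ofList (FAw B uB' ++ ((⟨a, haB⟩ : B) :: FAw B vB'))) := by
    have hnotB : ∀ (P : List V), (∀ x ∈ P, x ∈ A ∧ x ≠ a) → ∀ x ∈ P, x ∉ B := by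
      intro P HP x hxP hxB
      have : x ∈ A ∩ B := ⟨(HP x hxP).1, hxB⟩
      rw [hAB] at this
      exact (HP x hxP).2 this
    have h1 := proj_normal' E A a hbidir haA haB (hnotB uA HuA)
      (fun x hx => (HuB x hx).1) (hnotB vA HvA) (fun x hx => (HvB x hx).1)
    have h2 := proj_normal' E A a hbidir haA haB (hnotB uA' HuA')
      (fun x hx => (HuB' x hx).1) (hnotB vA' HvA') (fun x hx => (HvB' x hx).1)
    rw [← h1, ← h2, ← ex, ← ey]
    exact hpB
  -- convert to LK over V
  have HA : LK E (uA ++ (a :: vA)) (uA' ++ (a :: vA')) := by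
    have := proj_eq_LK E pA
    rw [List.map_append, List.map_append, List.map_cons, List.map_cons,
      map_val_FAw (fun x hx => (HuA x hx).1), map_val_FAw (fun x hx => (HvA x hx).1),
      map_val_FAw (fun x hx => (HuA' x hx).1), map_val_FAw (fun x hx => (HvA' x hx).1)] at this
    exact this
  have HB : LK E (uB ++ (a :: vB)) (uB' ++ (a :: vB')) := by
    have := proj_eq_LK E pB
    rw [List.map_append, List.map_append, List.map_cons, List.map_cons,
      map_val_FAw (fun x hx => (HuB x hx).1), map_val_FAw (fun x hx => (HvB x hx).1),
      map_val_FAw (fun x hx => (HuB' x hx).1), map_val_FAw (fun x hx => (HvB' x hx).1)] at this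
    exact this
  -- chain
  have HuB2 : ∀ x ∈ uB, x ∈ B ∧ x ≠ a := fun x hx => ⟨(HuB x hx).1, (HuB x hx).2.2⟩
  have HuB2' : ∀ x ∈ uB', x ∈ B ∧ x ≠ a := fun x hx => ⟨(HuB' x hx).1, (HuB' x hx).2.2⟩
  have HvB2 : ∀ x ∈ vB, x ∈ B ∧ x ≠ a := fun x hx => ⟨(HvB x hx).1, (HvB x hx).2.2⟩
  have HvB2' : ∀ x ∈ vB', x ∈ B ∧ x ≠ a := fun x hx => ⟨(HvB' x hx).1, (HvB' x hx).2.2⟩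
  have S1 : LK E (uA ++ (uB ++ (a :: (vA ++ vB)))) (uB ++ (uA ++ (a :: (vA ++ vB)))) :=
    ((swapAB E A B a hAB hedge HuA HuB2).appR (a :: (vA ++ vB))).cast (by simp) (by simp)
  have S2 : LK E (uB ++ (uA ++ (a :: (vA ++ vB)))) (uB ++ (uA' ++ (a :: (vA' ++ vB)))) :=
    (LK.appL uB ((HA.appR vB).cast (by simp) (by simp)))
  have S3 : LK E (uB ++ (uA' ++ (a :: (vA' ++ vB)))) (uA' ++ (uB ++ (a :: (vA' ++ vB)))) :=
    ((swapBA E A B a hAB hedge HuA' HuB2).appR (a :: (vA' ++ vB))).cast (by simp) (by simp)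
  have S4 : LK E (uA' ++ (uB ++ (a :: (vA' ++ vB)))) (uA' ++ (uB ++ (a :: (vB ++ vA')))) :=
    (LK.appL (uA' ++ (uB ++ [a])) (swapAB E A B a hAB hedge HvA' HvB2)).cast
      (by simp) (by simp)
  have S5 : LK E (uA' ++ (uB ++ (a :: (vB ++ vA')))) (uA' ++ (uB' ++ (a :: (vB' ++ vA')))) :=
    (LK.appL uA' ((HB.appR vA').cast (by simp) (by simp)))
  have S6 : LK E (uA' ++ (uB' ++ (a :: (vB' ++ vA')))) (uA' ++ (uB' ++ (a :: (vA' ++ vB')))) :=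
    (LK.appL (uA' ++ (uB' ++ [a])) (swapBA E A B a hAB hedge HvA' HvB2')).cast
      (by simp) (by simp)
  have : LK E (uA ++ (uB ++ (a :: (vA ++ vB)))) (uA' ++ (uB' ++ (a :: (vA' ++ vB')))) :=
    ((((S1.trans S2).trans S3).trans S4).trans S5).trans S6
  rw [ex, ey]
  exact HKmk_eq_of_LK this

include hbidir in
lemma proj_max {S : Set V} {x : HK E} (hx : elemContent E x = Set.univ) :
    elemContent (resE E S) (projHom E S hbidir x) = Set.univ := by
  obtain ⟨w, rfl⟩ := (HKCon E).mk'_surjective x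
  have hx' : ∀ v : V, v ∈ toList w := by
    intro v
    have := (elemContent_mk (E := E) (toList w)).symm.trans hx
    exact (Set.eq_univ_iff_forall.1 this) v
  have : ((HKCon E).mk' w : HK E) = HKmk E (ofList (toList w)) := rfl
  rw [this, projHom_mk_list, elemContent_mk]
  apply Set.eq_univ_iff_forall.2
  intro s
  exact (mem_FAw S).2 (hx' s.1)

include haA haB hcov hAB hedge hsink in
lemma twoblock_surj (x₁ : HK (resE E A)) (x₂ : HK (resE E B))
    (h₁ : elemContent (resE E A) x₁ = Set.univ) (h₂ : elemContent (resE E B) x₂ = Set.univ) :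
    ∃ x : HK E, elemContent E x = Set.univ ∧
      projHom E A hbidir x = x₁ ∧ projHom E B hbidir x = x₂ := by
  obtain ⟨m₁, rfl⟩ := (HKCon (resE E A)).mk'_surjective x₁
  obtain ⟨m₂, rfl⟩ := (HKCon (resE E B)).mk'_surjective x₂
  have h₁' : ∀ s : A, s ∈ toList m₁ := by
    intro s
    have := (elemContent_mk (E := resE E A) (toList m₁)).symm.trans h₁
    exact (Set.eq_univ_iff_forall.1 this) s
  have h₂' : ∀ s : B, s ∈ toList m₂ := by
    intro s
    have := (elemContent_mk (E := resE E B) (toList m₂)).symm.trans h₂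
    exact (Set.eq_univ_iff_forall.1 this) s
  have hsinkA : ∀ z : A, ¬ resE E A (⟨a, haA⟩ : A) z := fun z => hsink z.1
  have hsinkB : ∀ z : B, ¬ resE E B (⟨a, haB⟩ : B) z := fun z => hsink z.1
  obtain ⟨us, vs, hus, hvs, hn₁⟩ := sink_single (E := resE E A) hsinkA (toList m₁) (h₁' ⟨a, haA⟩)
  obtain ⟨ws, zs, hws, hzs, hn₂⟩ := sink_single (E := resE E B) hsinkB (toList m₂) (h₂' ⟨a, haB⟩)
  set u₁ := us.map Subtype.val with hu₁def
  set v₁ := vs.map Subtype.val with hv₁def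
  set u₂ := ws.map Subtype.val with hu₂def
  set v₂ := zs.map Subtype.val with hv₂def
  have Hu₁ : ∀ x ∈ u₁, x ∈ A ∧ x ≠ a := by
    rintro x hx
    obtain ⟨s, hs, rfl⟩ := List.mem_map.1 hx
    exact ⟨s.2, fun hh => hus (by rwa [show s = (⟨a, haA⟩ : A) from Subtype.ext hh] at hs)⟩
  have Hv₁ : ∀ x ∈ v₁, x ∈ A ∧ x ≠ a := by
    rintro x hx
    obtain ⟨s, hs, rfl⟩ := List.mem_map.1 hx
    exact ⟨s.2, fun hh => hvs (by rwa [show s = (⟨a, haA⟩ : A) from Subtype.ext hh] at hs)⟩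
  have Hu₂ : ∀ x ∈ u₂, x ∈ B ∧ x ≠ a := by
    rintro x hx
    obtain ⟨s, hs, rfl⟩ := List.mem_map.1 hx
    exact ⟨s.2, fun hh => hws (by rwa [show s = (⟨a, haB⟩ : B) from Subtype.ext hh] at hs)⟩
  have Hv₂ : ∀ x ∈ v₂, x ∈ B ∧ x ≠ a := by
    rintro x hx
    obtain ⟨s, hs, rfl⟩ := List.mem_map.1 hx
    exact ⟨s.2, fun hh => hzs (by rwa [show s = (⟨a, haB⟩ : B) from Subtype.ext hh] at hs)⟩
  have hnotB : ∀ (P : List V), (∀ x ∈ P, x ∈ A ∧ x ≠ a) → ∀ x ∈ P, x ∉ B := by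
    intro P HP x hxP hxB
    have : x ∈ A ∩ B := ⟨(HP x hxP).1, hxB⟩
    rw [hAB] at this
    exact (HP x hxP).2 this
  have hnotA : ∀ (P : List V), (∀ x ∈ P, x ∈ B ∧ x ≠ a) → ∀ x ∈ P, x ∉ A := by
    intro P HP x hxP hxA
    have : x ∈ A ∩ B := ⟨hxA, (HP x hxP).1⟩
    rw [hAB] at this
    exact (HP x hxP).2 this
  refine ⟨HKmk E (ofList (u₁ ++ (u₂ ++ (a :: (v₁ ++ v₂))))), ?_, ?_, ?_⟩
  · rw [elemContent_mk]
    apply Set.eq_univ_iff_forall.2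
    intro v
    show v ∈ u₁ ++ (u₂ ++ (a :: (v₁ ++ v₂)))
    rcases hcov v with hv | hv
    · -- v ∈ A : appears in us ++ ⟨a⟩ :: vs
      have : (⟨v, hv⟩ : A) ∈ us ++ ((⟨a, haA⟩ : A) :: vs) := by
        have hcont := (elemContent_mk (E := resE E A) (toList m₁))
        have heq : HKmk (resE E A) (ofList (toList m₁)) =
            HKmk (resE E A) (ofList (us ++ ((⟨a, haA⟩ : A) :: vs))) := HKmk_eq_of_LK hn₁
        have := content_invariant (E := resE E A) (mk_eq_iff.1 heq) ⟨v, hv⟩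
        exact this.1 (h₁' ⟨v, hv⟩)
      rcases List.mem_append.1 this with h | h
      · exact List.mem_append.2 (Or.inl (List.mem_map.2 ⟨_, h, rfl⟩))
      · rcases List.mem_cons.1 h with h | h
        · have : v = a := congrArg Subtype.val h
          simp [this]
        · refine List.mem_append.2 (Or.inr (List.mem_append.2 (Or.inr ?_)))
          have : v ∈ v₁ := List.mem_map.2 ⟨_, h, rfl⟩
          exact List.mem_cons.2 (Or.inr (List.mem_append.2 (Or.inl this)))
    · have : (⟨v, hv⟩ : B) ∈ ws ++ ((⟨a, haB⟩ : B) :: zs) := by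
        have heq : HKmk (resE E B) (ofList (toList m₂)) =
            HKmk (resE E B) (ofList (ws ++ ((⟨a, haB⟩ : B) :: zs))) := HKmk_eq_of_LK hn₂
        have := content_invariant (E := resE E B) (mk_eq_iff.1 heq) ⟨v, hv⟩
        exact this.1 (h₂' ⟨v, hv⟩)
      rcases List.mem_append.1 this with h | h
      · have : v ∈ u₂ := List.mem_map.2 ⟨_, h, rfl⟩
        exact List.mem_append.2 (Or.inr (List.mem_append.2 (Or.inl this)))
      · rcases List.mem_cons.1 h with h | h
        · have : v = a := congrArg Subtype.val h
          simp [this]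
        · have : v ∈ v₂ := List.mem_map.2 ⟨_, h, rfl⟩
          refine List.mem_append.2 (Or.inr (List.mem_append.2 (Or.inr ?_)))
          exact List.mem_cons.2 (Or.inr (List.mem_append.2 (Or.inr this)))
  · have h1 := proj_normal E A a hbidir haA haA (fun x hx => (Hu₁ x hx).1)
      (hnotA u₂ Hu₂) (fun x hx => (Hv₁ x hx).1) (hnotA v₂ Hv₂)
    rw [h1, hu₁def, hv₁def, FAw_map_val, FAw_map_val]
    exact (HKmk_eq_of_LK hn₁).symm
  · have h1 := proj_normal' E A a hbidir haA haB (hnotB u₁ Hu₁)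
      (fun x hx => (Hu₂ x hx).1) (hnotB v₁ Hv₁) (fun x hx => (Hv₂ x hx).1)
    rw [h1, hu₂def, hv₂def, FAw_map_val, FAw_map_val]
    exact (HKmk_eq_of_LK hn₂).symm

include hbidir haA haB hcov hAB hedge hsink in
lemma twoblock_card_sink :
    Nat.card {x : HK E // elemContent E x = Set.univ} =
      Nat.card {x : HK (resE E A) // elemContent (resE E A) x = Set.univ} *
      Nat.card {x : HK (resE E B) // elemContent (resE E B) x = Set.univ} := by
  have hbij : Function.Bijective (fun x : {x : HK E // elemContent E x = Set.univ} =>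
      ((⟨projHom E A hbidir x.1, proj_max E hbidir (S := A) x.2⟩ :
        {x : HK (resE E A) // elemContent (resE E A) x = Set.univ}),
       (⟨projHom E B hbidir x.1, proj_max E hbidir (S := B) x.2⟩ :
        {x : HK (resE E B) // elemContent (resE E B) x = Set.univ}))) := by
    constructor
    · intro x y hxy
      have h1 := congrArg (fun p => p.1.1) hxy
      have h2 := congrArg (fun p => p.2.1) hxy
      exact Subtype.ext (twoblock_inj E A B a hbidir haA haB hcov hAB hedge hsink x.2 y.2 h1 h2)
    · rintro ⟨⟨x₁, hx₁⟩, ⟨x₂, hx₂⟩⟩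
      obtain ⟨x, hx, hA, hB⟩ := twoblock_surj E A B a hbidir haA haB hcov hAB hedge hsink x₁ x₂ hx₁ hx₂
      exact ⟨⟨x, hx⟩, by simp [hA, hB]⟩
  rw [Nat.card_congr (Equiv.ofBijective _ hbij), Nat.card_prod]

end core
end TwoBlock

section Rev

variable (E : V → V → Prop)

/-- The opposite graph. -/
def flipE : V → V → Prop := fun x y => E y x

lemma rev_con {w w' : FreeMonoid V} (h : HKCon E w w') :
    HKCon (flipE E) (ofList (toList w).reverse) (ofList (toList w').reverse) := by
  let D : Con (FreeMonoid V) := {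
    r := fun x y => HKCon (flipE E) (ofList (toList x).reverse) (ofList (toList y).reverse),
    iseqv := ⟨fun _ => (HKCon (flipE E)).refl _, fun h => (HKCon (flipE E)).symm h,
      fun h h' => (HKCon (flipE E)).trans h h'⟩,
    mul' := fun {w x y z} h h' => by
      show HKCon (flipE E) (ofList (toList (w * y)).reverse) (ofList (toList (x * z)).reverse)
      rw [toList_mul, toList_mul, List.reverse_append, List.reverse_append,
        ofList_append, ofList_append]
      exact Con.mul _ h' h }
  refine (Con.conGen_le (c := D)).2 ?_ h
  rintro x y (⟨p, rfl, rfl⟩ | ⟨p, q, hne, h1, h2, rfl, rfl⟩ | ⟨p, q, h1, h2, rfl, rfl⟩ |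
    ⟨p, q, h1, h2, rfl, rfl⟩ | ⟨p, q, h1, h2, rfl, rfl⟩)
  · show LK (flipE E) [p, p] [p]
    exact LK.idem p
  · show LK (flipE E) [q, p] [p, q]
    exact LK.comm (x := q) (y := p) (fun hh => hne hh.symm) h1 h2
  · show LK (flipE E) [p, q, p] [q, p, q]
    exact (LK.braid (E := flipE E) (x := q) (y := p) h1 h2).symm
  · show LK (flipE E) [p, q, p] [q, p]
    exact LK.aza (E := flipE E) (z := q) (a := p) h1 h2
  · show LK (flipE E) [p, q, p] [q, p, q]
    exact ConGen.Rel.of _ _ (Or.inr (Or.inr (Or.inr (Or.inr ⟨p, q, h2, h1, rfl, rfl⟩))))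

/-- Word reversal induces a bijection on Hecke-Kiselman monoids of opposite graphs. -/
def revMap : HK E → HK (flipE E) :=
  Quotient.map' (fun w => ofList (toList w).reverse) (fun _ _ h => rev_con E h)

lemma revMap_mk (l : List V) :
    revMap E (HKmk E (ofList l)) = HKmk (flipE E) (ofList l.reverse) := rfl

lemma revMap_content (x : HK E) :
    elemContent (flipE E) (revMap E x) = elemContent E x := by
  obtain ⟨w, rfl⟩ := (HKCon E).mk'_surjective x
  have : ((HKCon E).mk' w : HK E) = HKmk E (ofList (toList w)) := rfl
  rw [this, revMap_mk, elemContent_mk, elemContent_mk]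
  ext v
  simp

lemma rev_card :
    Nat.card {x : HK E // elemContent E x = Set.univ} =
      Nat.card {x : HK (flipE E) // elemContent (flipE E) x = Set.univ} := by
  refine Nat.card_congr ⟨fun x => ⟨revMap E x.1, by rw [revMap_content]; exact x.2⟩,
    fun y => ⟨(revMap (flipE E) y.1 : HK E), ?_⟩, ?_, ?_⟩
  · show elemContent E _ = Set.univ
    have : elemContent (flipE (flipE E)) (revMap (flipE E) y.1) =
        elemContent (flipE E) y.1 := revMap_content (flipE E) y.1
    exact this.trans y.2
  · rintro ⟨x, hx⟩
    obtain ⟨w, rfl⟩ := (HKCon E).mk'_surjective x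
    apply Subtype.ext
    show revMap (flipE E) (revMap E ((HKCon E).mk' w)) = (HKCon E).mk' w
    have e2 : revMap (flipE E) (revMap E ((HKCon E).mk' w)) =
        HKmk E (ofList (toList w).reverse.reverse) := rfl
    rw [e2, List.reverse_reverse]
    rfl
  · rintro ⟨y, hy⟩
    obtain ⟨w, rfl⟩ := (HKCon (flipE E)).mk'_surjective y
    apply Subtype.ext
    show revMap E (revMap (flipE E) ((HKCon (flipE E)).mk' w)) = (HKCon (flipE E)).mk' w
    have e2 : revMap E (revMap (flipE E) ((HKCon (flipE E)).mk' w)) =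
        HKmk (flipE E) (ofList (toList w).reverse.reverse) := rfl
    rw [e2, List.reverse_reverse]
    rfl

end Rev

section TwoBlockFinal

variable (E : V → V → Prop) (A B : Set V) (a : V)

lemma twoblock_card (hbidir : ∀ x y, ¬ (E x y ∧ E y x))
    (haA : a ∈ A) (haB : a ∈ B) (hcov : ∀ v : V, v ∈ A ∨ v ∈ B) (hAB : A ∩ B = {a})
    (hedge : ∀ x y, E x y → (x ∈ A ∧ y ∈ A) ∨ (x ∈ B ∧ y ∈ B))
    (hss : (∀ z, ¬ E z a) ∨ (∀ z, ¬ E a z)) :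
    Nat.card {x : HK E // elemContent E x = Set.univ} =
      Nat.card {x : HK (resE E A) // elemContent (resE E A) x = Set.univ} *
      Nat.card {x : HK (resE E B) // elemContent (resE E B) x = Set.univ} := by
  rcases hss with hsource | hsink
  · -- `a` is a source; pass to the opposite graph
    have hbidir' : ∀ x y, ¬ (flipE E x y ∧ flipE E y x) := fun x y h => hbidir y x ⟨h.1, h.2⟩
    have hedge' : ∀ x y, flipE E x y → (x ∈ A ∧ y ∈ A) ∨ (x ∈ B ∧ y ∈ B) := by
      intro x y h
      rcases hedge y x h with ⟨h1, h2⟩ | ⟨h1, h2⟩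
      · exact Or.inl ⟨h2, h1⟩
      · exact Or.inr ⟨h2, h1⟩
    have hsink' : ∀ z, ¬ flipE E a z := fun z => hsource z
    have h2 := twoblock_card_sink (flipE E) A B a hbidir' haA haB hcov hAB hedge' hsink'
    rw [rev_card E, h2, rev_card (resE E A), rev_card (resE E B)]
    rfl
  · exact twoblock_card_sink E A B a hbidir haA haB hcov hAB hedge hsink

end TwoBlockFinal

section Iso

variable {W : Type*} (E : V → V → Prop) (F : W → W → Prop) (e : V ≃ W)

lemma iso_compat (hEF : ∀ x y, E x y ↔ F (e x) (e y)) :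
    HKCon E ≤ Con.ker (FreeMonoid.lift (fun v => HKmk F (of (e v)))) := by
  refine Con.conGen_le.2 ?_
  rintro x y (⟨p, rfl, rfl⟩ | ⟨p, q, hne, h1, h2, rfl, rfl⟩ | ⟨p, q, h1, h2, rfl, rfl⟩ |
    ⟨p, q, h1, h2, rfl, rfl⟩ | ⟨p, q, h1, h2, rfl, rfl⟩) <;>
    refine Con.ker_rel _ |>.2 ?_ <;>
    simp only [map_mul, FreeMonoid.lift_eval_of]
  · exact gen_idem _ _
  · exact gen_comm _ (fun hh => hne (e.injective hh))
      (fun hF => h1 ((hEF p q).2 hF)) (fun hF => h2 ((hEF q p).2 hF))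
  · exact gen_braid _ ((hEF p q).1 h1) (fun hF => h2 ((hEF q p).2 hF))
  · exact gen_absorb _ ((hEF p q).1 h1) (fun hF => h2 ((hEF q p).2 hF))
  · exact gen_braid5 _ ((hEF p q).1 h1) ((hEF q p).1 h2)

/-- Monoid homomorphism induced by a graph isomorphism. -/
noncomputable def isoHom (hEF : ∀ x y, E x y ↔ F (e x) (e y)) : HK E →* HK F :=
  Con.lift _ (FreeMonoid.lift (fun v => HKmk F (of (e v)))) (iso_compat E F e hEF)

lemma isoHom_mk (hEF : ∀ x y, E x y ↔ F (e x) (e y)) : ∀ (l : List V),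
    isoHom E F e hEF (HKmk E (ofList l)) = HKmk F (ofList (l.map e)) := by
  intro l
  induction l with
  | nil =>
    show isoHom E F e hEF (HKmk E 1) = HKmk F 1
    simp [map_one]
  | cons v l ih =>
    have hof : isoHom E F e hEF (HKmk E (of v)) = HKmk F (of (e v)) := by
      have h2 : isoHom E F e hEF (HKmk E (of v)) =
          FreeMonoid.lift (fun v => HKmk F (of (e v))) (of v) := Con.lift_mk' _ _
      rw [h2, FreeMonoid.lift_eval_of]
    rw [ofList_cons, map_mul, List.map_cons, ofList_cons, map_mul, hof, ih]
    exact (map_mul _ _ _).symm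

lemma iso_card (hEF : ∀ x y, E x y ↔ F (e x) (e y)) :
    Nat.card {x : HK E // elemContent E x = Set.univ} =
      Nat.card {x : HK F // elemContent F x = Set.univ} := by
  have hFE : ∀ x y, F x y ↔ E (e.symm x) (e.symm y) := by
    intro x y
    rw [hEF (e.symm x) (e.symm y)]
    simp
  have maxF : ∀ x : HK E, elemContent E x = Set.univ →
      elemContent F (isoHom E F e hEF x) = Set.univ := by
    intro x hx
    obtain ⟨w, rfl⟩ := (HKCon E).mk'_surjective x
    have hx' : ∀ v : V, v ∈ toList w := by
      intro v
      have := (elemContent_mk (E := E) (toList w)).symm.trans hx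
      exact (Set.eq_univ_iff_forall.1 this) v
    have e1 : ((HKCon E).mk' w : HK E) = HKmk E (ofList (toList w)) := rfl
    rw [e1, isoHom_mk, elemContent_mk]
    apply Set.eq_univ_iff_forall.2
    intro z
    exact Set.mem_setOf.2 (List.mem_map.2 ⟨e.symm z, hx' (e.symm z), by simp⟩)
  have maxE : ∀ y : HK F, elemContent F y = Set.univ →
      elemContent E (isoHom F E e.symm hFE y) = Set.univ := by
    intro y hy
    obtain ⟨w, rfl⟩ := (HKCon F).mk'_surjective y
    have hy' : ∀ v : W, v ∈ toList w := by
      intro v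
      have := (elemContent_mk (E := F) (toList w)).symm.trans hy
      exact (Set.eq_univ_iff_forall.1 this) v
    have e1 : ((HKCon F).mk' w : HK F) = HKmk F (ofList (toList w)) := rfl
    rw [e1, isoHom_mk, elemContent_mk]
    apply Set.eq_univ_iff_forall.2
    intro z
    exact Set.mem_setOf.2 (List.mem_map.2 ⟨e z, hy' (e z), by simp⟩)
  refine Nat.card_congr ⟨fun x => ⟨isoHom E F e hEF x.1, maxF x.1 x.2⟩,
    fun y => ⟨isoHom F E e.symm hFE y.1, maxE y.1 y.2⟩, ?_, ?_⟩
  · rintro ⟨x, hx⟩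
    obtain ⟨w, rfl⟩ := (HKCon E).mk'_surjective x
    apply Subtype.ext
    show isoHom F E e.symm hFE (isoHom E F e hEF ((HKCon E).mk' w)) = (HKCon E).mk' w
    have e1 : ((HKCon E).mk' w : HK E) = HKmk E (ofList (toList w)) := rfl
    rw [e1, isoHom_mk, isoHom_mk, List.map_map]
    simp
  · rintro ⟨y, hy⟩
    obtain ⟨w, rfl⟩ := (HKCon F).mk'_surjective y
    apply Subtype.ext
    show isoHom E F e hEF (isoHom F E e.symm hFE ((HKCon F).mk' w)) = (HKCon F).mk' w
    have e1 : ((HKCon F).mk' w : HK F) = HKmk F (ofList (toList w)) := rfl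
    rw [e1, isoHom_mk, isoHom_mk, List.map_map]
    simp

end Iso

section Main

universe u

lemma main_aux : ∀ (k : ℕ), 0 < k → ∀ {V : Type u} (E : V → V → Prop),
    (∀ x y, ¬ (E x y ∧ E y x)) → (∀ x, ¬ E x x) → ∀ (S : Fin k → Set V),
    (⋃ i, S i) = Set.univ →
    (∀ x y, E x y → ∃ i, x ∈ S i ∧ y ∈ S i) →
    (∀ i j : Fin k, i ≠ j → ∀ x y, E x y → ¬ ((x ∈ S i ∧ y ∈ S i) ∧ (x ∈ S j ∧ y ∈ S j))) →
    (∀ j : Fin k, 0 < (j : ℕ) → ∃ a : V,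
      (S j ∩ ⋃ i : {i : Fin k // (i : ℕ) < (j : ℕ)}, S i.1) = {a} ∧
      ((∀ z, ¬ E z a) ∨ (∀ z, ¬ E a z))) →
    Nat.card {x : HK E // elemContent E x = Set.univ} =
      ∏ i : Fin k, Nat.card {x : HK (resE E (S i)) //
        elemContent (resE E (S i)) x = Set.univ} := by
  intro k
  induction k with
  | zero => exact fun h => absurd h (lt_irrefl 0)
  | succ n ih =>
    intro _ V E hbidir hloop S hcover hedges hnosh hglue
    by_cases hn : n = 0
    · subst hn
      have hS0 : S 0 = Set.univ := by
        rw [← hcover]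
        ext v
        simp only [Set.mem_iUnion]
        exact ⟨fun h => ⟨0, h⟩, fun ⟨i, h⟩ => by rwa [Fin.eq_zero i] at h⟩
      let e : V ≃ ↥(S 0) :=
        ⟨fun v => ⟨v, by rw [hS0]; exact trivial⟩, fun s => s.1, fun v => rfl,
          fun s => Subtype.ext rfl⟩
      rw [Fin.prod_univ_one]
      exact iso_card E (resE E (S 0)) e (fun x y => Iff.rfl)
    · have hn' : 0 < n := Nat.pos_of_ne_zero hn
      set T : Set V := ⋃ i : Fin n, S i.castSucc with hTdef
      obtain ⟨a, haglue, hss⟩ := hglue (Fin.last n) (by rw [Fin.val_last]; exact hn')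
      have hU : (⋃ i : {i : Fin (n+1) // (i : ℕ) < ((Fin.last n : Fin (n+1)) : ℕ)}, S i.1) = T := by
        ext v
        simp only [Set.mem_iUnion, hTdef, Fin.val_last]
        constructor
        · rintro ⟨⟨i, hi⟩, hv⟩
          refine ⟨i.castLT hi, ?_⟩
          rwa [Fin.castSucc_castLT]
        · rintro ⟨i, hv⟩
          exact ⟨⟨i.castSucc, by simpa using i.isLt⟩, hv⟩
      rw [hU] at haglue
      have hTB : T ∩ S (Fin.last n) = {a} := by rw [Set.inter_comm]; exact haglue
      have haTB : a ∈ T ∩ S (Fin.last n) := by rw [hTB]; rfl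
      have hsubT : ∀ i : Fin n, S i.castSucc ⊆ T := by
        intro i v hv
        exact Set.mem_iUnion.2 ⟨i, hv⟩
      have hcovTB : ∀ v, v ∈ T ∨ v ∈ S (Fin.last n) := by
        intro v
        have hv : v ∈ ⋃ i, S i := by rw [hcover]; exact trivial
        obtain ⟨i, hi⟩ := Set.mem_iUnion.1 hv
        by_cases hlt : (i : ℕ) < n
        · exact Or.inl (Set.mem_iUnion.2 ⟨i.castLT hlt, by rwa [Fin.castSucc_castLT]⟩)
        · have hieq : i = Fin.last n := by
            apply Fin.ext
            rw [Fin.val_last]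
            have := i.isLt
            omega
          exact Or.inr (hieq ▸ hi)
      have hedgeTB : ∀ x y, E x y →
          (x ∈ T ∧ y ∈ T) ∨ (x ∈ S (Fin.last n) ∧ y ∈ S (Fin.last n)) := by
        intro x y hE
        obtain ⟨i, hx, hy⟩ := hedges x y hE
        by_cases hlt : (i : ℕ) < n
        · refine Or.inl ⟨Set.mem_iUnion.2 ⟨i.castLT hlt, by rwa [Fin.castSucc_castLT]⟩,
            Set.mem_iUnion.2 ⟨i.castLT hlt, by rwa [Fin.castSucc_castLT]⟩⟩
        · have hieq : i = Fin.last n := by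
            apply Fin.ext
            rw [Fin.val_last]
            have := i.isLt
            omega
          exact Or.inr ⟨hieq ▸ hx, hieq ▸ hy⟩
      have h2b := twoblock_card E T (S (Fin.last n)) a hbidir haTB.1 haTB.2 hcovTB hTB hedgeTB hss
      -- set-up for the induction hypothesis on `T`
      have hbidir' : ∀ x y : T, ¬ (resE E T x y ∧ resE E T y x) := fun x y h => hbidir x.1 y.1 h
      have hloop' : ∀ x : T, ¬ resE E T x x := fun x h => hloop x.1 h
      set S' : Fin n → Set ↥T := fun i => {s : ↥T | s.1 ∈ S i.castSucc} with hS'def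
      have hlastT : ∀ v : V, v ∈ T → v ∈ S (Fin.last n) → v = a := by
        intro v hvT hvB
        have : v ∈ T ∩ S (Fin.last n) := ⟨hvT, hvB⟩
        rwa [hTB] at this
      have hcover' : (⋃ i, S' i) = Set.univ := by
        apply Set.eq_univ_iff_forall.2
        intro s
        obtain ⟨i, hi⟩ := Set.mem_iUnion.1 s.2
        exact Set.mem_iUnion.2 ⟨i, hi⟩
      have hedges' : ∀ x y : ↥T, resE E T x y → ∃ i, x ∈ S' i ∧ y ∈ S' i := by
        intro x y hE
        obtain ⟨i, hx, hy⟩ := hedges x.1 y.1 hE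
        by_cases hlt : (i : ℕ) < n
        · exact ⟨i.castLT hlt, by rwa [hS'def, Set.mem_setOf_eq, Fin.castSucc_castLT],
            by rwa [hS'def, Set.mem_setOf_eq, Fin.castSucc_castLT]⟩
        · exfalso
          have hieq : i = Fin.last n := by
            apply Fin.ext
            rw [Fin.val_last]
            have := i.isLt
            omega
          have hxa : x.1 = a := hlastT x.1 x.2 (hieq ▸ hx)
          have hya : y.1 = a := hlastT y.1 y.2 (hieq ▸ hy)
          have hE' : E x.1 y.1 := hE
          rw [hxa, hya] at hE'
          exact hloop a hE'
      have hnosh' : ∀ i j : Fin n, i ≠ j → ∀ x y : ↥T, resE E T x y →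
          ¬ ((x ∈ S' i ∧ y ∈ S' i) ∧ (x ∈ S' j ∧ y ∈ S' j)) := by
        intro i j hij x y hE hmem
        refine hnosh i.castSucc j.castSucc (fun hh => hij (Fin.castSucc_injective n hh))
          x.1 y.1 hE ⟨⟨hmem.1.1, hmem.1.2⟩, ⟨hmem.2.1, hmem.2.2⟩⟩
      have hglue' : ∀ j : Fin n, 0 < (j : ℕ) → ∃ b : ↥T,
          (S' j ∩ ⋃ i : {i : Fin n // (i : ℕ) < (j : ℕ)}, S' i.1) = {b} ∧
          ((∀ z, ¬ resE E T z b) ∨ (∀ z, ¬ resE E T b z)) := by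
        intro j hj
        obtain ⟨b, hbeq, hbss⟩ := hglue j.castSucc (by rwa [Fin.coe_castSucc])
        have hbU0 : b ∈ S j.castSucc ∩
            ⋃ i : {i : Fin (n+1) // (i : ℕ) < ((j.castSucc : Fin (n+1)) : ℕ)}, S i.1 := by
          rw [hbeq]; rfl
        have hbS : b ∈ S j.castSucc := hbU0.1
        have hbT : b ∈ T := hsubT j hbS
        refine ⟨⟨b, hbT⟩, ?_, ?_⟩
        · ext s
          simp only [Set.mem_inter_iff, Set.mem_iUnion, hS'def, Set.mem_setOf_eq,
            Set.mem_singleton_iff]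
          constructor
          · rintro ⟨hsj, ⟨⟨i, hi⟩, hsi⟩⟩
            have : s.1 ∈ S j.castSucc ∩ ⋃ i : {i : Fin (n+1) // (i : ℕ) < ((j.castSucc : Fin (n+1)) : ℕ)}, S i.1 := by
              refine ⟨hsj, Set.mem_iUnion.2 ⟨⟨i.castSucc, by simpa using hi⟩, hsi⟩⟩
            rw [hbeq] at this
            exact Subtype.ext this
          · rintro rfl
            refine ⟨hbS, ?_⟩
            have hbU : b ∈ S j.castSucc ∩ ⋃ i : {i : Fin (n+1) // (i : ℕ) < ((j.castSucc : Fin (n+1)) : ℕ)}, S i.1 := by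
              rw [hbeq]; rfl
            obtain ⟨⟨i, hi⟩, hbi⟩ := Set.mem_iUnion.1 hbU.2
            have hi' : (i : ℕ) < n := by
              have hj' : (j : ℕ) < n := j.isLt
              simp only [Fin.coe_castSucc] at hi
              omega
            refine ⟨⟨i.castLT hi', by simpa using hi⟩, by rwa [Fin.castSucc_castLT]⟩
        · rcases hbss with hsrc | hsnk
          · exact Or.inl (fun z => hsrc z.1)
          · exact Or.inr (fun z => hsnk z.1)
      have hIH := ih hn' (resE E T) hbidir' hloop' S' hcover' hedges' hnosh' hglue'
      have hfac : ∀ i : Fin n,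
          Nat.card {x : HK (resE (resE E T) (S' i)) //
            elemContent (resE (resE E T) (S' i)) x = Set.univ} =
          Nat.card {x : HK (resE E (S i.castSucc)) //
            elemContent (resE E (S i.castSucc)) x = Set.univ} := by
        intro i
        let e : ↥(S' i) ≃ ↥(S i.castSucc) :=
          ⟨fun s => ⟨s.1.1, s.2⟩, fun v => ⟨⟨v.1, hsubT i v.2⟩, v.2⟩,
            fun s => Subtype.ext (Subtype.ext rfl), fun v => Subtype.ext rfl⟩
        exact iso_card _ _ e (fun x y => Iff.rfl)
      rw [Fin.prod_univ_castSucc, h2b, hIH, Finset.prod_congr rfl (fun i _ => hfac i)]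
end Main
end HKP


/-- If `Γ` is a union of full subgraphs `Γ₁, …, Γ_k` satisfying the gluing condition
(pairwise no common edges; each `Γ_j` for `j ≥ 2` meets the union of the previous ones in
a single vertex which is a source or a sink of `Γ`), then the number of elements of
maximal content in `HK_Γ` is the product of the numbers of elements of maximal content
in the `HK_{Γ_i}`. -/
theorem hk_gluing_max_content_card {V : Type*} (E : V → V → Prop)
    (hbidir : ∀ x y, ¬ (E x y ∧ E y x)) (hloop : ∀ x, ¬ E x x)
    {k : ℕ} (hk : 0 < k) (S : Fin k → Set V)
    (hcover : (⋃ i, S i) = Set.univ)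
    (hedges : ∀ x y, E x y → ∃ i, x ∈ S i ∧ y ∈ S i)
    (hnoshared : ∀ i j : Fin k, i ≠ j →
      ∀ x y, E x y → ¬ ((x ∈ S i ∧ y ∈ S i) ∧ (x ∈ S j ∧ y ∈ S j)))
    (hglue : ∀ j : Fin k, 0 < (j : ℕ) → ∃ a : V,
      (S j ∩ ⋃ i : {i : Fin k // (i : ℕ) < (j : ℕ)}, S i.1) = {a} ∧
      ((∀ z, ¬ E z a) ∨ (∀ z, ¬ E a z))) :
    Nat.card {x : HK E // elemContent E x = Set.univ} =
      ∏ i : Fin k, Nat.card {x : HK (fun u v : S i => E u v) //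
        elemContent (fun u v : S i => E u v) x = Set.univ} := by
  exact HKP.main_aux k hk E hbidir hloop S hcover hedges hnoshared hglue
end

section
/- Let A_n^alt be the directed graph of type A_n in which every vertex is a source or a sink (edge orientations alternate along the path). Then |HK_{A_n^alt}| = F_{2n+1}, the (2n+1)-st Fibonacci number (with F₁ = F₂ = 1). Equivalently, the cardinalities f_n = |HK_{A_n^alt}| satisfy f₀ = 1, f₁ = 2, and f_{n+1} = 3f_n − f_{n−1}. -/
/-- The alternating orientation of the path on `n` vertices: edges go between consecutive
vertices, always directed away from the even-indexed vertex, so every vertex is a source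
or a sink. -/
def altE (n : ℕ) (i j : Fin n) : Prop :=
  ((j : ℕ) = (i : ℕ) + 1 ∨ (i : ℕ) = (j : ℕ) + 1) ∧ Even (i : ℕ)



/-! ### Part 1: the state space and the letter action -/

/-- States: a set of vertices and a set of marked edges (edge `j` joins `j` and `j+1`;
a mark on edge `j` means `j+1` comes before `j`). -/
abbrev HKSt : Type := (ℕ → Bool) × (ℕ → Bool)

/-- Prepending the generator `g` to a normal form. -/
def pact (g : ℕ) (σ : HKSt) : HKSt :=
  if g % 2 = 1 ∧ σ.1 g = true then σ
  else ((fun i => if i = g then true else σ.1 i),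
        (fun j => if j + 1 = g then σ.1 j else if j = g then false else σ.2 j))

lemma pact_odd_mem {g : ℕ} {σ : HKSt} (h1 : g % 2 = 1) (h2 : σ.1 g = true) :
    pact g σ = σ := by
  simp [pact, h1, h2]

lemma pact_upd {g : ℕ} {σ : HKSt} (h : ¬ (g % 2 = 1 ∧ σ.1 g = true)) :
    pact g σ = ((fun i => if i = g then true else σ.1 i),
        (fun j => if j + 1 = g then σ.1 j else if j = g then false else σ.2 j)) := by
  simp only [pact, if_neg h]

lemma pact_even {g : ℕ} {σ : HKSt} (h : g % 2 = 0) :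
    pact g σ = ((fun i => if i = g then true else σ.1 i),
        (fun j => if j + 1 = g then σ.1 j else if j = g then false else σ.2 j)) :=
  pact_upd (by omega)

lemma pact_fst {g : ℕ} {σ : HKSt} : (pact g σ).1 = fun i => if i = g then true else σ.1 i := by
  by_cases h : g % 2 = 1 ∧ σ.1 g = true
  · rw [pact_odd_mem h.1 h.2]; funext i
    by_cases hi : i = g
    · simp [hi, h.2]
    · simp [hi]
  · rw [pact_upd h]

lemma pact_fst_self {g : ℕ} {σ : HKSt} : (pact g σ).1 g = true := by
  simp [pact_fst]

lemma pact_idem (g : ℕ) (σ : HKSt) : pact g (pact g σ) = pact g σ := by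
  by_cases h : g % 2 = 1 ∧ σ.1 g = true
  · rw [pact_odd_mem h.1 h.2, pact_odd_mem h.1 h.2]
  · by_cases hg : g % 2 = 1
    · exact pact_odd_mem hg pact_fst_self
    · rw [pact_upd h]
      rw [pact_even (by omega)]
      refine Prod.ext ?_ ?_ <;> funext j <;> simp only <;> split_ifs <;> simp_all

lemma pact_comm {x y : ℕ} (σ : HKSt) (hxy : x ≠ y) (h1 : y ≠ x + 1) (h2 : x ≠ y + 1) :
    pact x (pact y σ) = pact y (pact x σ) := by
  have hyS : (pact y σ).1 x = σ.1 x := by rw [pact_fst]; simp [hxy]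
  have hxS : (pact x σ).1 y = σ.1 y := by rw [pact_fst]; simp [Ne.symm hxy]
  by_cases hx : x % 2 = 1 ∧ σ.1 x = true <;> by_cases hy : y % 2 = 1 ∧ σ.1 y = true
  · rw [pact_odd_mem hy.1 hy.2, pact_odd_mem hx.1 hx.2, pact_odd_mem hy.1 hy.2]
  · rw [pact_odd_mem hx.1 hx.2, pact_odd_mem hx.1 (hyS.trans hx.2)]
  · rw [pact_odd_mem hy.1 hy.2, pact_odd_mem hy.1 (hxS.trans hy.2)]
  · rw [pact_upd hx, pact_upd hy,
      pact_upd (by simpa [hxy] using hx), pact_upd (by simpa [Ne.symm hxy] using hy)]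
    refine Prod.ext ?_ ?_ <;> funext j <;> simp only <;> split_ifs <;> simp_all <;> omega

lemma pact_snd {g : ℕ} {σ : HKSt} : (pact g σ).2 = fun j =>
    if g % 2 = 1 ∧ σ.1 g = true then σ.2 j
    else if j + 1 = g then σ.1 j else if j = g then false else σ.2 j := by
  by_cases h : g % 2 = 1 ∧ σ.1 g = true
  · rw [pact_odd_mem h.1 h.2]; funext j; rw [if_pos h]
  · rw [pact_upd h]; funext j; rw [if_neg h]

lemma pact_braid1 {x : ℕ} (hx : x % 2 = 0) (σ : HKSt) :
    pact x (pact (x+1) (pact x σ)) = pact x (pact (x+1) σ) := by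
  have hx1 : (x+1) % 2 = 1 := by omega
  have hxo : ¬ (x % 2 = 1) := by omega
  have hne : x + 1 ≠ x := by omega
  by_cases hS : σ.1 (x+1) = true
  · have e1 : (pact x σ).1 (x+1) = true := by rw [pact_fst]; simp [hne, hS]
    rw [pact_odd_mem hx1 e1, pact_odd_mem hx1 hS, pact_idem]
  · refine Prod.ext ?_ ?_ <;> funext j <;>
      simp only [pact_fst, pact_snd, hxo, false_and, if_false, hne, hS] <;>
      split_ifs <;> simp_all <;> omega

lemma pact_braid2 {x : ℕ} (hx : x % 2 = 0) (σ : HKSt) :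
    pact (x+1) (pact x (pact (x+1) σ)) = pact x (pact (x+1) σ) := by
  have hx1 : (x+1) % 2 = 1 := by omega
  have e1 : (pact x (pact (x+1) σ)).1 (x+1) = true := by
    rw [pact_fst]; simp [show x + 1 ≠ x by omega, pact_fst_self]
  rw [pact_odd_mem hx1 e1]

lemma pact_braid3 {y : ℕ} (hy : y % 2 = 1) (σ : HKSt) :
    pact (y+1) (pact y (pact (y+1) σ)) = pact (y+1) (pact y σ) := by
  have hyo : ¬ ((y+1) % 2 = 1) := by omega
  have hne : y ≠ y + 1 := by omega
  by_cases hS : σ.1 y = true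
  · have e1 : (pact (y+1) σ).1 y = true := by rw [pact_fst]; simp [hne, hS]
    rw [pact_odd_mem hy e1, pact_idem, pact_odd_mem hy hS]
  · refine Prod.ext ?_ ?_ <;> funext j <;>
      simp only [pact_fst, pact_snd, hyo, false_and, if_false, hne, hS] <;>
      split_ifs <;> simp_all <;> omega

lemma pact_braid4 {y : ℕ} (hy : y % 2 = 1) (σ : HKSt) :
    pact y (pact (y+1) (pact y σ)) = pact (y+1) (pact y σ) := by
  have e1 : (pact (y+1) (pact y σ)).1 y = true := by
    rw [pact_fst]; simp [show y ≠ y + 1 by omega, pact_fst_self]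
  rw [pact_odd_mem hy e1]

/-! ### Part 2: the action homomorphism -/

def HKPhi (n : ℕ) : FreeMonoid (Fin n) →* Function.End HKSt :=
  FreeMonoid.lift (fun g : Fin n => (pact (g : ℕ) : Function.End HKSt))

lemma altE_adj_parity {n : ℕ} {x y : Fin n} (h : (y:ℕ) = (x:ℕ)+1 ∨ (x:ℕ) = (y:ℕ)+1)
    (h1 : ¬ altE n x y) (h2 : ¬ altE n y x) : False := by
  rcases Nat.even_or_odd (x : ℕ) with he | ho
  · exact h1 ⟨h, he⟩
  · refine h2 ⟨h.symm, ?_⟩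
    rcases h with h | h <;> [skip; skip] <;>
      · rw [Nat.even_iff]; rw [Nat.odd_iff] at ho; omega

lemma HKcon_le_ker (n : ℕ) : HKCon (altE n) ≤ Con.ker (HKPhi n) := by
  apply Con.conGen_le.mpr
  show ∀ a b, HKRel (altE n) a b → Con.ker (HKPhi n) a b
  rintro a b (⟨x, rfl, rfl⟩ | ⟨x, y, hxy, h1, h2, rfl, rfl⟩ |
    ⟨x, y, h1, h2, rfl, rfl⟩ | ⟨x, y, h1, h2, rfl, rfl⟩ | ⟨x, y, h1, h2, rfl, rfl⟩) <;>
    rw [Con.ker_rel] <;> simp only [map_mul, HKPhi, FreeMonoid.lift_eval_of] <;>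
    funext σ <;> show _ = _
  · exact pact_idem _ σ
  · have hne : (x:ℕ) ≠ (y:ℕ) := fun h => hxy (Fin.val_injective h)
    have ha : (y:ℕ) ≠ (x:ℕ)+1 := fun h => altE_adj_parity (Or.inl h) h1 h2
    have hb : (x:ℕ) ≠ (y:ℕ)+1 := fun h => altE_adj_parity (Or.inr h) h1 h2
    exact pact_comm σ hne ha hb
  · -- xyx = yxy
    have hx : (x:ℕ) % 2 = 0 := Nat.even_iff.mp h1.2
    rcases h1.1 with h | h
    · show pact _ (pact _ (pact _ σ)) = pact _ (pact _ (pact _ σ))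
      rw [h, pact_braid1 hx, pact_braid2 hx]
    · have hy : (y:ℕ) % 2 = 1 := by omega
      show pact _ (pact _ (pact _ σ)) = pact _ (pact _ (pact _ σ))
      rw [h, pact_braid3 hy, pact_braid4 hy]
  · -- xyx = xy
    have hx : (x:ℕ) % 2 = 0 := Nat.even_iff.mp h1.2
    rcases h1.1 with h | h
    · show pact _ (pact _ (pact _ σ)) = pact _ (pact _ σ)
      rw [h, pact_braid1 hx]
    · have hy : (y:ℕ) % 2 = 1 := by omega
      show pact _ (pact _ (pact _ σ)) = pact _ (pact _ σ)
      rw [h, pact_braid3 hy]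
  · -- bidirected edge: impossible
    exfalso
    have hx : Even (x:ℕ) := h1.2
    have hy : Even (y:ℕ) := h2.2
    rw [Nat.even_iff] at hx hy
    rcases h1.1 with h | h <;> omega

/-! ### Part 3: generators in HK and their relations -/

lemma hk_rel_of {n : ℕ} {a b : FreeMonoid (Fin n)} (h : HKRel (altE n) a b) :
    HKmk (altE n) a = HKmk (altE n) b := by
  have hc : HKCon (altE n) a b := ConGen.Rel.of _ _ h
  show (a : (HKCon (altE n)).Quotient) = b
  exact ((HKCon (altE n)).eq).mpr hc

/-- The generator `g` of the Hecke-Kiselman monoid (or `1` if `g` is out of range). -/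
def XL (n : ℕ) (g : ℕ) : HK (altE n) :=
  if h : g < n then HKmk (altE n) (FreeMonoid.of ⟨g, h⟩) else 1

lemma XL_sq (n g : ℕ) : XL n g * XL n g = XL n g := by
  unfold XL
  split
  · rw [show ((HKmk (altE n)) (FreeMonoid.of _) * (HKmk (altE n)) (FreeMonoid.of _)) = _ from (map_mul _ _ _).symm]
    exact hk_rel_of (Or.inl ⟨_, rfl, rfl⟩)
  · simp

lemma XL_comm (n : ℕ) {g a : ℕ} (h0 : a ≠ g) (h1 : a ≠ g + 1) (h2 : g ≠ a + 1) :
    XL n g * XL n a = XL n a * XL n g := by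
  unfold XL
  split <;> split <;> try simp
  simp only [← map_mul]
  refine hk_rel_of (Or.inr (Or.inl ⟨_, _, ?_, ?_, ?_, rfl, rfl⟩))
  · exact fun h => h0 (congrArg Fin.val h).symm
  · rintro ⟨hadj, -⟩; simp at hadj; omega
  · rintro ⟨hadj, -⟩; simp at hadj; omega

lemma XL_xyx (n : ℕ) {x y : ℕ} (hx : x % 2 = 0) (hadj : y = x + 1 ∨ x = y + 1)
    (hxn : x < n) (hyn : y < n) :
    XL n x * XL n y * XL n x = XL n x * XL n y := by
  unfold XL
  rw [dif_pos hxn, dif_pos hyn]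
  simp only [← map_mul]
  refine hk_rel_of (Or.inr (Or.inr (Or.inr (Or.inl ⟨_, _, ⟨by simpa using hadj, ?_⟩, ?_, rfl, rfl⟩))))
  · simpa [Nat.even_iff] using hx
  · rintro ⟨-, he⟩; rw [Nat.even_iff] at he; simp at he; omega

lemma XL_yxy (n : ℕ) {x y : ℕ} (hx : x % 2 = 0) (hadj : y = x + 1 ∨ x = y + 1)
    (hxn : x < n) (hyn : y < n) :
    XL n y * XL n x * XL n y = XL n x * XL n y := by
  have h1 : altE n ⟨x, hxn⟩ ⟨y, hyn⟩ := ⟨by simpa using hadj, by simpa [Nat.even_iff] using hx⟩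
  have h2 : ¬ altE n ⟨y, hyn⟩ ⟨x, hxn⟩ := by
    rintro ⟨-, he⟩; rw [Nat.even_iff] at he; simp at he; omega
  have e1 : HKmk (altE n) (.of ⟨x,hxn⟩ * .of ⟨y,hyn⟩ * .of ⟨x,hxn⟩) =
      HKmk (altE n) (.of ⟨y,hyn⟩ * .of ⟨x,hxn⟩ * .of ⟨y,hyn⟩) :=
    hk_rel_of (Or.inr (Or.inr (Or.inl ⟨_, _, h1, h2, rfl, rfl⟩)))
  have e2 : HKmk (altE n) (.of ⟨x,hxn⟩ * .of ⟨y,hyn⟩ * .of ⟨x,hxn⟩) =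
      HKmk (altE n) (.of ⟨x,hxn⟩ * .of ⟨y,hyn⟩) :=
    hk_rel_of (Or.inr (Or.inr (Or.inr (Or.inl ⟨_, _, h1, h2, rfl, rfl⟩))))
  unfold XL
  rw [dif_pos hxn, dif_pos hyn]
  simp only [← map_mul]
  rw [← e1, e2]

/-! ### Part 4: products, canonical words -/

def mprod (n : ℕ) (l : List ℕ) : HK (altE n) := (l.map (XL n)).prod

lemma mprod_nil (n : ℕ) : mprod n [] = 1 := rfl

lemma mprod_cons (n a : ℕ) (l : List ℕ) : mprod n (a :: l) = XL n a * mprod n l := by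
  simp [mprod]

lemma mprod_append (n : ℕ) (l l' : List ℕ) :
    mprod n (l ++ l') = mprod n l * mprod n l' := by
  simp [mprod]

lemma XL_sq' (n g : ℕ) (t : HK (altE n)) : XL n g * (XL n g * t) = XL n g * t := by
  rw [← mul_assoc, XL_sq]

lemma XL_comm' (n : ℕ) {g a : ℕ} (h0 : a ≠ g) (h1 : a ≠ g + 1) (h2 : g ≠ a + 1)
    (t : HK (altE n)) : XL n g * (XL n a * t) = XL n a * (XL n g * t) := by
  rw [← mul_assoc, XL_comm n h0 h1 h2, mul_assoc]

lemma XL_xyx' (n : ℕ) {x y : ℕ} (hx : x % 2 = 0) (hadj : y = x + 1 ∨ x = y + 1)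
    (hxn : x < n) (hyn : y < n) (t : HK (altE n)) :
    XL n x * (XL n y * (XL n x * t)) = XL n x * (XL n y * t) := by
  rw [← mul_assoc, ← mul_assoc, XL_xyx n hx hadj hxn hyn, mul_assoc]

lemma XL_yxy' (n : ℕ) {x y : ℕ} (hx : x % 2 = 0) (hadj : y = x + 1 ∨ x = y + 1)
    (hxn : x < n) (hyn : y < n) (t : HK (altE n)) :
    XL n y * (XL n x * (XL n y * t)) = XL n x * (XL n y * t) := by
  rw [← mul_assoc, ← mul_assoc, XL_yxy n hx hadj hxn hyn, mul_assoc]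

lemma mprod_comm (n : ℕ) {g : ℕ} {l : List ℕ}
    (h : ∀ a ∈ l, a ≠ g ∧ a ≠ g + 1 ∧ g ≠ a + 1) :
    XL n g * mprod n l = mprod n l * XL n g := by
  induction l with
  | nil => simp [mprod_nil]
  | cons a t ih =>
      have ha := h a (by simp)
      rw [mprod_cons, ← mul_assoc, XL_comm n ha.1 ha.2.1 ha.2.2, mul_assoc,
        ih (fun b hb => h b (by simp [hb])), ← mul_assoc]

lemma mprod_comm' (n : ℕ) {g : ℕ} {l : List ℕ}
    (h : ∀ a ∈ l, a ≠ g ∧ a ≠ g + 1 ∧ g ≠ a + 1) (t : HK (altE n)) :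
    XL n g * (mprod n l * t) = mprod n l * (XL n g * t) := by
  rw [← mul_assoc, mprod_comm n h, mul_assoc]

/-- Goodness of a state relative to `n` vertices. -/
def goodSt (n : ℕ) (σ : HKSt) : Prop :=
  (∀ i, σ.1 i = true → i < n) ∧ (∀ j, σ.2 j = true → σ.1 j = true ∧ σ.1 (j+1) = true)

/-- Canonical word of a state, on the first `k` vertices. -/
def psi (σ : HKSt) : ℕ → List ℕ
  | 0 => []
  | k+1 => if σ.1 k = true then
      (if 0 < k ∧ σ.2 (k-1) = true then k :: psi σ k else psi σ k ++ [k])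
    else psi σ k

lemma psi_succ_front {σ : HKSt} {k : ℕ} (h : σ.1 k = true) (hf : 0 < k ∧ σ.2 (k-1) = true) :
    psi σ (k+1) = k :: psi σ k := by simp [psi, h, hf]

lemma psi_succ_back {σ : HKSt} {k : ℕ} (h : σ.1 k = true) (hb : ¬ (0 < k ∧ σ.2 (k-1) = true)) :
    psi σ (k+1) = psi σ k ++ [k] := by simp only [psi, if_pos h, if_neg hb]

lemma psi_succ_skip {σ : HKSt} {k : ℕ} (h : σ.1 k = false) :
    psi σ (k+1) = psi σ k := by simp [psi, h]

lemma psi_mem {σ : HKSt} : ∀ {k : ℕ} {a : ℕ}, a ∈ psi σ k → a < k ∧ σ.1 a = true := by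
  intro k
  induction k with
  | zero => intro a ha; simp [psi] at ha
  | succ k ih =>
      intro a ha
      by_cases h : σ.1 k = true
      · by_cases hf : 0 < k ∧ σ.2 (k-1) = true
        · rw [psi_succ_front h hf] at ha
          rcases List.mem_cons.mp ha with rfl | ha
          · exact ⟨by omega, h⟩
          · exact ⟨by have := (ih ha).1; omega, (ih ha).2⟩
        · rw [psi_succ_back h hf] at ha
          rcases List.mem_append.mp ha with ha | ha
          · exact ⟨by have := (ih ha).1; omega, (ih ha).2⟩
          · simp at ha; subst ha; exact ⟨by omega, h⟩
      · rw [psi_succ_skip (by simpa using h)] at ha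
        have := ih ha
        exact ⟨by omega, this.2⟩

/-- Letters of `psi σ k` all commute with `g` provided `k < g`. -/
lemma psi_comm_cond {σ : HKSt} {k g : ℕ} (hkg : k < g) :
    ∀ a ∈ psi σ k, a ≠ g ∧ a ≠ g + 1 ∧ g ≠ a + 1 := by
  intro a ha
  have := (psi_mem ha).1
  omega

lemma mprod_singleton (n a : ℕ) : mprod n [a] = XL n a := by simp [mprod]

/-- Key identity: for odd `j+1`, `b c a b = c a b` (b = j+1, a = j, c = j+2). -/
lemma HK_I1 (n : ℕ) {j : ℕ} (hj : j % 2 = 0) (hn : j + 2 < n) (t : HK (altE n)) :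
    XL n (j+1) * (XL n (j+2) * (XL n j * (XL n (j+1) * t))) =
      XL n (j+2) * (XL n j * (XL n (j+1) * t)) := by
  have hcomm : ∀ t, XL n j * (XL n (j+2) * t) = XL n (j+2) * (XL n j * t) :=
    fun t => XL_comm' n (by omega) (by omega) (by omega) t
  have hj2 : (j+2) % 2 = 0 := by omega
  calc XL n (j+1) * (XL n (j+2) * (XL n j * (XL n (j+1) * t)))
      = XL n (j+1) * (XL n j * (XL n (j+2) * (XL n (j+1) * t))) := by
        rw [XL_comm' n (g := j+2) (a := j) (by omega) (by omega) (by omega)]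
    _ = XL n (j+1) * (XL n j * (XL n (j+1) * (XL n (j+2) * (XL n (j+1) * t)))) := by
        rw [XL_yxy' n (x := j+2) (y := j+1) hj2 (by omega) (by omega) (by omega)]
    _ = XL n j * (XL n (j+1) * (XL n (j+2) * (XL n (j+1) * t))) := by
        rw [XL_yxy' n (x := j) (y := j+1) hj (by omega) (by omega) (by omega)]
    _ = XL n j * (XL n (j+2) * (XL n (j+1) * t)) := by
        rw [XL_yxy' n (x := j+2) (y := j+1) hj2 (by omega) (by omega) (by omega)]
    _ = XL n (j+2) * (XL n j * (XL n (j+1) * t)) := hcomm _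

/-- Absorption: for odd `g` present in `p`, prepending `g` is absorbed. -/
lemma Kabs {n : ℕ} {p : HKSt} (hp : goodSt n p) {g : ℕ} (hg : g < n) (h1 : g % 2 = 1)
    (h2 : p.1 g = true) :
    ∀ k, g < k → k ≤ n → XL n g * mprod n (psi p k) = mprod n (psi p k) := by
  intro k
  induction k with
  | zero => intro h; omega
  | succ k ih =>
    intro hgk hkn
    rcases Nat.lt_or_ge g k with hlt | hge
    · -- step case
      by_cases hS : p.1 k = true
      · by_cases hf : 0 < k ∧ p.2 (k-1) = true
        · rw [psi_succ_front hS hf, mprod_cons]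
          rcases Nat.eq_or_lt_of_le (Nat.succ_le_of_lt hlt) with hk1 | hk2
          · -- k = g + 1
            subst hk1
            by_cases hf2 : 0 < g ∧ p.2 (g-1) = true
            · rw [psi_succ_front h2 hf2, mprod_cons]
              exact XL_yxy' n (x := g+1) (y := g) (by omega) (Or.inr rfl) (by omega) (by omega) _
            · rw [psi_succ_back h2 hf2, mprod_append, mprod_singleton]
              by_cases hprev : 0 < g ∧ p.1 (g-1) = true
              · obtain ⟨j, rfl⟩ : ∃ j, g = j + 1 := ⟨g-1, by omega⟩
                have hj : p.1 j = true := by simpa using hprev.2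
                have hcg : ∀ a ∈ psi p j, a ≠ (j+1) ∧ a ≠ (j+1) + 1 ∧ (j+1) ≠ a + 1 :=
                  psi_comm_cond (by omega)
                by_cases hf3 : 0 < j ∧ p.2 (j-1) = true
                · rw [psi_succ_front hj hf3, mprod_cons]
                  simp only [mul_assoc]
                  rw [← mprod_comm n hcg]
                  exact HK_I1 n (by omega) (by omega) _
                · rw [psi_succ_back hj hf3, mprod_append, mprod_singleton]
                  simp only [mul_assoc]
                  rw [mprod_comm' n (psi_comm_cond (by omega)),
                    mprod_comm' n hcg]
                  have := HK_I1 n (j := j) (by omega) (by omega) 1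
                  simp only [mul_one] at this
                  rw [this]
              · have hcond : ∀ a ∈ psi p g, a ≠ g ∧ a ≠ g + 1 ∧ g ≠ a + 1 := by
                  intro a ha
                  have h := psi_mem ha
                  refine ⟨by omega, by omega, fun hc => ?_⟩
                  exact absurd ⟨by omega, by rw [show g - 1 = a by omega]; exact h.2⟩ hprev
                have hcond' : ∀ a ∈ psi p g, a ≠ (g+1) ∧ a ≠ (g+1) + 1 ∧ (g+1) ≠ a + 1 := by
                  intro a ha
                  have h := psi_mem ha
                  exact ⟨by omega, by omega, by omega⟩
                try simp only [mul_assoc]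
                rw [mprod_comm' n hcond', mprod_comm' n hcond]
                have := XL_yxy' n (x := g+1) (y := g) (by omega) (Or.inr rfl)
                  (by omega) (by omega) 1
                simp only [mul_one] at this
                rw [this]
          · -- k ≥ g + 2
            rw [XL_comm' n (by omega) (by omega) (by omega), ih (by omega) (by omega)]
        · rw [psi_succ_back hS hf, mprod_append, mprod_singleton, ← mul_assoc,
            ih hlt (by omega)]
      · rw [psi_succ_skip (by simpa using hS)]
        exact ih hlt (by omega)
    · -- base case : k = g
      have hkg : k = g := by omega
      subst hkg
      by_cases hf : 0 < k ∧ p.2 (k-1) = true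
      · rw [psi_succ_front h2 hf, mprod_cons, XL_sq']
      · rw [psi_succ_back h2 hf, mprod_append, mprod_singleton]
        by_cases hprev : 0 < k ∧ p.1 (k-1) = true
        · obtain ⟨j, rfl⟩ : ∃ j, k = j + 1 := ⟨k-1, by omega⟩
          have hj : p.1 j = true := by simpa using hprev.2
          have hcg : ∀ a ∈ psi p j, a ≠ (j+1) ∧ a ≠ (j+1) + 1 ∧ (j+1) ≠ a + 1 :=
            psi_comm_cond (by omega)
          by_cases hf3 : 0 < j ∧ p.2 (j-1) = true
          · rw [psi_succ_front hj hf3, mprod_cons]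
            simp only [mul_assoc]
            rw [← mprod_comm n hcg]
            exact XL_yxy' n (x := j) (y := j+1) (by omega) (Or.inl rfl) (by omega) (by omega) _
          · rw [psi_succ_back hj hf3, mprod_append, mprod_singleton]
            simp only [mul_assoc]
            rw [mprod_comm' n hcg]
            have := XL_yxy' n (x := j) (y := j+1) (by omega) (Or.inl rfl)
              (by omega) (by omega) 1
            simp only [mul_one] at this
            rw [this]
        · have hcond : ∀ a ∈ psi p k, a ≠ k ∧ a ≠ k + 1 ∧ k ≠ a + 1 := by
            intro a ha
            have h := psi_mem ha
            refine ⟨by omega, by omega, fun hc => ?_⟩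
            exact absurd ⟨by omega, by rw [show k - 1 = a by omega]; exact h.2⟩ hprev
          rw [mprod_comm' n hcond, XL_sq]

lemma psi_agree {σ σ' : HKSt} : ∀ {k : ℕ}, (∀ i, i < k → σ.1 i = σ'.1 i) →
    (∀ j, j + 1 < k → σ.2 j = σ'.2 j) → psi σ k = psi σ' k := by
  intro k
  induction k with
  | zero => intro _ _; rfl
  | succ k ih =>
    intro hS hM
    have e1 : σ.1 k = σ'.1 k := hS k (by omega)
    have erec : psi σ k = psi σ' k := ih (fun i hi => hS i (by omega)) (fun j hj => hM j (by omega))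
    by_cases h : σ.1 k = true
    · have h' : σ'.1 k = true := by rw [← e1]; exact h
      by_cases hf : 0 < k ∧ σ.2 (k-1) = true
      · have hf' : 0 < k ∧ σ'.2 (k-1) = true :=
          ⟨hf.1, by rw [← hM (k-1) (by omega)]; exact hf.2⟩
        rw [psi_succ_front h hf, psi_succ_front h' hf', erec]
      · have hf' : ¬ (0 < k ∧ σ'.2 (k-1) = true) := fun hc =>
          hf ⟨hc.1, by rw [hM (k-1) (by omega)]; exact hc.2⟩
        rw [psi_succ_back h hf, psi_succ_back h' hf', erec]
    · rw [psi_succ_skip (by simpa using h), psi_succ_skip (by rw [← e1]; simpa using h), erec]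

lemma psi_pact_le {p : HKSt} {g k : ℕ} (hkg : k ≤ g) :
    psi (pact g p) k = psi p k := by
  refine psi_agree (fun i hi => ?_) (fun j hj => ?_)
  · rw [pact_fst]; simp [show i ≠ g by omega]
  · simp only [pact_snd]
    split
    · rfl
    · rw [if_neg (by omega), if_neg (by omega)]

/-- Key identity: for even `j+1`, `b c a b = b c a` (b = j+1, a = j, c = j+2). -/
lemma HK_I2 (n : ℕ) {j : ℕ} (hj : j % 2 = 1) (hn : j + 2 < n) (t : HK (altE n)) :
    XL n (j+1) * (XL n (j+2) * (XL n j * (XL n (j+1) * t))) =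
      XL n (j+1) * (XL n (j+2) * (XL n j * t)) := by
  have hb : (j+1) % 2 = 0 := by omega
  calc XL n (j+1) * (XL n (j+2) * (XL n j * (XL n (j+1) * t)))
      = XL n (j+1) * (XL n j * (XL n (j+2) * (XL n (j+1) * t))) := by
        rw [XL_comm' n (g := j+2) (a := j) (by omega) (by omega) (by omega)]
    _ = XL n (j+1) * (XL n j * (XL n (j+1) * (XL n (j+2) * (XL n (j+1) * t)))) := by
        rw [XL_xyx' n (x := j+1) (y := j) hb (Or.inr rfl) (by omega) (by omega)]
    _ = XL n (j+1) * (XL n j * (XL n (j+1) * (XL n (j+2) * t))) := by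
        rw [XL_xyx' n (x := j+1) (y := j+2) hb (Or.inl rfl) (by omega) (by omega)]
    _ = XL n (j+1) * (XL n j * (XL n (j+2) * t)) := by
        rw [XL_xyx' n (x := j+1) (y := j) hb (Or.inr rfl) (by omega) (by omega)]
    _ = XL n (j+1) * (XL n (j+2) * (XL n j * t)) := by
        rw [XL_comm' n (g := j+2) (a := j) (by omega) (by omega) (by omega)]

/-- The update lemma: prepending `g` to the canonical word of `p` gives the canonical
word of `pact g p`, as elements of the Hecke-Kiselman monoid. -/
lemma Kupd {n : ℕ} {p : HKSt} (hp : goodSt n p) {g : ℕ} (hg : g < n)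
    (hcase : ¬ (g % 2 = 1 ∧ p.1 g = true)) :
    ∀ k, g < k → k ≤ n → XL n g * mprod n (psi p k) = mprod n (psi (pact g p) k) := by
  have hqS : ∀ i, (pact g p).1 i = if i = g then true else p.1 i := fun i => by
    rw [pact_fst]
  have hqM : ∀ j, (pact g p).2 j =
      if j + 1 = g then p.1 j else if j = g then false else p.2 j := fun j => by
    simp only [pact_snd]
    rw [if_neg hcase]
  intro k
  induction k with
  | zero => intro h; omega
  | succ k ih =>
    intro hgk hkn
    have hrec0 : psi (pact g p) g = psi p g := psi_pact_le le_rfl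
    rcases Nat.lt_or_ge g k with hlt | hge
    · -- step case, k > g
      have hSk : (pact g p).1 k = p.1 k := by rw [hqS]; simp [show k ≠ g by omega]
      by_cases hS : p.1 k = true
      · rcases Nat.eq_or_lt_of_le (Nat.succ_le_of_lt hlt) with hk1 | hk2
        · -- k = g + 1
          subst hk1
          simp only [Nat.succ_eq_add_one] at *
          have hqMg : (pact g p).2 g = false := by rw [hqM]; simp
          have hqback : psi (pact g p) (g+1+1) = psi (pact g p) (g+1) ++ [g+1] :=
            psi_succ_back (by rw [hSk]; exact hS) (by rw [show g+1-1 = g by omega, hqMg]; simp)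
          by_cases hMg : p.2 g = true
          · -- p-side front
            rw [psi_succ_front hS ⟨by omega, by simpa using hMg⟩, hqback, mprod_cons,
              mprod_append, mprod_singleton, ← ih (by omega) (by omega)]
            -- goal : XL g * (XL (g+1) * m w₁) = (XL g * m w₁) * XL (g+1)
            have hpg : p.1 g = true := (hp.2 g hMg).1
            have hgeven : g % 2 = 0 := by
              rcases Nat.even_or_odd g with h | h
              · exact Nat.even_iff.mp h
              · exact absurd ⟨Nat.odd_iff.mp h, hpg⟩ hcase
            by_cases hf2 : 0 < g ∧ p.2 (g-1) = true
            · rw [psi_succ_front hpg hf2, mprod_cons]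
              have hcg : ∀ a ∈ psi p g, a ≠ (g+1) ∧ a ≠ (g+1) + 1 ∧ (g+1) ≠ a + 1 :=
                psi_comm_cond (by omega)
              simp only [mul_assoc]
              rw [XL_xyx' n (x := g) (y := g+1) hgeven (Or.inl rfl) (by omega) (by omega),
                XL_sq' n g, ← mprod_comm n hcg]
            · rw [psi_succ_back hpg hf2, mprod_append, mprod_singleton]
              by_cases hprev : 0 < g ∧ p.1 (g-1) = true
              · obtain ⟨j, rfl⟩ : ∃ j, g = j + 1 := ⟨g-1, by omega⟩
                have hjodd : j % 2 = 1 := by omega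
                have hj : p.1 j = true := by simpa using hprev.2
                have hcb : ∀ a ∈ psi p j, a ≠ (j+1) ∧ a ≠ (j+1) + 1 ∧ (j+1) ≠ a + 1 :=
                  psi_comm_cond (by omega)
                have hcc : ∀ a ∈ psi p j, a ≠ (j+2) ∧ a ≠ (j+2) + 1 ∧ (j+2) ≠ a + 1 :=
                  fun a ha => by have := (psi_mem ha).1; exact ⟨by omega, by omega, by omega⟩
                simp only [show j+1+1 = j+2 from rfl]
                by_cases hf3 : 0 < j ∧ p.2 (j-1) = true
                · rw [psi_succ_front hj hf3, mprod_cons]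
                  simp only [mul_assoc]
                  rw [← mprod_comm n hcb, HK_I2 n hjodd (by omega),
                    ← mprod_comm' n hcb, ← mprod_comm n hcc,
                    XL_xyx' n (x := j+1) (y := j) (by omega) (Or.inr rfl) (by omega) (by omega),
                    XL_comm' n (g := j) (a := j+2) (by omega) (by omega) (by omega)]
                · rw [psi_succ_back hj hf3, mprod_append, mprod_singleton]
                  simp only [mul_assoc]
                  rw [mprod_comm' n (g := j+2) hcc, mprod_comm' n (g := j+1) hcb,
                    mprod_comm' n (g := j+1) hcb]
                  have hI2 := HK_I2 n (j := j) hjodd (by omega) 1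
                  simp only [mul_one] at hI2
                  rw [hI2,
                    XL_xyx' n (x := j+1) (y := j) hgeven (Or.inr rfl) (by omega) (by omega),
                    XL_comm n (g := j) (a := j+2) (by omega) (by omega) (by omega)]
              · have hcond : ∀ a ∈ psi p g, a ≠ g ∧ a ≠ g + 1 ∧ g ≠ a + 1 := by
                  intro a ha
                  have h := psi_mem ha
                  refine ⟨by omega, by omega, fun hc => ?_⟩
                  exact absurd ⟨by omega, by rw [show g - 1 = a by omega]; exact h.2⟩ hprev
                have hcond' : ∀ a ∈ psi p g, a ≠ (g+1) ∧ a ≠ (g+1) + 1 ∧ (g+1) ≠ a + 1 :=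
                  fun a ha => by have := (psi_mem ha).1; exact ⟨by omega, by omega, by omega⟩
                simp only [mul_assoc]
                rw [mprod_comm' n hcond', mprod_comm' n hcond, mprod_comm' n hcond]
                have h1 := XL_xyx' n (x := g) (y := g+1) hgeven (Or.inl rfl)
                  (by omega) (by omega) 1
                have h2 := XL_sq' n (t := XL n (g+1)) g
                simp only [mul_one] at h1
                rw [h1, h2]
          · -- p-side back
            rw [psi_succ_back hS (by simp [hMg]), hqback, mprod_append, mprod_append,
              mprod_singleton, ← mul_assoc, ih (by omega) (by omega)]
        · -- k ≥ g + 2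
          have hMk : (pact g p).2 (k-1) = p.2 (k-1) := by
            rw [hqM, if_neg (by omega), if_neg (by omega)]
          by_cases hf : 0 < k ∧ p.2 (k-1) = true
          · rw [psi_succ_front hS hf, psi_succ_front (by rw [hSk]; exact hS)
              (by rw [hMk]; exact hf), mprod_cons, mprod_cons,
              XL_comm' n (g := g) (a := k) (by omega) (by omega) (by omega),
              ih (by omega) (by omega)]
          · rw [psi_succ_back hS hf, psi_succ_back (by rw [hSk]; exact hS)
              (by rw [hMk]; exact hf), mprod_append, mprod_append, mprod_singleton,
              ← mul_assoc, ih (by omega) (by omega)]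
      · rw [psi_succ_skip (by simpa using hS), psi_succ_skip (by rw [hSk]; simpa using hS)]
        exact ih hlt (by omega)
    · -- base case : k = g
      have hkg : k = g := by omega
      subst hkg
      have hqSk : (pact k p).1 k = true := by rw [hqS]; simp
      by_cases hS : p.1 k = true
      · -- k even
        have hgeven : k % 2 = 0 := by
          rcases Nat.even_or_odd k with h | h
          · exact Nat.even_iff.mp h
          · exact absurd ⟨Nat.odd_iff.mp h, hS⟩ hcase
        by_cases hf : 0 < k ∧ p.2 (k-1) = true
        · have hpk1 : p.1 (k-1) = true := by
            have := (hp.2 (k-1) hf.2).1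
            exact this
          have hqf : 0 < k ∧ (pact k p).2 (k-1) = true :=
            ⟨hf.1, by rw [hqM, if_pos (by omega)]; exact hpk1⟩
          rw [psi_succ_front hS hf, psi_succ_front hqSk hqf, hrec0, mprod_cons, XL_sq']
        · by_cases hprev : 0 < k ∧ p.1 (k-1) = true
          · have hqf : 0 < k ∧ (pact k p).2 (k-1) = true :=
              ⟨hprev.1, by rw [hqM, if_pos (by omega)]; exact hprev.2⟩
            rw [psi_succ_back hS hf, psi_succ_front hqSk hqf, hrec0, mprod_append,
              mprod_singleton, mprod_cons]
            obtain ⟨j, rfl⟩ : ∃ j, k = j + 1 := ⟨k-1, by omega⟩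
            have hj : p.1 j = true := by simpa using hprev.2
            have hcb : ∀ a ∈ psi p j, a ≠ (j+1) ∧ a ≠ (j+1) + 1 ∧ (j+1) ≠ a + 1 :=
              psi_comm_cond (by omega)
            by_cases hf3 : 0 < j ∧ p.2 (j-1) = true
            · rw [psi_succ_front hj hf3, mprod_cons]
              simp only [mul_assoc]
              rw [← mprod_comm n hcb,
                XL_xyx' n (x := j+1) (y := j) (by omega) (Or.inr rfl) (by omega) (by omega)]
            · rw [psi_succ_back hj hf3, mprod_append, mprod_singleton]
              simp only [mul_assoc]
              rw [mprod_comm' n hcb]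
              have h1 := XL_xyx' n (x := j+1) (y := j) (by omega) (Or.inr rfl)
                (by omega) (by omega) 1
              simp only [mul_one] at h1
              rw [h1, mprod_comm' n (g := j+1) hcb]
          · have hqb : ¬ (0 < k ∧ (pact k p).2 (k-1) = true) := by
              rintro ⟨h0, hm⟩
              rw [hqM, if_pos (by omega)] at hm
              exact hprev ⟨h0, hm⟩
            rw [psi_succ_back hS hf, psi_succ_back hqSk hqb, hrec0, mprod_append,
              mprod_singleton]
            have hcond : ∀ a ∈ psi p k, a ≠ k ∧ a ≠ k + 1 ∧ k ≠ a + 1 := by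
              intro a ha
              have h := psi_mem ha
              refine ⟨by omega, by omega, fun hc => ?_⟩
              exact absurd ⟨by omega, by rw [show k - 1 = a by omega]; exact h.2⟩ hprev
            rw [mprod_comm' n hcond, XL_sq]
      · -- p.1 k = false : vertex newly added
        rw [psi_succ_skip (by simpa using hS)]
        by_cases hprev : 0 < k ∧ p.1 (k-1) = true
        · have hqf : 0 < k ∧ (pact k p).2 (k-1) = true :=
            ⟨hprev.1, by rw [hqM, if_pos (by omega)]; exact hprev.2⟩
          rw [psi_succ_front hqSk hqf, hrec0, mprod_cons]
        · have hqb : ¬ (0 < k ∧ (pact k p).2 (k-1) = true) := by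
            rintro ⟨h0, hm⟩
            rw [hqM, if_pos (by omega)] at hm
            exact hprev ⟨h0, hm⟩
          rw [psi_succ_back hqSk hqb, hrec0, mprod_append, mprod_singleton]
          refine mprod_comm n (fun a ha => ?_)
          have h := psi_mem ha
          refine ⟨by omega, by omega, fun hc => ?_⟩
          exact absurd ⟨by omega, by rw [show k - 1 = a by omega]; exact h.2⟩ hprev

/-! ### Part 5: evaluation and reconstruction -/

def sigma0 : HKSt := (fun _ => false, fun _ => false)

def fAct (l : List ℕ) (σ : HKSt) : HKSt := l.foldr pact σ

lemma fAct_nil (σ : HKSt) : fAct [] σ = σ := rfl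

lemma fAct_cons (a : ℕ) (l : List ℕ) (σ : HKSt) : fAct (a :: l) σ = pact a (fAct l σ) := rfl

lemma fAct_append (l l' : List ℕ) (σ : HKSt) : fAct (l ++ l') σ = fAct l (fAct l' σ) := by
  simp [fAct]

lemma HKPhi_eval (n : ℕ) (w : FreeMonoid (Fin n)) (σ : HKSt) :
    HKPhi n w σ = fAct ((FreeMonoid.toList w).map Fin.val) σ := by
  induction w using FreeMonoid.recOn with
  | one => rfl
  | of_mul x xs ih =>
      rw [map_mul]
      show (HKPhi n (FreeMonoid.of x)) ((HKPhi n xs) σ) = _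
      rw [ih]
      rfl

lemma good_pact {n g : ℕ} {σ : HKSt} (h : goodSt n σ) (hg : g < n) :
    goodSt n (pact g σ) := by
  by_cases hc : g % 2 = 1 ∧ σ.1 g = true
  · rw [pact_odd_mem hc.1 hc.2]; exact h
  · rw [pact_upd hc]
    constructor
    · intro i hi
      simp only at hi
      split at hi
      · omega
      · exact h.1 i hi
    · intro j hj
      simp only at hj ⊢
      split at hj
      · refine ⟨?_, ?_⟩
        · rw [if_neg (by omega)]; exact hj
        · rw [if_pos (by omega)]
      · split at hj
        · exact absurd hj (by simp)
        · have := h.2 j hj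
          refine ⟨?_, ?_⟩
          · split
            · rfl
            · exact this.1
          · split
            · rfl
            · exact this.2

lemma loc_high_S {k : ℕ} {l : List ℕ} (hl : ∀ a ∈ l, a < k) (σ : HKSt) :
    ∀ i, k ≤ i → (fAct l σ).1 i = σ.1 i := by
  induction l with
  | nil => intro i _; rfl
  | cons a t ih =>
      intro i hi
      rw [fAct_cons]
      simp only [pact_fst]
      have ha := hl a (by simp)
      rw [if_neg (by omega)]
      exact ih (fun b hb => hl b (by simp [hb])) i hi

lemma loc_high_M {k : ℕ} {l : List ℕ} (hl : ∀ a ∈ l, a < k) (σ : HKSt) :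
    ∀ j, k ≤ j → (fAct l σ).2 j = σ.2 j := by
  induction l with
  | nil => intro j _; rfl
  | cons a t ih =>
      intro j hj
      rw [fAct_cons]
      have ha := hl a (by simp)
      have hrec := ih (fun b hb => hl b (by simp [hb])) j hj
      simp only [pact_snd]
      split
      · exact hrec
      · rw [if_neg (by omega), if_neg (by omega)]
        exact hrec

lemma loc_agree {k : ℕ} {l : List ℕ} (hl : ∀ a ∈ l, a < k) {σ σ' : HKSt}
    (hS : ∀ i, i < k → σ.1 i = σ'.1 i) (hM : ∀ j, j < k → σ.2 j = σ'.2 j) :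
    (∀ i, i < k → (fAct l σ).1 i = (fAct l σ').1 i) ∧
    (∀ j, j < k → (fAct l σ).2 j = (fAct l σ').2 j) := by
  induction l with
  | nil => exact ⟨hS, hM⟩
  | cons a t ih =>
      have ha := hl a (by simp)
      obtain ⟨ihS, ihM⟩ := ih (fun b hb => hl b (by simp [hb]))
      have hguard : (fAct t σ).1 a = (fAct t σ').1 a := ihS a ha
      constructor
      · intro i hi
        rw [fAct_cons, fAct_cons]
        simp only [pact_fst]
        split
        · rfl
        · exact ihS i hi
      · intro j hj
        rw [fAct_cons, fAct_cons]
        simp only [pact_snd]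
        rw [hguard]
        split
        · exact ihM j hj
        · split
          · exact ihS j (by omega)
          · split
            · rfl
            · exact ihM j hj

/-- The truncation of a state to the first `k` vertices. -/
def piSt (p : HKSt) (k : ℕ) : HKSt :=
  (fun i => if i < k then p.1 i else false, fun j => if j + 1 < k then p.2 j else false)

lemma piSt_zero (p : HKSt) : piSt p 0 = sigma0 := by
  refine Prod.ext ?_ ?_ <;> funext i <;> simp [piSt, sigma0]

lemma recon {n : ℕ} {p : HKSt} (hp : goodSt n p) :
    ∀ k, fAct (psi p k) sigma0 = piSt p k := by
  intro k
  induction k with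
  | zero => rw [piSt_zero]; rfl
  | succ k ih =>
    by_cases hS : p.1 k = true
    · by_cases hf : 0 < k ∧ p.2 (k-1) = true
      · rw [psi_succ_front hS hf, fAct_cons, ih]
        have hg : ¬ (k % 2 = 1 ∧ (piSt p k).1 k = true) := by
          simp [piSt]
        rw [pact_upd hg]
        refine Prod.ext ?_ ?_ <;> funext i <;> simp only [piSt]
        · by_cases h1 : i = k
          · rw [if_pos h1, if_pos (by omega), h1, hS]
          · rw [if_neg h1]
            by_cases h2 : i < k
            · rw [if_pos h2, if_pos (by omega)]
            · rw [if_neg h2, if_neg (by omega)]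
        · have hk1 : p.1 (k-1) = true := (hp.2 (k-1) hf.2).1
          by_cases h1 : i + 1 = k
          · rw [if_pos h1, if_pos (by omega), if_pos (by omega),
              show i = k - 1 by omega, hk1, hf.2]
          · rw [if_neg h1]
            by_cases h2 : i = k
            · rw [if_pos h2, if_neg (by omega)]
            · rw [if_neg h2]
              by_cases h3 : i + 1 < k
              · rw [if_pos h3, if_pos (by omega)]
              · rw [if_neg h3, if_neg (by omega)]
      · rw [psi_succ_back hS hf, fAct_append]
        have h0 : pact k sigma0 = (fun i => if i = k then true else false, fun _ => false) := by
          rw [pact_upd (by simp [sigma0])]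
          refine Prod.ext ?_ ?_ <;> funext i <;> simp [sigma0] <;> split_ifs <;> rfl
        show fAct (psi p k) (pact k sigma0) = piSt p (k+1)
        have hmem : ∀ a ∈ psi p k, a < k := fun a ha => (psi_mem ha).1
        have hag := loc_agree hmem (σ := pact k sigma0) (σ' := sigma0)
          (fun i hi => by rw [h0]; simp [sigma0]; omega)
          (fun j hj => by rw [h0]; simp [sigma0])
        refine Prod.ext ?_ ?_ <;> funext i
        · rcases Nat.lt_or_ge i k with hik | hik
          · rw [hag.1 i hik, ih]
            simp only [piSt]
            rw [if_pos hik, if_pos (by omega)]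
          · rw [loc_high_S hmem _ i hik, h0]
            simp only [piSt]
            rcases Nat.eq_or_lt_of_le hik with rfl | hik2
            · rw [if_pos rfl, if_pos (by omega), hS]
            · rw [if_neg (by omega), if_neg (by omega)]
        · rcases Nat.lt_or_ge i k with hik | hik
          · rw [hag.2 i hik, ih]
            simp only [piSt]
            rcases Nat.lt_or_ge (i+1) k with h2 | h2
            · rw [if_pos h2, if_pos (by omega)]
            · rw [if_neg (by omega)]
              have : i + 1 = k := by omega
              rw [if_pos (by omega)]
              have hpf : p.2 i = false := by
                rcases Bool.eq_false_or_eq_true (p.2 i) with h | h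
                · exact absurd ⟨by omega, by rw [show k - 1 = i by omega]; exact h⟩ hf
                · exact h
              rw [hpf]
          · rw [loc_high_M hmem _ i hik, h0]
            simp only [piSt]
            rw [if_neg (by omega)]
    · rw [psi_succ_skip (by simpa using hS), ih]
      have hSf : p.1 k = false := by simpa using hS
      refine Prod.ext ?_ ?_ <;> funext i <;> simp only [piSt]
      · by_cases h : i < k
        · rw [if_pos h, if_pos (by omega)]
        · rw [if_neg h]
          by_cases h2 : i < k + 1
          · rw [if_pos h2, show i = k by omega, hSf]
          · rw [if_neg h2]
      · by_cases h : i + 1 < k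
        · rw [if_pos h, if_pos (by omega)]
        · rw [if_neg h]
          by_cases h2 : i + 1 < k + 1
          · rw [if_pos h2]
            have hik : i + 1 = k := by omega
            have hpf : p.2 i = false := by
              rcases Bool.eq_false_or_eq_true (p.2 i) with hb | hb
              · exfalso
                have h3 := (hp.2 i hb).2
                rw [hik, hSf] at h3
                exact Bool.false_ne_true h3
              · exact hb
            rw [hpf]
          · rw [if_neg h2]

lemma piSt_full {n : ℕ} {p : HKSt} (hp : goodSt n p) : piSt p n = p := by
  refine Prod.ext ?_ ?_ <;> funext i <;> simp only [piSt]
  · split_ifs with h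
    · rfl
    · rcases Bool.eq_false_or_eq_true (p.1 i) with hb | hb
      · exact absurd (hp.1 i hb) h
      · rw [hb]
  · split_ifs with h
    · rfl
    · rcases Bool.eq_false_or_eq_true (p.2 i) with hb | hb
      · exact absurd (hp.1 (i+1) (hp.2 i hb).2) (by omega)
      · rw [hb]

/-! ### Part 6: the bijection -/

lemma psi_sigma0 : ∀ k, psi sigma0 k = [] := by
  intro k
  induction k with
  | zero => rfl
  | succ k ih => rw [psi_succ_skip rfl, ih]

lemma good_sigma0 (n : ℕ) : goodSt n sigma0 :=
  ⟨fun i h => absurd h (by simp [sigma0]), fun j h => absurd h (by simp [sigma0])⟩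

lemma XL_coe {n : ℕ} (g : Fin n) : XL n (g : ℕ) = HKmk (altE n) (FreeMonoid.of g) := by
  unfold XL
  rw [dif_pos g.isLt]

lemma main_L (n : ℕ) (w : FreeMonoid (Fin n)) :
    goodSt n (HKPhi n w sigma0) ∧
      HKmk (altE n) w = mprod n (psi (HKPhi n w sigma0) n) := by
  induction w using FreeMonoid.recOn with
  | one =>
      refine ⟨?_, ?_⟩
      · rw [map_one]; exact good_sigma0 n
      · rw [map_one, map_one]
        show (1 : HK (altE n)) = mprod n (psi ((1 : Function.End HKSt) sigma0) n)
        show (1 : HK (altE n)) = mprod n (psi sigma0 n)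
        rw [psi_sigma0, mprod_nil]
  | of_mul x xs ih =>
      obtain ⟨hgood, heq⟩ := ih
      have hx : (x:ℕ) < n := x.isLt
      have hstep : HKPhi n (FreeMonoid.of x * xs) sigma0 = pact (↑x) (HKPhi n xs sigma0) := by
        rw [map_mul]; rfl
      refine ⟨?_, ?_⟩
      · rw [hstep]; exact good_pact hgood hx
      · rw [hstep, map_mul, heq, ← XL_coe]
        by_cases hc : (↑x : ℕ) % 2 = 1 ∧ (HKPhi n xs sigma0).1 ↑x = true
        · rw [pact_odd_mem hc.1 hc.2]
          exact Kabs hgood hx hc.1 hc.2 n hx le_rfl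
        · exact Kupd hgood hx hc n hx le_rfl

/-- The set of normal forms. -/
def NFt (n : ℕ) : Type := {σ : HKSt // goodSt n σ}

def FHom (n : ℕ) : HK (altE n) →* Function.End HKSt :=
  Con.lift _ (HKPhi n) (HKcon_le_ker n)

lemma FHom_mk (n : ℕ) (w : FreeMonoid (Fin n)) :
    FHom n (HKmk (altE n) w) = HKPhi n w :=
  Con.lift_mk' (HKcon_le_ker n) w

lemma FHom_mprod (n : ℕ) {l : List ℕ} (hl : ∀ a ∈ l, a < n) (σ : HKSt) :
    FHom n (mprod n l) σ = fAct l σ := by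
  induction l with
  | nil =>
      rw [mprod_nil, map_one]
      rfl
  | cons a t ih =>
      have ha := hl a (by simp)
      rw [mprod_cons, map_mul]
      show FHom n (XL n a) (FHom n (mprod n t) σ) = _
      rw [ih (fun b hb => hl b (by simp [hb])), fAct_cons]
      show FHom n (XL n a) (fAct t σ) = _
      unfold XL
      rw [dif_pos ha, FHom_mk]
      rfl

lemma good_F (n : ℕ) (x : HK (altE n)) : goodSt n (FHom n x sigma0) := by
  refine Con.induction_on x (fun w => ?_)
  rw [show ((w : (HKCon (altE n)).Quotient)) = HKmk (altE n) w from rfl, FHom_mk]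
  exact (main_L n w).1

noncomputable def hkEquiv (n : ℕ) : HK (altE n) ≃ NFt n where
  toFun x := ⟨FHom n x sigma0, good_F n x⟩
  invFun p := mprod n (psi p.1 n)
  left_inv x := by
    refine Con.induction_on x (fun w => ?_)
    show mprod n (psi (FHom n (HKmk (altE n) w) sigma0) n) = _
    rw [FHom_mk]
    exact ((main_L n w).2).symm
  right_inv p := by
    refine Subtype.ext ?_
    show FHom n (mprod n (psi p.1 n)) sigma0 = p.1
    rw [FHom_mprod n (fun a ha => (psi_mem ha).1)]
    rw [recon p.2 n, piSt_full p.2]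

lemma card_HK_eq_card_NF (n : ℕ) : Nat.card (HK (altE n)) = Nat.card (NFt n) :=
  Nat.card_congr (hkEquiv n)

/-! ### Part 7: counting normal forms -/

def Bt (n : ℕ) : Type := {σ : HKSt // goodSt (n+1) σ ∧ σ.1 n = true}

lemma good_zero {σ : HKSt} (h : goodSt 0 σ) : σ = sigma0 := by
  refine Prod.ext ?_ ?_ <;> funext i
  · rcases Bool.eq_false_or_eq_true (σ.1 i) with hb | hb
    · exact absurd (h.1 i hb) (by omega)
    · rw [hb]; rfl
  · rcases Bool.eq_false_or_eq_true (σ.2 i) with hb | hb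
    · exact absurd (h.1 i (h.2 i hb).1) (by omega)
    · rw [hb]; rfl

def st1 : HKSt := (fun i => if i = 0 then true else false, fun _ => false)

lemma bt_zero {σ : HKSt} (h : goodSt 1 σ) (h0 : σ.1 0 = true) : σ = st1 := by
  refine Prod.ext ?_ ?_ <;> funext i
  · simp only [st1]
    split
    · subst ‹i = 0›; exact h0
    · rcases Bool.eq_false_or_eq_true (σ.1 i) with hb | hb
      · exact absurd (h.1 i hb) (by omega)
      · rw [hb]
  · simp only [st1]
    rcases Bool.eq_false_or_eq_true (σ.2 i) with hb | hb
    · exact absurd (h.1 (i+1) (h.2 i hb).2) (by omega)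
    · rw [hb]

def eNF0 : NFt 0 ≃ Unit where
  toFun _ := PUnit.unit
  invFun _ := ⟨sigma0, good_sigma0 0⟩
  left_inv σ := Subtype.ext (good_zero σ.2).symm
  right_inv _ := rfl

def eB0 : Bt 0 ≃ Unit where
  toFun _ := PUnit.unit
  invFun _ := ⟨st1, ⟨fun i hi => by
      simp only [st1] at hi
      split at hi
      · omega
      · exact absurd hi (by simp), fun j hj => by
      simp only [st1] at hj
      exact absurd hj (by simp)⟩, rfl⟩
  left_inv σ := Subtype.ext (bt_zero σ.2.1 σ.2.2).symm
  right_inv _ := rfl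

def eA (n : ℕ) : NFt (n+1) ≃ NFt n ⊕ Bt n where
  toFun σ := if h : σ.1.1 n = true then Sum.inr ⟨σ.1, σ.2, h⟩ else
    Sum.inl ⟨σ.1, ⟨fun i hi => by
        have := σ.2.1 i hi
        rcases Nat.lt_or_ge i n with h2 | h2
        · exact h2
        · exact absurd hi (by rw [show i = n by omega]; simp [h]), σ.2.2⟩⟩
  invFun s := match s with
    | Sum.inl σ => ⟨σ.1, ⟨fun i hi => by have := σ.2.1 i hi; omega, σ.2.2⟩⟩
    | Sum.inr σ => ⟨σ.1, σ.2.1⟩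
  left_inv σ := by
    by_cases h : σ.1.1 n = true
    · simp only [dif_pos h]
      exact Subtype.ext rfl
    · simp only [dif_neg h]
      exact Subtype.ext rfl
  right_inv s := by
    match s with
    | Sum.inl σ =>
        have h : σ.1.1 n ≠ true := fun hc => by have := σ.2.1 n hc; omega
        simp only [dif_neg h]
        exact congrArg Sum.inl (Subtype.ext rfl)
    | Sum.inr σ =>
        simp only [dif_pos σ.2.2]
        exact congrArg Sum.inr (Subtype.ext rfl)


def zeroTop (n : ℕ) (σ : HKSt) : HKSt :=
  ((fun i => if i = n+1 then false else σ.1 i), (fun j => if j = n then false else σ.2 j))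

def restTop (n : ℕ) (b : Bool) (σ : HKSt) : HKSt :=
  ((fun i => if i = n+1 then true else σ.1 i), (fun j => if j = n then b else σ.2 j))

lemma eB_aux1 {n : ℕ} {σ : HKSt} (hg : goodSt (n+2) σ) (hn : σ.1 n = false) :
    goodSt n (zeroTop n σ) := by
  constructor
  · intro i hi
    simp only [zeroTop] at hi
    split at hi
    · exact absurd hi (by simp)
    · have h2 := hg.1 i hi
      have h3 : i ≠ n := fun hc => by rw [hc, hn] at hi; exact Bool.false_ne_true hi
      omega
  · intro j hj
    simp only [zeroTop] at hj ⊢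
    split at hj
    · exact absurd hj (by simp)
    · have h2 := hg.2 j hj
      have h4 : j ≠ n+1 := fun hc => by
        have := hg.1 (j+1) h2.2
        omega
      have h5 : j + 1 ≠ n + 1 := by
        intro hc
        rw [show j = n by omega, hn] at h2
        exact Bool.false_ne_true h2.1
      rw [if_neg h4, if_neg h5]
      exact h2
lemma eB_aux2 {n : ℕ} {σ : HKSt} (hg : goodSt (n+2) σ) (hn : σ.1 n = true) :
    goodSt (n+1) (zeroTop n σ) ∧ (zeroTop n σ).1 n = true := by
  refine ⟨⟨?_, ?_⟩, ?_⟩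
  · intro i hi
    simp only [zeroTop] at hi
    split at hi
    · exact absurd hi (by simp)
    · have h2 := hg.1 i hi
      omega
  · intro j hj
    simp only [zeroTop] at hj ⊢
    split at hj
    · exact absurd hj (by simp)
    · have h2 := hg.2 j hj
      have h4 : j ≠ n+1 := fun hc => by
        have := hg.1 (j+1) h2.2
        omega
      have h5 : j + 1 ≠ n + 1 := by omega
      rw [if_neg h4, if_neg h5]
      exact h2
  · simp only [zeroTop]
    rw [if_neg (by omega)]
    exact hn

lemma eB_aux3 {n : ℕ} {σ : HKSt} (hg : goodSt n σ) :
    goodSt (n+2) (restTop n false σ) ∧ (restTop n false σ).1 (n+1) = true := by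
  refine ⟨⟨?_, ?_⟩, ?_⟩
  · intro i hi
    simp only [restTop] at hi
    split at hi
    · omega
    · have := hg.1 i hi; omega
  · intro j hj
    simp only [restTop] at hj ⊢
    split at hj
    · exact absurd hj (by simp)
    · have h2 := hg.2 j hj
      have hb1 := hg.1 j h2.1
      have hb2 := hg.1 (j+1) h2.2
      rw [if_neg (by omega), if_neg (by omega)]
      exact h2
  · simp [restTop]

lemma eB_aux4 {n : ℕ} {σ : HKSt} (hg : goodSt (n+1) σ ∧ σ.1 n = true) (b : Bool) :
    goodSt (n+2) (restTop n b σ) ∧ (restTop n b σ).1 (n+1) = true := by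
  refine ⟨⟨?_, ?_⟩, ?_⟩
  · intro i hi
    simp only [restTop] at hi
    split at hi
    · omega
    · have := hg.1.1 i hi; omega
  · intro j hj
    simp only [restTop] at hj ⊢
    split at hj
    · subst ‹j = n›
      rw [if_neg (by omega), if_pos rfl]
      exact ⟨hg.2, rfl⟩
    · have h2 := hg.1.2 j hj
      have hb1 := hg.1.1 j h2.1
      have hb2 := hg.1.1 (j+1) h2.2
      rw [if_neg (by omega), if_neg (by omega)]
      exact h2
  · simp [restTop]

lemma zero_rest {n : ℕ} (b : Bool) {σ : HKSt} (h1 : σ.1 (n+1) = true) (h2 : σ.2 n = b) :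
    restTop n b (zeroTop n σ) = σ := by
  refine Prod.ext ?_ ?_ <;> funext i <;> simp only [restTop, zeroTop] <;> split_ifs with h
  · rw [h, h1]
  · rfl
  · rw [h, h2]
  · rfl

lemma rest_zero {n : ℕ} (b : Bool) {σ : HKSt} (h1 : σ.1 (n+1) = false) (h2 : σ.2 n = false) :
    zeroTop n (restTop n b σ) = σ := by
  refine Prod.ext ?_ ?_ <;> funext i <;> simp only [restTop, zeroTop] <;> split_ifs with h
  · rw [h, h1]
  · rfl
  · rw [h, h2]
  · rfl

def eB (n : ℕ) : Bt (n+1) ≃ NFt n ⊕ Bt n × Bool where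
  toFun σ := if h : σ.1.1 n = true then
      Sum.inr (⟨zeroTop n σ.1, eB_aux2 σ.2.1 h⟩, σ.1.2 n)
    else Sum.inl ⟨zeroTop n σ.1, eB_aux1 σ.2.1 (by simpa using h)⟩
  invFun s := match s with
    | Sum.inl σ => ⟨restTop n false σ.1, eB_aux3 σ.2⟩
    | Sum.inr (σ, b) => ⟨restTop n b σ.1, eB_aux4 σ.2 b⟩
  left_inv σ := by
    by_cases h : σ.1.1 n = true
    · simp only [dif_pos h]
      exact Subtype.ext (zero_rest _ σ.2.2 rfl)
    · simp only [dif_neg h]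
      refine Subtype.ext (zero_rest _ σ.2.2 ?_)
      rcases Bool.eq_false_or_eq_true (σ.1.2 n) with hb | hb
      · exact absurd (σ.2.1.2 n hb).1 h
      · exact hb
  right_inv s := by
    match s with
    | Sum.inl σ =>
        have h : (restTop n false σ.1).1 n ≠ true := by
          simp only [restTop]
          rw [if_neg (by omega)]
          intro hc
          have := σ.2.1 n hc
          omega
        simp only [dif_neg h]
        refine congrArg Sum.inl (Subtype.ext ?_)
        refine rest_zero _ ?_ ?_
        · rcases Bool.eq_false_or_eq_true (σ.1.1 (n+1)) with hb | hb
          · exact absurd (σ.2.1 (n+1) hb) (by omega)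
          · exact hb
        · rcases Bool.eq_false_or_eq_true (σ.1.2 n) with hb | hb
          · exact absurd (σ.2.1 (n+1) (σ.2.2 n hb).2) (by omega)
          · exact hb
    | Sum.inr (σ, b) =>
        have h : (restTop n b σ.1).1 n = true := by
          simp only [restTop]
          rw [if_neg (by omega)]
          exact σ.2.2
        simp only [dif_pos h]
        refine congrArg Sum.inr (Prod.ext (Subtype.ext ?_) ?_)
        · refine rest_zero _ ?_ ?_
          · rcases Bool.eq_false_or_eq_true (σ.1.1 (n+1)) with hb | hb
            · exact absurd (σ.2.1.1 (n+1) hb) (by omega)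
            · exact hb
          · rcases Bool.eq_false_or_eq_true (σ.1.2 n) with hb | hb
            · exact absurd (σ.2.1.1 (n+1) (σ.2.1.2 n hb).2) (by omega)
            · exact hb
        · show (restTop n b σ.1).2 n = b
          simp [restTop]

lemma finite_both : ∀ n : ℕ, Finite (NFt n) ∧ Finite (Bt n) := by
  intro n
  induction n with
  | zero => exact ⟨Finite.of_equiv _ eNF0.symm, Finite.of_equiv _ eB0.symm⟩
  | succ n ih =>
      have h1 : Finite (NFt n) := ih.1
      have h2 : Finite (Bt n) := ih.2
      exact ⟨Finite.of_equiv _ (eA n).symm, Finite.of_equiv _ (eB n).symm⟩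

lemma card_rec (n : ℕ) :
    Nat.card (NFt (n+1)) = Nat.card (NFt n) + Nat.card (Bt n) ∧
    Nat.card (Bt (n+1)) = Nat.card (NFt n) + Nat.card (Bt n) * 2 := by
  have h1 : Finite (NFt n) := (finite_both n).1
  have h2 : Finite (Bt n) := (finite_both n).2
  constructor
  · rw [Nat.card_congr (eA n), Nat.card_sum]
  · rw [Nat.card_congr (eB n), Nat.card_sum, Nat.card_prod]
    simp [Nat.card_eq_fintype_card]

lemma card_fib : ∀ n : ℕ, Nat.card (NFt n) = Nat.fib (2*n+1) ∧
    Nat.card (Bt n) = Nat.fib (2*n+2) := by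
  intro n
  induction n with
  | zero =>
      constructor
      · rw [Nat.card_congr eNF0]; simp
      · rw [Nat.card_congr eB0]; simp
  | succ n ih =>
      obtain ⟨ha, hb⟩ := ih
      obtain ⟨hA, hB⟩ := card_rec n
      constructor
      · rw [hA, ha, hb, show 2*(n+1)+1 = (2*n+1) + 2 by ring,
          Nat.fib_add_two (n := 2*n+1), show 2*n+1+1 = 2*n+2 by ring]
      · rw [hB, ha, hb, show 2*(n+1)+2 = (2*n+2) + 2 by ring,
          Nat.fib_add_two (n := 2*n+2), show 2*n+2+1 = (2*n+1)+2 by ring,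
          Nat.fib_add_two (n := 2*n+1), show 2*n+1+1 = 2*n+2 by ring]
        omega

/-- The Hecke-Kiselman monoid of the alternating orientation of the path on `n` vertices
has cardinality the odd Fibonacci number `F_{2n+1}` (with `F₁ = F₂ = 1`). -/
theorem hk_alternating_card_fib (n : ℕ) :
    Nat.card (HK (altE n)) = Nat.fib (2 * n + 1) := by
  rw [card_HK_eq_card_NF n, (card_fib n).1]
end
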